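/- arXiv:0705.2220 — 6 statements merged into one kernel-verified Lean document; each statement's English description precedes it below -/
import Mathlib

section
/- Let X be a Polish space with a complete metric d and let μ be a Borel probability measure on X. Then there exists a G_δ subset X^♯ ⊆ X with μ(X^♯) = 1 whose subspace topology is fractured, i.e. has a countable base consisting of subsets that are clopen in X^♯. Moreover, if T is a measure-preserving homeomorphism of (X, μ), then X' = ⋂_{n ∈ ℤ} T^n X^♯ is a T-invariant G_δ subset of X of full measure whose subspace topology is fractured. -/
open MeasureTheory Set TopologicalSpace

/-- A topological space is *fractured* if its topology has a countable base
consisting of clopen subsets. -/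
def Fractured (X : Type*) [TopologicalSpace X] : Prop :=
  ∃ B : Set (Set X), B.Countable ∧ (∀ s ∈ B, IsClopen s) ∧ IsTopologicalBasis B

theorem IsGδ.preimage' {X Y : Type*} [TopologicalSpace X] [TopologicalSpace Y]
    {s : Set Y} (hs : IsGδ s) {f : X → Y} (hf : Continuous f) : IsGδ (f ⁻¹' s) := by
  obtain ⟨T, hT, hTc, rfl⟩ := hs
  have := hTc.to_subtype
  rw [sInter_eq_iInter]
  rw [preimage_iInter]
  exact .iInter_of_isOpen fun t => (hT t t.2).preimage hf

theorem Fractured.of_inducing {Y Z : Type*} [TopologicalSpace Y] [TopologicalSpace Z]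
    {f : Y → Z} (hf : Topology.IsInducing f) (h : Fractured Z) : Fractured Y := by
  obtain ⟨B, hc, hclopen, hbasis⟩ := h
  refine ⟨(f ⁻¹' ·) '' B, hc.image _, ?_, hbasis.isInducing hf⟩
  rintro s ⟨t, ht, rfl⟩
  exact (hclopen t ht).preimage hf.continuous

theorem exists_fractured_Gdelta_aux {X : Type*} [MetricSpace X] [CompleteSpace X]
    [SecondCountableTopology X] [MeasurableSpace X] [BorelSpace X]
    (μ : Measure X) [IsProbabilityMeasure μ] :
    ∃ Xs : Set X, IsGδ Xs ∧ μ Xs = 1 ∧ Fractured Xs := by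
  have hXne : Nonempty X := by
    by_contra h
    rw [not_nonempty_iff] at h
    have h1 : μ univ = 1 := measure_univ
    rw [Set.univ_eq_empty_iff.2 h, measure_empty] at h1
    exact zero_ne_one h1
  set u : ℕ → X := denseSeq X with hu
  set Bad : Set ℝ := {r | ∃ n, μ (Metric.sphere (u n) r) ≠ 0} with hBadDef
  have hBad : Bad.Countable := by
    have : Bad ⊆ ⋃ n, {r : ℝ | 0 < μ (Metric.sphere (u n) r)} := by
      rintro r ⟨n, hn⟩
      exact mem_iUnion.2 ⟨n, pos_iff_ne_zero.2 hn⟩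
    refine (Set.countable_iUnion fun n => ?_).mono this
    refine Measure.countable_meas_pos_of_disjoint_iUnion
      (As := fun r : ℝ => Metric.sphere (u n) r)
      (fun r => Metric.isClosed_sphere.measurableSet) ?_
    intro r r' hrr'
    simp only [Function.onFun, Set.disjoint_left]
    intro x hx hx'
    exact hrr' (hx ▸ hx')
  have hD : Dense Badᶜ := hBad.dense_compl ℝ
  obtain ⟨t, htc, htd⟩ := TopologicalSpace.exists_countable_dense ↥(Badᶜ)
  set R : Set ℝ := Subtype.val '' t with hRdef
  have hRc : R.Countable := htc.image _
  have hRd : Dense R := hD.denseRange_val.dense_image continuous_subtype_val htd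
  have hRsub : R ⊆ Badᶜ := by rintro r ⟨x, _, rfl⟩; exact x.2
  have hRnull : ∀ r ∈ R, ∀ n, μ (Metric.sphere (u n) r) = 0 := by
    intro r hr n
    by_contra h
    exact hRsub hr ⟨n, h⟩
  have hRex : ∀ a b : ℝ, a < b → ∃ r ∈ R, a < r ∧ r < b := by
    intro a b hab
    obtain ⟨r, hrR, hr⟩ := hRd.exists_mem_open isOpen_Ioo (Set.nonempty_Ioo.2 hab)
    exact ⟨r, hrR, hr.1, hr.2⟩
  haveI := hRc.to_subtype
  refine ⟨⋂ p : ℕ × ↥R, (Metric.sphere (u p.1) ↑p.2)ᶜ, ?_, ?_, ?_⟩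
  · exact .iInter_of_isOpen fun p => Metric.isClosed_sphere.isOpen_compl
  · rw [← prob_compl_eq_zero_iff
      (IsGδ.iInter_of_isOpen fun p => Metric.isClosed_sphere.isOpen_compl).measurableSet]
    rw [compl_iInter]
    simp only [compl_compl]
    exact measure_iUnion_null fun p => hRnull _ p.2.2 p.1
  · set Xs : Set X := ⋂ p : ℕ × ↥R, (Metric.sphere (u p.1) ↑p.2)ᶜ with hXsDef
    have hmem : ∀ (y : ↥Xs) (p : ℕ × ↥R), dist (y : X) (u p.1) ≠ ↑p.2 := by
      intro y p h
      have := (mem_iInter.1 y.2) p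
      exact this h
    set f : ℕ × ↥R → Set ↥Xs := fun p => Subtype.val ⁻¹' Metric.ball (u p.1) ↑p.2 with hfdef
    have hopen : ∀ p, IsOpen (f p) := fun p => Metric.isOpen_ball.preimage continuous_subtype_val
    refine ⟨Set.range f, countable_range f, ?_, ?_⟩
    · rintro s ⟨p, rfl⟩
      refine ⟨?_, hopen p⟩
      have : f p = Subtype.val ⁻¹' Metric.closedBall (u p.1) ↑p.2 := by
        ext y
        simp only [hfdef, mem_preimage, Metric.mem_ball, Metric.mem_closedBall]
        exact ⟨le_of_lt, fun h => lt_of_le_of_ne h (hmem y p)⟩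
      rw [this]
      exact Metric.isClosed_closedBall.preimage continuous_subtype_val
    · refine isTopologicalBasis_of_isOpen_of_nhds (by rintro s ⟨p, rfl⟩; exact hopen p) ?_
      intro y U hyU hU
      obtain ⟨V, hVopen, rfl⟩ := isOpen_induced_iff.1 hU
      obtain ⟨ε, hε, hball⟩ := Metric.isOpen_iff.1 hVopen _ hyU
      obtain ⟨n, hn⟩ := Metric.denseRange_iff.1 (denseRange_denseSeq X) (y : X) (ε/3) (by linarith)
      obtain ⟨r, hrR, hr1, hr2⟩ := hRex (dist (y : X) (u n)) (ε/2) (by linarith)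
      refine ⟨f (n, ⟨r, hrR⟩), ⟨(n, ⟨r, hrR⟩), rfl⟩, ?_, ?_⟩
      · exact Metric.mem_ball.2 hr1
      · intro z hz
        simp only [hfdef, mem_preimage, Metric.mem_ball] at hz
        refine mem_preimage.2 (hball ?_)
        have : dist (z : X) (y : X) ≤ dist (z : X) (u n) + dist (u n) (y : X) := dist_triangle _ _ _
        rw [dist_comm (u n) (y : X)] at this
        exact Metric.mem_ball.2 (by linarith)

theorem fractured_invariant_aux {X : Type*} [MetricSpace X] [CompleteSpace X]
    [SecondCountableTopology X] [MeasurableSpace X] [BorelSpace X]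
    (μ : Measure X) [IsProbabilityMeasure μ]
    (T : X ≃ₜ X) (hT : MeasurePreserving T μ μ)
    (Xs : Set X) (hG : IsGδ Xs) (h1 : μ Xs = 1) (hF : Fractured Xs) :
    IsGδ (⋂ n : ℤ, (T.toEquiv ^ n) '' Xs) ∧
    μ (⋂ n : ℤ, (T.toEquiv ^ n) '' Xs) = 1 ∧
    (T : X → X) '' (⋂ n : ℤ, (T.toEquiv ^ n) '' Xs) = ⋂ n : ℤ, (T.toEquiv ^ n) '' Xs ∧
    Fractured (⋂ n : ℤ, (T.toEquiv ^ n) '' Xs) := by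
  have hTsymm : MeasurePreserving (⇑T.symm) μ μ :=
    MeasurePreserving.symm T.toMeasurableEquiv hT
  have key : ∀ n : ℤ, ∃ S : X ≃ₜ X, S.toEquiv = T.toEquiv ^ n ∧
      MeasurePreserving S μ μ ∧ MeasurePreserving S.symm μ μ := by
    intro n
    induction n using Int.induction_on with
    | zero => exact ⟨Homeomorph.refl X, by rw [zpow_zero]; rfl, .id μ, .id μ⟩
    | succ n ih =>
      obtain ⟨S, hS, hSm, hSsm⟩ := ih
      refine ⟨T.trans S, ?_, hSm.comp hT, hTsymm.comp hSsm⟩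
      rw [zpow_add_one, ← hS]
      rfl
    | pred n ih =>
      obtain ⟨S, hS, hSm, hSsm⟩ := ih
      refine ⟨T.symm.trans S, ?_, hSm.comp hTsymm, hT.comp hSsm⟩
      rw [sub_eq_add_neg, zpow_add, zpow_neg_one, ← hS]
      rfl
  choose S hS hSm hSsm using key
  have hA : ∀ n : ℤ, (T.toEquiv ^ n) '' Xs = ⇑(S n).symm ⁻¹' Xs := by
    intro n
    rw [← hS n]
    exact Equiv.image_eq_preimage_symm _ _
  have hGn : ∀ n : ℤ, IsGδ ((T.toEquiv ^ n) '' Xs) := by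
    intro n
    rw [hA n]
    exact hG.preimage' (S n).symm.continuous
  have hμn : ∀ n : ℤ, μ ((T.toEquiv ^ n) '' Xs) = 1 := by
    intro n
    rw [hA n]
    exact ((hSsm n).measure_preimage hG.measurableSet.nullMeasurableSet).trans h1
  refine ⟨.iInter hGn, ?_, ?_, ?_⟩
  · rw [← prob_compl_eq_zero_iff (IsGδ.iInter hGn).measurableSet, compl_iInter]
    exact measure_iUnion_null fun n => (prob_compl_eq_zero_iff (hGn n).measurableSet).2 (hμn n)
  · rw [image_iInter T.bijective]
    have himg : ∀ n : ℤ, (T : X → X) '' ((T.toEquiv ^ n) '' Xs) = (T.toEquiv ^ (n + 1)) '' Xs := by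
      intro n
      rw [← image_comp, add_comm, zpow_add, zpow_one]
      rfl
    simp_rw [himg]
    exact Function.Surjective.iInter_comp (f := fun n : ℤ => n + 1)
      (fun m => ⟨m - 1, by ring⟩) (fun n => ⇑(T.toEquiv ^ n) '' Xs)
  · have hsub : (⋂ n : ℤ, (T.toEquiv ^ n) '' Xs) ⊆ Xs := by
      have h0 := iInter_subset (fun n : ℤ => (T.toEquiv ^ n) '' Xs) 0
      simpa using h0
    exact Fractured.of_inducing (Topology.IsEmbedding.inclusion hsub).toIsInducing hF

/-- Every Polish space with a Borel probability measure contains a `Gδ` subset `X^♯` of full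
measure which is fractured in its subspace topology; moreover for any measure-preserving
homeomorphism `T` the set `X' = ⋂_{n ∈ ℤ} Tⁿ X^♯` is a `T`-invariant `Gδ` subset of full
measure which is fractured in its subspace topology. -/
theorem exists_fractured_full_measure_Gdelta
    {X : Type*} [MetricSpace X] [CompleteSpace X] [SecondCountableTopology X]
    [MeasurableSpace X] [BorelSpace X]
    (μ : Measure X) [IsProbabilityMeasure μ] :
    (∃ Xs : Set X, IsGδ Xs ∧ μ Xs = 1 ∧ Fractured Xs) ∧
    (∀ T : X ≃ₜ X, MeasurePreserving T μ μ →
      ∀ Xs : Set X, IsGδ Xs → μ Xs = 1 → Fractured Xs →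
        IsGδ (⋂ n : ℤ, (T.toEquiv ^ n) '' Xs) ∧
        μ (⋂ n : ℤ, (T.toEquiv ^ n) '' Xs) = 1 ∧
        (T : X → X) '' (⋂ n : ℤ, (T.toEquiv ^ n) '' Xs) = ⋂ n : ℤ, (T.toEquiv ^ n) '' Xs ∧
        Fractured (⋂ n : ℤ, (T.toEquiv ^ n) '' Xs)) := by
  exact ⟨exists_fractured_Gdelta_aux μ,
    fun T hT Xs hG h1 hF => fractured_invariant_aux μ T hT Xs hG h1 hF⟩
end

section
/- Let X be a fractured Polish space, μ a non-atomic Borel probability measure on X with full support, and T an ergodic measure-preserving homeomorphism of (X, μ). Suppose A and B are open subsets of X with μ(A) = μ(B). Then there exist pairwise disjoint clopen sets A_1, A_2, … ⊆ A which fill out A (i.e. μ(⋃_i A_i) = μ(A)) and integers n_1, n_2, … such that the sets B_i := T^{n_i} A_i are pairwise disjoint, contained in B, and fill out B. -/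
open MeasureTheory Set TopologicalSpace

section Helpers

variable {X : Type*} [TopologicalSpace X] [MeasurableSpace X] [BorelSpace X] {μ : Measure X}

lemma mp_symm' (T : X ≃ₜ X) (hT : MeasurePreserving T μ μ) :
    MeasurePreserving ⇑T.symm μ μ :=
  (MeasurePreserving.symm T.toMeasurableEquiv hT : _)

lemma mp_zpow (T : X ≃ₜ X) (hT : MeasurePreserving T μ μ) (m : ℤ) :
    MeasurePreserving ⇑(T.toEquiv ^ m) μ μ ∧ Continuous ⇑(T.toEquiv ^ m) := by
  induction m using Int.induction_on with
  | zero => simpa using ⟨MeasurePreserving.id μ, continuous_id⟩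
  | succ i ih =>
      rw [zpow_add_one, Equiv.Perm.coe_mul]
      exact ⟨ih.1.comp hT, ih.2.comp T.continuous⟩
  | pred i ih =>
      rw [zpow_sub_one, Equiv.Perm.coe_mul]
      exact ⟨ih.1.comp (mp_symm' T hT), ih.2.comp T.symm.continuous⟩

omit [MeasurableSpace X] [BorelSpace X] in
lemma symm_zpow (T : X ≃ₜ X) (m : ℤ) : (T.toEquiv ^ m).symm = T.toEquiv ^ (-m) := by
  rw [zpow_neg, ← Equiv.Perm.inv_def]

end Helpers

section Aux
variable {X : Type*} (C : ℕ → Set X) (n : ℕ → ℤ) (σ : ℤ → Equiv.Perm X)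

def exD : ℕ → Set X × Set X
  | 0 => (∅, ∅)
  | k+1 =>
      let p := exD k
      (p.1 ∪ ((C k \ p.1) \ σ (n k) ⁻¹' p.2),
       p.2 ∪ σ (n k) '' ((C k \ p.1) \ σ (n k) ⁻¹' p.2))

def exAs (k : ℕ) : Set X :=
  (C k \ (exD C n σ k).1) \ σ (n k) ⁻¹' (exD C n σ k).2

lemma exD_succ1 (k : ℕ) :
    (exD C n σ (k+1)).1 = (exD C n σ k).1 ∪ exAs C n σ k := rfl

lemma exD_succ2 (k : ℕ) :
    (exD C n σ (k+1)).2 = (exD C n σ k).2 ∪ σ (n k) '' exAs C n σ k := rfl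

lemma exD1_subset (k : ℕ) : (exD C n σ k).1 ⊆ ⋃ j, exAs C n σ j := by
  induction k with
  | zero => simp [exD]
  | succ k ih =>
      rw [exD_succ1]
      exact union_subset ih (subset_iUnion (fun j => exAs C n σ j) k)

lemma exD2_subset (k : ℕ) : (exD C n σ k).2 ⊆ ⋃ j, σ (n j) '' exAs C n σ j := by
  induction k with
  | zero => simp [exD]
  | succ k ih =>
      rw [exD_succ2]
      exact union_subset ih (subset_iUnion (fun j => σ (n j) '' exAs C n σ j) k)

lemma exD1_mono {j k : ℕ} (h : j ≤ k) : (exD C n σ j).1 ⊆ (exD C n σ k).1 := by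
  induction h with
  | refl => exact subset_rfl
  | step h ih => exact ih.trans (by rw [exD_succ1]; exact subset_union_left)

lemma exD2_mono {j k : ℕ} (h : j ≤ k) : (exD C n σ j).2 ⊆ (exD C n σ k).2 := by
  induction h with
  | refl => exact subset_rfl
  | step h ih => exact ih.trans (by rw [exD_succ2]; exact subset_union_left)

lemma exAs_disj {j k : ℕ} (h : j < k) : Disjoint (exAs C n σ j) (exAs C n σ k) := by
  rw [Set.disjoint_left]
  intro x hxj hxk
  have h1 : x ∈ (exD C n σ k).1 := by
    apply exD1_mono C n σ h
    rw [exD_succ1]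
    exact Or.inr hxj
  exact hxk.1.2 h1

lemma exBs_disj {j k : ℕ} (h : j < k) :
    Disjoint (σ (n j) '' exAs C n σ j) (σ (n k) '' exAs C n σ k) := by
  rw [Set.disjoint_left]
  intro y hyj hyk
  obtain ⟨x, hx, rfl⟩ := hyk
  have h2 : (σ (n k)) x ∈ (exD C n σ k).2 := by
    apply exD2_mono C n σ h
    rw [exD_succ2]
    exact Or.inr hyj
  exact hx.2 h2

lemma exAs_key {x : X} {k : ℕ} (hxC : x ∈ C k)
    (hxA : x ∉ ⋃ j, exAs C n σ j)
    (hxB : σ (n k) x ∉ ⋃ j, σ (n j) '' exAs C n σ j) : False := by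
  have : x ∈ exAs C n σ k := by
    refine ⟨⟨hxC, fun h => hxA (exD1_subset C n σ k h)⟩,
      fun h => hxB (exD2_subset C n σ k h)⟩
  exact hxA (mem_iUnion.mpr ⟨k, this⟩)

lemma exAs_clopen [TopologicalSpace X]
    (hC : ∀ k, IsClopen (C k))
    (hcont : ∀ m, Continuous ⇑(σ m)) (hcont' : ∀ m, Continuous ⇑(σ m).symm) (k : ℕ) :
    IsClopen (exAs C n σ k) := by
  have hD : ∀ k, IsClopen (exD C n σ k).1 ∧ IsClopen (exD C n σ k).2 := by
    intro k
    induction k with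
    | zero => exact ⟨isClopen_empty, isClopen_empty⟩
    | succ k ih =>
        have hAs : IsClopen (exAs C n σ k) :=
          ((hC k).diff ih.1).diff (ih.2.preimage (hcont (n k)))
        constructor
        · rw [exD_succ1]; exact ih.1.union hAs
        · rw [exD_succ2, Equiv.image_eq_preimage_symm]
          exact ih.2.union (hAs.preimage (hcont' (n k)))
  exact ((hC k).diff (hD k).1).diff ((hD k).2.preimage (hcont (n k)))

end Aux

/-- **Lemma 1 of del Junco–Şahin.** If `A` and `B` are open sets of equal measure in a
fractured Polish space carrying a non-atomic fully supported probability measure invariant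
and ergodic under a homeomorphism `T`, then there are disjoint clopen sets `Aᵢ ⊆ A` filling
out `A` and integers `nᵢ` so that the sets `Bᵢ = T^{nᵢ} Aᵢ` are disjoint, contained in `B`,
and fill out `B`. -/
theorem exchange_open_sets_of_equal_measure
    {X : Type*} [TopologicalSpace X] [PolishSpace X] [MeasurableSpace X] [BorelSpace X]
    (hXf : Fractured X)
    (μ : Measure X) [IsProbabilityMeasure μ] [NullSingletonClass μ]
    (hfull : ∀ U : Set X, IsOpen U → U.Nonempty → μ U ≠ 0)
    (T : X ≃ₜ X) (hT : MeasurePreserving T μ μ)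
    (hTerg : ∀ A : Set X, MeasurableSet A → T ⁻¹' A = A → μ A = 0 ∨ μ Aᶜ = 0)
    (A B : Set X) (hA : IsOpen A) (hB : IsOpen B) (hAB : μ A = μ B) :
    ∃ (As : ℕ → Set X) (n : ℕ → ℤ),
      (∀ i, IsClopen (As i)) ∧
      (∀ i, As i ⊆ A) ∧
      Pairwise (Function.onFun Disjoint As) ∧
      μ (⋃ i, As i) = μ A ∧
      Pairwise (Function.onFun Disjoint (fun i => (T.toEquiv ^ n i) '' As i)) ∧
      (∀ i, (T.toEquiv ^ n i) '' As i ⊆ B) ∧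
      μ (⋃ i, (T.toEquiv ^ n i) '' As i) = μ B := by
  classical
  obtain ⟨𝔅, h𝔅c, h𝔅clopen, h𝔅basis⟩ := hXf
  have hXne : Nonempty X := by
    by_contra h
    rw [not_nonempty_iff] at h
    have h1 : μ univ = 1 := measure_univ
    rw [Set.univ_eq_empty_iff.mpr h, measure_empty] at h1
    exact zero_ne_one h1
  obtain ⟨x0⟩ := hXne
  have h𝔅ne : 𝔅.Nonempty := by
    have hx : x0 ∈ ⋃₀ 𝔅 := by rw [h𝔅basis.sUnion_eq]; trivial
    exact ⟨hx.choose, hx.choose_spec.1⟩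
  obtain ⟨e, he⟩ := Set.Countable.exists_eq_range h𝔅c h𝔅ne
  have heclopen : ∀ i, IsClopen (e i) := fun i => h𝔅clopen _ (he ▸ mem_range_self i)
  obtain ⟨f, hfsurj⟩ : ∃ f : ℕ → ℕ × ℕ × ℤ, Function.Surjective f :=
    ⟨⇑(Denumerable.eqv (ℕ × ℕ × ℤ)).symm, (Denumerable.eqv (ℕ × ℕ × ℤ)).symm.surjective⟩
  set n : ℕ → ℤ := fun k => (f k).2.2 with hn
  set σ : ℤ → Equiv.Perm X := fun m => T.toEquiv ^ m with hσ
  set C : ℕ → Set X := fun k =>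
    if e (f k).1 ⊆ A ∧ e (f k).2.1 ⊆ B then e (f k).1 ∩ σ (n k) ⁻¹' e (f k).2.1 else ∅
    with hC
  have hmp : ∀ m, MeasurePreserving ⇑(σ m) μ μ := fun m => (mp_zpow T hT m).1
  have hcont : ∀ m, Continuous ⇑(σ m) := fun m => (mp_zpow T hT m).2
  have hsymm : ∀ m, (σ m).symm = σ (-m) := fun m => symm_zpow T m
  have hcont' : ∀ m, Continuous ⇑(σ m).symm := by
    intro m; rw [hsymm m]; exact hcont (-m)
  have hCclopen : ∀ k, IsClopen (C k) := by
    intro k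
    simp only [hC]
    split_ifs with h
    · exact (heclopen _).inter ((heclopen _).preimage (hcont _))
    · exact isClopen_empty
  have hCA : ∀ k, C k ⊆ A := by
    intro k; simp only [hC]; split_ifs with h
    · exact inter_subset_left.trans h.1
    · exact empty_subset _
  have hCB : ∀ k, σ (n k) '' C k ⊆ B := by
    intro k; simp only [hC]; split_ifs with h
    · rintro y ⟨x, hx, rfl⟩
      exact h.2 hx.2
    · simp
  set As : ℕ → Set X := exAs C n σ with hAsdef
  have hAsClopen : ∀ k, IsClopen (As k) := fun k => exAs_clopen C n σ hCclopen hcont hcont' k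
  have hAsC : ∀ k, As k ⊆ C k := fun k x hx => hx.1.1
  have hAsA : ∀ k, As k ⊆ A := fun k => (hAsC k).trans (hCA k)
  have hBsB : ∀ k, σ (n k) '' As k ⊆ B := fun k =>
    (Set.image_mono (hAsC k)).trans (hCB k)
  have hAsdisj : Pairwise (Function.onFun Disjoint As) := by
    intro i j hij
    rcases hij.lt_or_gt with h | h
    · exact exAs_disj C n σ h
    · exact (exAs_disj C n σ h).symm
  have hBsdisj : Pairwise (Function.onFun Disjoint (fun i => σ (n i) '' As i)) := by
    intro i j hij
    rcases hij.lt_or_gt with h | h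
    · exact exBs_disj C n σ h
    · exact (exBs_disj C n σ h).symm
  have hAsm : ∀ k, MeasurableSet (As k) := fun k => (hAsClopen k).isOpen.measurableSet
  have hBsm : ∀ k, MeasurableSet (σ (n k) '' As k) := by
    intro k
    rw [Equiv.image_eq_preimage_symm, hsymm]
    exact (hmp _).measurable (hAsm k)
  have hμBs : ∀ k, μ (σ (n k) '' As k) = μ (As k) := by
    intro k
    rw [Equiv.image_eq_preimage_symm, hsymm]
    exact (hmp _).measure_preimage (hAsm k).nullMeasurableSet
  set SA := ⋃ k, As k with hSAdef
  set SB := ⋃ k, σ (n k) '' As k with hSBdef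
  have hSAm : MeasurableSet SA := MeasurableSet.iUnion hAsm
  have hSBm : MeasurableSet SB := MeasurableSet.iUnion hBsm
  have hSASB : μ SA = μ SB := by
    rw [hSAdef, hSBdef, measure_iUnion hAsdisj hAsm, measure_iUnion hBsdisj hBsm]
    exact tsum_congr fun k => (hμBs k).symm
  have hSAA : SA ⊆ A := iUnion_subset hAsA
  have hSBB : SB ⊆ B := iUnion_subset hBsB
  have hRA : μ (A \ SA) = μ A - μ SA :=
    measure_diff hSAA hSAm.nullMeasurableSet (measure_lt_top μ SA).ne
  have hRB : μ (B \ SB) = μ B - μ SB :=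
    measure_diff hSBB hSBm.nullMeasurableSet (measure_lt_top μ SB).ne
  have hRARB : μ (A \ SA) = μ (B \ SB) := by rw [hRA, hRB, hAB, hSASB]
  -- the key exhaustion claim
  have hmain : μ (A \ SA) = 0 := by
    by_contra h0
    have h0' : μ (B \ SB) ≠ 0 := by rw [← hRARB]; exact h0
    -- find a basis set meeting the residual of A
    have hiA : ∃ i, e i ⊆ A ∧ μ (e i ∩ (A \ SA)) ≠ 0 := by
      by_contra hno
      push_neg at hno
      have hcover : A \ SA ⊆ ⋃ i, (if e i ⊆ A then e i ∩ (A \ SA) else ∅) := by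
        intro x hx
        obtain ⟨b, hb, hxb, hbA⟩ := h𝔅basis.exists_subset_of_mem_open hx.1 hA
        rw [he] at hb
        obtain ⟨i, rfl⟩ := hb
        exact mem_iUnion.mpr ⟨i, by rw [if_pos hbA]; exact ⟨hxb, hx⟩⟩
      have hle := (measure_mono hcover).trans (measure_iUnion_le (μ := μ) _)
      have hz : ∀ i, μ (if e i ⊆ A then e i ∩ (A \ SA) else ∅) = 0 := by
        intro i
        split_ifs with hi
        · exact hno i hi
        · exact measure_empty
      rw [ENNReal.tsum_eq_zero.mpr hz] at hle
      exact h0 (nonpos_iff_eq_zero.mp hle)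
    have hjB : ∃ j, e j ⊆ B ∧ μ (e j ∩ (B \ SB)) ≠ 0 := by
      by_contra hno
      push_neg at hno
      have hcover : B \ SB ⊆ ⋃ i, (if e i ⊆ B then e i ∩ (B \ SB) else ∅) := by
        intro x hx
        obtain ⟨b, hb, hxb, hbB⟩ := h𝔅basis.exists_subset_of_mem_open hx.1 hB
        rw [he] at hb
        obtain ⟨i, rfl⟩ := hb
        exact mem_iUnion.mpr ⟨i, by rw [if_pos hbB]; exact ⟨hxb, hx⟩⟩
      have hle := (measure_mono hcover).trans (measure_iUnion_le (μ := μ) _)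
      have hz : ∀ i, μ (if e i ⊆ B then e i ∩ (B \ SB) else ∅) = 0 := by
        intro i
        split_ifs with hi
        · exact hno i hi
        · exact measure_empty
      rw [ENNReal.tsum_eq_zero.mpr hz] at hle
      exact h0' (nonpos_iff_eq_zero.mp hle)
    obtain ⟨i, hiA1, hiA2⟩ := hiA
    obtain ⟨j, hjB1, hjB2⟩ := hjB
    set S := e j ∩ (B \ SB) with hSdef
    have hSmeas : MeasurableSet S :=
      ((heclopen j).isOpen.measurableSet).inter (hB.measurableSet.diff hSBm)
    set W := ⋃ m : ℤ, σ m ⁻¹' S with hWdef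
    have hWm : MeasurableSet W := MeasurableSet.iUnion fun m => (hmp m).measurable hSmeas
    have hshift : ∀ (m : ℤ) (x : X), σ m (T x) = σ (m + 1) x := by
      intro m x
      simp only [hσ]
      rw [zpow_add_one]
      rfl
    have hWinv : T ⁻¹' W = W := by
      ext x
      simp only [hWdef, mem_preimage, mem_iUnion]
      constructor
      · rintro ⟨m, hm⟩
        exact ⟨m + 1, by rw [← hshift m x]; exact hm⟩
      · rintro ⟨m, hm⟩
        refine ⟨m - 1, ?_⟩
        rw [hshift (m - 1) x, sub_add_cancel]
        exact hm
    have hWfull : μ Wᶜ = 0 := by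
      rcases hTerg W hWm hWinv with h | h
      · exfalso
        have hsub : S ⊆ W := by
          intro x hx
          refine mem_iUnion.mpr ⟨0, ?_⟩
          simpa [hσ] using hx
        have := (measure_mono hsub).trans_eq h
        exact hjB2 (nonpos_iff_eq_zero.mp this)
      · exact h
    have hpos : μ ((e i ∩ (A \ SA)) ∩ W) ≠ 0 := by
      intro hzz
      have h1 : μ (e i ∩ (A \ SA)) ≤
          μ ((e i ∩ (A \ SA)) ∩ W) + μ ((e i ∩ (A \ SA)) \ W) :=
        measure_le_inter_add_diff μ _ _
      have h2 : μ ((e i ∩ (A \ SA)) \ W) ≤ μ Wᶜ :=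
        measure_mono fun x hx => hx.2
      rw [hzz, hWfull] at *
      have : μ (e i ∩ (A \ SA)) ≤ 0 := h1.trans (by simpa using h2)
      exact hiA2 (nonpos_iff_eq_zero.mp this)
    have hUnion : (e i ∩ (A \ SA)) ∩ W = ⋃ m : ℤ, ((e i ∩ (A \ SA)) ∩ σ m ⁻¹' S) := by
      rw [hWdef, inter_iUnion]
    have hm' : ∃ m : ℤ, μ ((e i ∩ (A \ SA)) ∩ σ m ⁻¹' S) ≠ 0 := by
      by_contra hno
      push_neg at hno
      apply hpos
      rw [hUnion]
      exact nonpos_iff_eq_zero.mp ((measure_iUnion_le (μ := μ) _).trans_eq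
        (ENNReal.tsum_eq_zero.mpr hno))
    obtain ⟨m, hmne⟩ := hm'
    obtain ⟨x, hx⟩ := nonempty_of_measure_ne_zero hmne
    obtain ⟨k, hk⟩ := hfsurj (i, j, m)
    have hnk : n k = m := by simp [hn, hk]
    have hCk : C k = e i ∩ σ m ⁻¹' e j := by
      simp only [hC, hk, hnk]
      rw [if_pos ⟨hiA1, hjB1⟩]
    have hx1 : x ∈ e i := hx.1.1
    have hx2 : x ∈ A \ SA := hx.1.2
    have hx3 : σ m x ∈ S := hx.2
    refine exAs_key C n σ (x := x) (k := k) ?_ ?_ ?_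
    · rw [hCk]
      exact ⟨hx1, hx3.1⟩
    · exact hx2.2
    · rw [hnk]
      exact fun h => hx3.2.2 h
  have hmainB : μ (B \ SB) = 0 := by rw [← hRARB]; exact hmain
  have hμSA : μ SA = μ A := by
    refine le_antisymm (measure_mono hSAA) ?_
    calc μ A = μ (SA ∪ (A \ SA)) := by rw [union_diff_cancel hSAA]
    _ ≤ μ SA + μ (A \ SA) := measure_union_le _ _
    _ = μ SA := by rw [hmain, add_zero]
  have hμSB : μ SB = μ B := by
    refine le_antisymm (measure_mono hSBB) ?_
    calc μ B = μ (SB ∪ (B \ SB)) := by rw [union_diff_cancel hSBB]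
    _ ≤ μ SB + μ (B \ SB) := measure_union_le _ _
    _ = μ SB := by rw [hmainB, add_zero]
  refine ⟨As, n, hAsClopen, hAsA, hAsdisj, hμSA, ?_, ?_, ?_⟩
  · simpa only [hσ] using hBsdisj
  · simpa only [hσ] using hBsB
  · simpa only [hσ] using hμSB
end

section
/- Let X be a fractured Polish space, μ a non-atomic Borel probability measure on X with full support, and T an ergodic measure-preserving homeomorphism of (X, μ). If B is an open subset of X and r_1, r_2, … are non-negative reals with μ(B) = r_1 + r_2 + ⋯, then there exist pairwise disjoint open subsets B_1, B_2, … of B with μ(B_i) = r_i for every i. -/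
open MeasureTheory Set TopologicalSpace ENNReal

open MeasureTheory Set TopologicalSpace ENNReal

namespace JdS

variable {X : Type*} [TopologicalSpace X] [PolishSpace X] [MeasurableSpace X] [BorelSpace X]
variable (μ : Measure X) [IsFiniteMeasure μ] [NullSingletonClass μ]
variable {ℬ : Set (Set X)}

lemma small_clopen (hc : ℬ.Countable) (hcl : ∀ W ∈ ℬ, IsClopen W)
    (hb : IsTopologicalBasis ℬ) {G : Set X} (hG : IsOpen G) {x : X} (hx : x ∈ G)
    {ε : ℝ≥0∞} (hε : ε ≠ 0) :
    ∃ W ∈ ℬ, x ∈ W ∧ W ⊆ G ∧ μ W < ε := by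
  classical
  by_contra hcon
  push_neg at hcon
  set N : Set (Set X) := {W | W ∈ ℬ ∧ x ∈ W ∧ W ⊆ G} with hN
  have hNN : ∀ W ∈ N, ε ≤ μ W := by
    intro W hW
    exact hcon W hW.1 hW.2.1 hW.2.2
  have hNne : N.Nonempty := by
    obtain ⟨W, hW, hxW, hWG⟩ := hb.exists_subset_of_mem_open hx hG
    exact ⟨W, hW, hxW, hWG⟩
  obtain ⟨g, hg⟩ := Set.Countable.exists_eq_range (hc.mono fun W hW => hW.1) hNne
  have hgN : ∀ n, g n ∈ N := fun n => hg ▸ mem_range_self n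
  have hstep : ∀ U : Set X, IsOpen U → x ∈ U → ∃ W, (W ∈ ℬ ∧ x ∈ W) ∧ W ⊆ U := by
    intro U hU hxU
    obtain ⟨W, hW, hxW, hWU⟩ := hb.exists_subset_of_mem_open hxU hU
    exact ⟨W, ⟨hW, hxW⟩, hWU⟩
  choose! pick hpick1 hpick2 using hstep
  set M : ℕ → Set X := fun k => Nat.rec (g 0) (fun k Mk => pick (Mk ∩ g (k + 1))) k with hM
  have hMN : ∀ k, M k ∈ N := by
    intro k
    induction k with
    | zero => exact hgN 0
    | succ k ih =>
      have hopen : IsOpen (M k ∩ g (k + 1)) :=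
        ((hcl _ ih.1).isOpen).inter ((hcl _ (hgN (k + 1)).1).isOpen)
      have hxin : x ∈ M k ∩ g (k + 1) := ⟨ih.2.1, (hgN (k + 1)).2.1⟩
      have h1 := hpick1 _ hopen hxin
      have h2 := hpick2 _ hopen hxin
      exact ⟨h1.1, h1.2, h2.trans ((inter_subset_right).trans (hgN (k + 1)).2.2)⟩
  have hMsub : ∀ k, M (k + 1) ⊆ M k := by
    intro k
    have hopen : IsOpen (M k ∩ g (k + 1)) :=
      ((hcl _ (hMN k).1).isOpen).inter ((hcl _ (hgN (k + 1)).1).isOpen)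
    have hxin : x ∈ M k ∩ g (k + 1) := ⟨(hMN k).2.1, (hgN (k + 1)).2.1⟩
    exact (hpick2 _ hopen hxin).trans inter_subset_left
  have hMg : ∀ k, M k ⊆ g k := by
    intro k
    cases k with
    | zero => exact subset_rfl
    | succ k =>
      have hopen : IsOpen (M k ∩ g (k + 1)) :=
        ((hcl _ (hMN k).1).isOpen).inter ((hcl _ (hgN (k + 1)).1).isOpen)
      have hxin : x ∈ M k ∩ g (k + 1) := ⟨(hMN k).2.1, (hgN (k + 1)).2.1⟩
      exact (hpick2 _ hopen hxin).trans inter_subset_right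
  have hanti : Antitone M := antitone_nat_of_succ_le hMsub
  have hsingle : (⋂ k, M k) ⊆ {x} := by
    intro y hy
    simp only [mem_singleton_iff]
    by_contra hyx
    have hopen : IsOpen (G ∩ {y}ᶜ) := hG.inter isClosed_singleton.isOpen_compl
    have hxin : x ∈ G ∩ {y}ᶜ := ⟨hx, fun h => hyx (mem_singleton_iff.mp h).symm⟩
    obtain ⟨W, hW, hxW, hWU⟩ := hb.exists_subset_of_mem_open hxin hopen
    have hWN : W ∈ N := ⟨hW, hxW, hWU.trans inter_subset_left⟩
    rw [hg] at hWN
    obtain ⟨n, hn⟩ := hWN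
    have : y ∈ g n := hMg n (mem_iInter.mp hy n)
    rw [hn] at this
    exact (hWU this).2 rfl
  have hμ0 : μ (⋂ k, M k) = 0 :=
    le_antisymm ((measure_mono hsingle).trans (le_of_eq (measure_singleton x))) zero_le
  have htend : Filter.Tendsto (μ ∘ M) Filter.atTop (nhds (μ (⋂ k, M k))) :=
    tendsto_measure_iInter_atTop
      (fun k => ((hcl _ (hMN k).1).isClosed.measurableSet).nullMeasurableSet)
      hanti ⟨0, measure_ne_top μ _⟩
  have : ε ≤ μ (⋂ k, M k) :=
    ge_of_tendsto htend (Filter.Eventually.of_forall fun k => hNN _ (hMN k))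
  rw [hμ0] at this
  exact hε (le_antisymm this zero_le)

lemma approx_clopen (hc : ℬ.Countable) (hcl : ∀ W ∈ ℬ, IsClopen W)
    (hb : IsTopologicalBasis ℬ) {G : Set X} (hG : IsOpen G) {t ε : ℝ≥0∞}
    (ht : t ≤ μ G) (hε : ε ≠ 0) :
    ∃ W, IsClopen W ∧ W ⊆ G ∧ μ W ≤ t ∧ t ≤ μ W + ε := by
  classical
  set S : Set (Set X) := {W | W ∈ ℬ ∧ W ⊆ G ∧ μ W < ε} with hS
  have hScount : (insert (∅ : Set X) S).Countable := ((hc.mono fun W hW => hW.1).insert ∅)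
  obtain ⟨f, hf⟩ := hScount.exists_eq_range (insert_nonempty _ _)
  have hfS : ∀ n, f n = ∅ ∨ f n ∈ S := by
    intro n
    have : f n ∈ insert (∅ : Set X) S := hf ▸ mem_range_self n
    exact this
  have hfclo : ∀ n, IsClopen (f n) := by
    intro n
    rcases hfS n with h | h
    · rw [h]; exact isClopen_empty
    · exact hcl _ h.1
  have hfsub : ∀ n, f n ⊆ G := by
    intro n
    rcases hfS n with h | h
    · rw [h]; exact empty_subset _
    · exact h.2.1
  have hfsmall : ∀ n, μ (f n) < ε := by
    intro n
    rcases hfS n with h | h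
    · rw [h]; simpa [pos_iff_ne_zero] using hε
    · exact h.2.2
  have hGeq : G = ⋃ n, f n := by
    apply Subset.antisymm
    · intro x hx
      obtain ⟨W, hW1, hW2, hW3, hW4⟩ := small_clopen μ hc hcl hb hG hx hε
      have hWm : W ∈ insert (∅ : Set X) S := mem_insert_of_mem _ ⟨hW1, hW3, hW4⟩
      rw [hf] at hWm
      obtain ⟨n, hn⟩ := hWm
      exact mem_iUnion.mpr ⟨n, hn ▸ hW2⟩
    · exact iUnion_subset hfsub
  set Pk : ℕ → Set X := fun k => ⋃ n ∈ Finset.range k, f n with hPk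
  have hPclo : ∀ k, IsClopen (Pk k) := fun k =>
    isClopen_biUnion_finset fun n _ => hfclo n
  have hPsub : ∀ k, Pk k ⊆ G := fun k => iUnion₂_subset fun n _ => hfsub n
  have hPmono : Monotone Pk := by
    intro a b hab
    exact biUnion_subset_biUnion_left (fun n hn => Finset.mem_range.mpr
      (lt_of_lt_of_le (Finset.mem_range.mp hn) hab))
  have hPunion : (⋃ k, Pk k) = G := by
    rw [hGeq]
    apply Subset.antisymm
    · exact iUnion_subset fun k => iUnion₂_subset fun n _ => subset_iUnion f n
    · exact iUnion_subset fun n => subset_iUnion_of_subset (n + 1)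
        (subset_biUnion_of_mem (Finset.self_mem_range_succ n))
  have hsup : (⨆ k, μ (Pk k)) = μ G := by
    rw [← Directed.measure_iUnion (hPmono.directed_le), hPunion]
  have hstep : ∀ k, μ (Pk (k + 1)) ≤ μ (Pk k) + ε := by
    intro k
    have hPke : Pk (k + 1) = f k ∪ Pk k := by
      show (⋃ n ∈ Finset.range (k + 1), f n) = _
      rw [Finset.range_add_one, Finset.set_biUnion_insert]
    rw [hPke]
    calc μ (f k ∪ Pk k) ≤ μ (f k) + μ (Pk k) := measure_union_le _ _
      _ ≤ ε + μ (Pk k) := add_le_add_left (hfsmall k).le _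
      _ = μ (Pk k) + ε := add_comm _ _
  have h0 : μ (Pk 0) = 0 := by simp [hPk]
  by_cases hex : ∃ k, t < μ (Pk k)
  · have hk : t < μ (Pk (Nat.find hex)) := Nat.find_spec hex
    have hk0 : Nat.find hex ≠ 0 := by
      intro h
      rw [h, h0] at hk
      simp at hk
    obtain ⟨j, hj⟩ := Nat.exists_eq_succ_of_ne_zero hk0
    have hjle : μ (Pk j) ≤ t := by
      have := Nat.find_min hex (by omega : j < Nat.find hex)
      exact not_lt.mp this
    refine ⟨Pk j, hPclo j, hPsub j, hjle, ?_⟩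
    rw [hj] at hk
    exact hk.le.trans (hstep j)
  · push_neg at hex
    rcases eq_or_ne t 0 with rfl | ht0
    · exact ⟨∅, isClopen_empty, empty_subset _, by simp, by simp⟩
    have htne : t ≠ ∞ := ne_top_of_le_ne_top (measure_ne_top μ G) ht
    have hlt : t - ε < t := ENNReal.sub_lt_self htne ht0 hε
    have hlt2 : t - ε < ⨆ k, μ (Pk k) := by rw [hsup]; exact lt_of_lt_of_le hlt ht
    obtain ⟨k, hk⟩ := lt_iSup_iff.mp hlt2
    exact ⟨Pk k, hPclo k, hPsub k, hex k, tsub_le_iff_right.mp hk.le⟩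



section Build

variable {X : Type*}

noncomputable def pieceAux (nxt : ℕ → (ℕ → Set X) → Set X) : ℕ → ℕ → Set X
  | 0 => fun _ => ∅
  | m + 1 => Function.update (pieceAux nxt m) m (nxt m (pieceAux nxt m))

noncomputable def piece (nxt : ℕ → (ℕ → Set X) → Set X) (m : ℕ) : Set X :=
  nxt m (pieceAux nxt m)

lemma pieceAux_eq (nxt : ℕ → (ℕ → Set X) → Set X) :
    ∀ {m m' : ℕ}, m' < m → pieceAux nxt m m' = piece nxt m' := by
  intro m
  induction m with
  | zero => intro m' h; omega
  | succ m ih =>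
    intro m' h
    rcases Nat.lt_succ_iff_lt_or_eq.mp h with h | rfl
    · show Function.update (pieceAux nxt m) m (nxt m (pieceAux nxt m)) m' = _
      rw [Function.update_of_ne (by omega)]
      exact ih h
    · show Function.update (pieceAux nxt m') m' (nxt m' (pieceAux nxt m')) m' = _
      rw [Function.update_self]
      rfl

variable [MeasurableSpace X] (μ : Measure X) (pick : Set X → ℝ≥0∞ → ℝ≥0∞ → Set X)
  (B : Set X) (s : ℕ → ℝ≥0∞)

def jIdx (m : ℕ) : ℕ := (Nat.unpair m).2

noncomputable def nxt : ℕ → (ℕ → Set X) → Set X := fun m prev =>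
  pick (B \ ⋃ m' ∈ Finset.range m, prev m')
    (s (jIdx m) - ∑ m' ∈ Finset.range m, if jIdx m' = jIdx m then μ (prev m') else 0)
    ((m : ℝ≥0∞) + 1)⁻¹

noncomputable def P (m : ℕ) : Set X := piece (nxt μ pick B s) m

noncomputable def R (m : ℕ) : Set X := B \ ⋃ m' ∈ Finset.range m, P μ pick B s m'

noncomputable def alloc (m i : ℕ) : ℝ≥0∞ :=
  ∑ m' ∈ Finset.range m, if jIdx m' = i then μ (P μ pick B s m') else 0

noncomputable def D (m : ℕ) : ℝ≥0∞ := s (jIdx m) - alloc μ pick B s m (jIdx m)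

lemma P_eq (m : ℕ) :
    P μ pick B s m = pick (R μ pick B s m) (D μ pick B s m) ((m : ℝ≥0∞) + 1)⁻¹ := by
  show nxt μ pick B s m (pieceAux (nxt μ pick B s) m) = _
  have h1 : (B \ ⋃ m' ∈ Finset.range m, pieceAux (nxt μ pick B s) m m') = R μ pick B s m := by
    unfold R
    congr 1
    exact iUnion₂_congr fun m' hm' => pieceAux_eq _ (Finset.mem_range.mp hm')
  have h2 : (s (jIdx m) - ∑ m' ∈ Finset.range m,
      if jIdx m' = jIdx m then μ (pieceAux (nxt μ pick B s) m m') else 0)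
      = D μ pick B s m := by
    unfold D alloc
    congr 1
    exact Finset.sum_congr rfl fun m' hm' => by
      rw [pieceAux_eq _ (Finset.mem_range.mp hm')]
      rfl
  show pick _ _ _ = _
  rw [h1, h2]

lemma alloc_succ (n i : ℕ) :
    alloc μ pick B s (n + 1) i
      = alloc μ pick B s n i + (if jIdx n = i then μ (P μ pick B s n) else 0) := by
  unfold alloc
  rw [Finset.sum_range_succ]

variable [TopologicalSpace X] [OpensMeasurableSpace X]

theorem master
    (hpick : ∀ G t ε, IsOpen G → t ≤ μ G → ε ≠ 0 →
      IsClopen (pick G t ε) ∧ pick G t ε ⊆ G ∧ μ (pick G t ε) ≤ t ∧ t ≤ μ (pick G t ε) + ε)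
    (hB : IsOpen B) (hfin : μ B ≠ ∞) (hsum : (∑' i, s i) ≤ μ B) (m : ℕ) :
    IsClopen (P μ pick B s m) ∧ P μ pick B s m ⊆ R μ pick B s m ∧
      μ (P μ pick B s m) ≤ D μ pick B s m ∧
      D μ pick B s m ≤ μ (P μ pick B s m) + ((m : ℝ≥0∞) + 1)⁻¹ := by
  classical
  induction m using Nat.strong_induction_on with
  | _ m IH =>
  have hεne : ((m : ℝ≥0∞) + 1)⁻¹ ≠ 0 := by
    simp
  have hclo : ∀ m' < m, IsClopen (P μ pick B s m') := fun m' h => (IH m' h).1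
  have hsub : ∀ m' < m, P μ pick B s m' ⊆ B :=
    fun m' h => ((IH m' h).2.1).trans diff_subset
  have hUclo : IsClopen (⋃ m' ∈ Finset.range m, P μ pick B s m') :=
    isClopen_biUnion_finset fun m' hm' => hclo m' (Finset.mem_range.mp hm')
  have hRopen : IsOpen (R μ pick B s m) := hB.sdiff hUclo.isClosed
  have hallocle : ∀ n ≤ m, ∀ j, alloc μ pick B s n j ≤ s j := by
    intro n
    induction n with
    | zero => intro _ j; simp [alloc]
    | succ n ihn =>
      intro hn j
      have hle := ihn (by omega)
      have hstep := (IH n (by omega)).2.2.1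
      rw [alloc_succ]
      by_cases hj : jIdx n = j
      · rw [if_pos hj]
        subst hj
        calc alloc μ pick B s n (jIdx n) + μ (P μ pick B s n)
            ≤ alloc μ pick B s n (jIdx n) + D μ pick B s n := add_le_add_right hstep _
          _ = alloc μ pick B s n (jIdx n)
              + (s (jIdx n) - alloc μ pick B s n (jIdx n)) := rfl
          _ = s (jIdx n) := add_tsub_cancel_of_le (hle (jIdx n))
      · rw [if_neg hj, add_zero]
        exact hle j
  have hdisj : (↑(Finset.range m) : Set ℕ).PairwiseDisjoint (P μ pick B s) := by
    have key : ∀ a b, a < b → b < m → Disjoint (P μ pick B s a) (P μ pick B s b) := by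
      intro a b hab hbm
      have h2 := (IH b hbm).2.1
      refine Set.disjoint_left.mpr fun x hxa hxb => ?_
      exact (h2 hxb).2 (Set.mem_iUnion₂.mpr ⟨a, Finset.mem_range.mpr hab, hxa⟩)
    intro a ha b hb hne
    rcases lt_or_gt_of_ne hne with h | h
    · exact key a b h (by simpa using hb)
    · exact (key b a h (by simpa using ha)).symm
  have hmeasP : ∀ m' < m, MeasurableSet (P μ pick B s m') :=
    fun m' h => (hclo m' h).isClosed.measurableSet
  have hUeq : μ (⋃ m' ∈ Finset.range m, P μ pick B s m')
      = ∑ m' ∈ Finset.range m, μ (P μ pick B s m') :=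
    measure_biUnion_finset hdisj fun m' h => hmeasP m' (Finset.mem_range.mp h)
  have htotal : μ (R μ pick B s m) + ∑ m' ∈ Finset.range m, μ (P μ pick B s m') = μ B := by
    rw [← hUeq]
    have hUB : (⋃ m' ∈ Finset.range m, P μ pick B s m') ⊆ B :=
      iUnion₂_subset fun m' h => hsub m' (Finset.mem_range.mp h)
    have hid := measure_inter_add_diff (μ := μ) B hUclo.isClosed.measurableSet
    rw [Set.inter_eq_self_of_subset_right hUB] at hid
    show μ (B \ _) + _ = μ B
    rw [add_comm]
    exact hid
  have hkey : D μ pick B s m ≤ μ (R μ pick B s m) := by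
    unfold D
    rw [tsub_le_iff_right]
    set i := jIdx m with hi
    set A : ℝ≥0∞ := ∑ m' ∈ Finset.range m,
      if jIdx m' = i then 0 else μ (P μ pick B s m') with hA
    have hsplit : alloc μ pick B s m i + A = ∑ m' ∈ Finset.range m, μ (P μ pick B s m') := by
      rw [hA]
      unfold alloc
      rw [← Finset.sum_add_distrib]
      exact Finset.sum_congr rfl fun m' _ => by by_cases h : jIdx m' = i <;> simp [h]
    have hAeq : A = ∑ m' ∈ (Finset.range m).filter (fun m' => ¬ jIdx m' = i),
        μ (P μ pick B s m') := by
      rw [hA, Finset.sum_filter]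
      exact Finset.sum_congr rfl fun m' _ => by by_cases h : jIdx m' = i <;> simp [h]
    set J := ((Finset.range m).filter fun m' => ¬ jIdx m' = i).image jIdx with hJ
    have hfib : A ≤ ∑ j ∈ J, alloc μ pick B s m j := by
      rw [hAeq, ← Finset.sum_fiberwise_of_maps_to
        (fun x hx => Finset.mem_image_of_mem jIdx hx) (fun m' => μ (P μ pick B s m'))]
      apply Finset.sum_le_sum
      intro j hj
      calc ∑ m' ∈ ((Finset.range m).filter fun m' => ¬ jIdx m' = i).filter
            (fun m' => jIdx m' = j), μ (P μ pick B s m')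
          ≤ ∑ m' ∈ (Finset.range m).filter (fun m' => jIdx m' = j), μ (P μ pick B s m') := by
            apply Finset.sum_le_sum_of_subset
            intro x hx
            simp only [Finset.mem_filter] at hx ⊢
            exact ⟨hx.1.1, hx.2⟩
        _ = alloc μ pick B s m j := by
            unfold alloc
            rw [Finset.sum_filter]
    have hiJ : i ∉ J := by
      rw [hJ]
      simp only [Finset.mem_image, Finset.mem_filter, not_exists]
      rintro m' ⟨⟨_, hne⟩, heq⟩
      exact hne heq
    have hAle : s i + A ≤ μ B := by
      calc s i + A ≤ s i + ∑ j ∈ J, alloc μ pick B s m j := add_le_add_right hfib _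
        _ ≤ s i + ∑ j ∈ J, s j :=
            add_le_add_right (Finset.sum_le_sum fun j _ => hallocle m le_rfl j) _
        _ = ∑ j ∈ insert i J, s j := (Finset.sum_insert hiJ).symm
        _ ≤ ∑' j, s j := ENNReal.sum_le_tsum _
        _ ≤ μ B := hsum
    have hAfin : A ≠ ∞ := ne_top_of_le_ne_top hfin (le_add_self.trans hAle)
    have hfinal : s i + A ≤ (μ (R μ pick B s m) + alloc μ pick B s m i) + A := by
      calc s i + A ≤ μ B := hAle
        _ = μ (R μ pick B s m) + ∑ m' ∈ Finset.range m, μ (P μ pick B s m') := htotal.symm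
        _ = μ (R μ pick B s m) + (alloc μ pick B s m i + A) := by rw [hsplit]
        _ = (μ (R μ pick B s m) + alloc μ pick B s m i) + A := by rw [add_assoc]
    exact (ENNReal.add_le_add_iff_right hAfin).mp hfinal
  have happ := hpick (R μ pick B s m) (D μ pick B s m) ((m : ℝ≥0∞) + 1)⁻¹ hRopen hkey hεne
  rw [P_eq μ pick B s m]
  exact ⟨happ.1, happ.2.1, happ.2.2.1, happ.2.2.2⟩

end Build


end JdS

/-- **Lemma 2(b) of del Junco–Şahin.** In a fractured Polish space with a non-atomic fully
supported probability measure invariant and ergodic under a homeomorphism `T`, if `B` is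
open and `μ(B) = r₁ + r₂ + ⋯` with the `rᵢ` non-negative reals, then `B` contains pairwise
disjoint open subsets `Bᵢ` with `μ(Bᵢ) = rᵢ`. -/
theorem open_set_split_prescribed_measures
    {X : Type*} [TopologicalSpace X] [PolishSpace X] [MeasurableSpace X] [BorelSpace X]
    (hXf : Fractured X)
    (μ : Measure X) [IsProbabilityMeasure μ] [NullSingletonClass μ]
    (hfull : ∀ U : Set X, IsOpen U → U.Nonempty → μ U ≠ 0)
    (T : X ≃ₜ X) (hT : MeasurePreserving T μ μ)
    (hTerg : ∀ A : Set X, MeasurableSet A → T ⁻¹' A = A → μ A = 0 ∨ μ Aᶜ = 0)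
    (B : Set X) (hB : IsOpen B)
    (r : ℕ → ℝ) (hr : ∀ i, 0 ≤ r i)
    (hsum : μ B = ∑' i, ENNReal.ofReal (r i)) :
    ∃ Bs : ℕ → Set X,
      (∀ i, IsOpen (Bs i)) ∧
      (∀ i, Bs i ⊆ B) ∧
      Pairwise (Function.onFun Disjoint Bs) ∧
      (∀ i, μ (Bs i) = ENNReal.ofReal (r i)) := by
  classical
  obtain ⟨ℬ, hc, hcl, hbasis⟩ := hXf
  set s : ℕ → ℝ≥0∞ := fun i => ENNReal.ofReal (r i) with hsdef
  have hpickex : ∀ (G : Set X) (t ε : ℝ≥0∞), IsOpen G → t ≤ μ G → ε ≠ 0 →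
      ∃ W, IsClopen W ∧ W ⊆ G ∧ μ W ≤ t ∧ t ≤ μ W + ε :=
    fun G t ε hG ht hε => JdS.approx_clopen μ hc hcl hbasis hG ht hε
  choose! pick hp1 hp2 hp3 hp4 using hpickex
  have hpick : ∀ G t ε, IsOpen G → t ≤ μ G → ε ≠ 0 →
      IsClopen (pick G t ε) ∧ pick G t ε ⊆ G ∧ μ (pick G t ε) ≤ t ∧ t ≤ μ (pick G t ε) + ε :=
    fun G t ε h1 h2 h3 =>
      ⟨hp1 G t ε h1 h2 h3, hp2 G t ε h1 h2 h3, hp3 G t ε h1 h2 h3, hp4 G t ε h1 h2 h3⟩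
  have hfin : μ B ≠ ∞ := measure_ne_top μ B
  have hsum' : (∑' i, s i) ≤ μ B := le_of_eq hsum.symm
  have hm := JdS.master μ pick B s hpick hB hfin hsum'
  set PP : ℕ → Set X := JdS.P μ pick B s with hPP
  have hPclo : ∀ n, IsClopen (PP n) := fun n => (hm n).1
  have hPsubB : ∀ n, PP n ⊆ B := fun n => ((hm n).2.1).trans diff_subset
  have hPmeas : ∀ n, MeasurableSet (PP n) := fun n => (hPclo n).isClosed.measurableSet
  have hpdisj : ∀ a b : ℕ, a < b → Disjoint (PP a) (PP b) := by
    intro a b hab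
    have h2 := (hm b).2.1
    refine Set.disjoint_left.mpr fun x hxa hxb => ?_
    exact (h2 hxb).2 (Set.mem_iUnion₂.mpr ⟨a, Finset.mem_range.mpr hab, hxa⟩)
  have hallocle : ∀ n j, JdS.alloc μ pick B s n j ≤ s j := by
    intro n
    induction n with
    | zero => intro j; simp [JdS.alloc]
    | succ n ihn =>
      intro j
      rw [JdS.alloc_succ]
      by_cases hj : JdS.jIdx n = j
      · rw [if_pos hj]
        subst hj
        calc JdS.alloc μ pick B s n (JdS.jIdx n) + μ (PP n)
            ≤ JdS.alloc μ pick B s n (JdS.jIdx n) + JdS.D μ pick B s n :=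
              add_le_add_right (hm n).2.2.1 _
          _ = JdS.alloc μ pick B s n (JdS.jIdx n)
              + (s (JdS.jIdx n) - JdS.alloc μ pick B s n (JdS.jIdx n)) := rfl
          _ = s (JdS.jIdx n) := add_tsub_cancel_of_le (ihn (JdS.jIdx n))
      · rw [if_neg hj, add_zero]
        exact ihn j
  set f' : ℕ → ℕ → Set X := fun i m => if JdS.jIdx m = i then PP m else ∅ with hf'
  set F : ℕ → ℕ → ℝ≥0∞ := fun i m => if JdS.jIdx m = i then μ (PP m) else 0 with hF
  have hμf : ∀ i m, μ (f' i m) = F i m := by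
    intro i m
    by_cases h : JdS.jIdx m = i <;> simp [hf', hF, h]
  have hallocF : ∀ n i, JdS.alloc μ pick B s n i = ∑ m ∈ Finset.range n, F i m := fun n i => rfl
  refine ⟨fun i => ⋃ m, f' i m, ?_, ?_, ?_, ?_⟩
  · intro i
    apply isOpen_iUnion
    intro m
    by_cases h : JdS.jIdx m = i <;> simp [hf', h, (hPclo m).isOpen]
  · intro i
    apply Set.iUnion_subset
    intro m
    by_cases h : JdS.jIdx m = i <;> simp [hf', h, hPsubB m]
  · intro i j hij
    simp only [Function.onFun]
    apply Set.disjoint_iUnion_left.mpr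
    intro m
    apply Set.disjoint_iUnion_right.mpr
    intro m'
    by_cases h1 : JdS.jIdx m = i
    · by_cases h2 : JdS.jIdx m' = j
      · have hmm : m ≠ m' := by
          intro h
          exact hij (by rw [← h1, ← h2, h])
        simp only [hf', if_pos h1, if_pos h2]
        rcases hmm.lt_or_gt with h | h
        · exact hpdisj m m' h
        · exact (hpdisj m' m h).symm
      · simp [hf', h2]
    · simp [hf', h1]
  · intro i
    have hdisjf : Pairwise (Function.onFun Disjoint (f' i)) := by
      intro m m' hmm
      simp only [Function.onFun, hf']
      by_cases h1 : JdS.jIdx m = i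
      · by_cases h2 : JdS.jIdx m' = i
        · simp only [if_pos h1, if_pos h2]
          rcases hmm.lt_or_gt with h | h
          · exact hpdisj m m' h
          · exact (hpdisj m' m h).symm
        · simp [h2]
      · simp [h1]
    have hmeasf : ∀ m, MeasurableSet (f' i m) := by
      intro m
      by_cases h : JdS.jIdx m = i <;> simp [hf', h, hPmeas m]
    rw [measure_iUnion hdisjf hmeasf]
    have htsum : (∑' m, μ (f' i m)) = ∑' m, F i m := tsum_congr fun m => hμf i m
    rw [htsum]
    have hle : (∑' m, F i m) ≤ s i := by
      rw [ENNReal.tsum_eq_iSup_sum]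
      apply iSup_le
      intro J
      have hJn : ∀ x ∈ J, x < J.sup id + 1 := fun x hx =>
        Nat.lt_succ_of_le (Finset.le_sup (f := id) hx)
      calc ∑ m ∈ J, F i m ≤ ∑ m ∈ Finset.range (J.sup id + 1), F i m :=
            Finset.sum_le_sum_of_subset fun x hx => Finset.mem_range.mpr (hJn x hx)
        _ = JdS.alloc μ pick B s (J.sup id + 1) i := (hallocF _ i).symm
        _ ≤ s i := hallocle _ i
    have hge : s i ≤ ∑' m, F i m := by
      refine ENNReal.le_of_forall_pos_le_add fun ε hε hlt => ?_
      have hεne : (ε : ℝ≥0∞) ≠ 0 := by exact_mod_cast hε.ne'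
      obtain ⟨n, hn⟩ := ENNReal.exists_nat_gt (show ((ε : ℝ≥0∞)⁻¹) ≠ ⊤ by simp [hεne])
      set m := Nat.pair n i with hmdef
      have hidxm : JdS.jIdx m = i := by simp [JdS.jIdx, hmdef, Nat.unpair_pair]
      have hεm : ((m : ℝ≥0∞) + 1)⁻¹ ≤ ε := by
        have h1 : (ε : ℝ≥0∞)⁻¹ ≤ (m : ℝ≥0∞) + 1 := by
          refine hn.le.trans ?_
          have : (n : ℝ≥0∞) ≤ (m : ℝ≥0∞) := by
            exact_mod_cast Nat.left_le_pair n i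
          exact this.trans le_self_add
        calc ((m : ℝ≥0∞) + 1)⁻¹ ≤ ((ε : ℝ≥0∞)⁻¹)⁻¹ := ENNReal.inv_le_inv' h1
          _ = (ε : ℝ≥0∞) := inv_inv _
      have h4 := (hm m).2.2.2
      have hDm : JdS.D μ pick B s m = s i - JdS.alloc μ pick B s m i := by
        unfold JdS.D
        rw [hidxm]
      rw [hDm] at h4
      have h5 : s i ≤ (μ (PP m) + ((m : ℝ≥0∞) + 1)⁻¹) + JdS.alloc μ pick B s m i :=
        tsub_le_iff_right.mp h4
      have hstep : JdS.alloc μ pick B s (m + 1) i = JdS.alloc μ pick B s m i + μ (PP m) := by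
        rw [JdS.alloc_succ, if_pos hidxm]
      have h6 : s i ≤ JdS.alloc μ pick B s (m + 1) i + ((m : ℝ≥0∞) + 1)⁻¹ := by
        rw [hstep]
        calc s i ≤ (μ (PP m) + ((m : ℝ≥0∞) + 1)⁻¹) + JdS.alloc μ pick B s m i := h5
          _ = JdS.alloc μ pick B s m i + μ (PP m) + ((m : ℝ≥0∞) + 1)⁻¹ := by ring
      have h7 : JdS.alloc μ pick B s (m + 1) i ≤ ∑' m, F i m := by
        rw [hallocF]
        exact ENNReal.sum_le_tsum _
      exact h6.trans (add_le_add h7 hεm)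
    exact le_antisymm hle hge
end

section
/- Let X be a fractured Polish space, μ a non-atomic Borel probability measure on X with full support, and T an ergodic measure-preserving homeomorphism of (X, μ). If 𝒯_0, 𝒯_1, …, 𝒯_{m-1} are pairwise disjoint arrays in X of equal widths, then there exists a stacking of 𝒯_0, 𝒯_1, …, 𝒯_{m-1}. -/
open MeasureTheory Set TopologicalSpace

variable {X : Type*} [TopologicalSpace X]

/-- A *column* of height `h` for a homeomorphism `T`: a clopen base `B₀` together with
integers `n₀ = 0, n₁, …, n_{h-1}` such that the levels `T^{nᵢ} B₀` are pairwise disjoint. -/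
structure Column (T : X ≃ₜ X) (h : ℕ) where
  base : Set X
  clopen : IsClopen base
  n : Fin h → ℤ
  n_zero : ∀ i : Fin h, (i : ℕ) = 0 → n i = 0
  disj : Pairwise (Function.onFun Disjoint (fun i : Fin h => (T.toEquiv ^ n i) '' base))

namespace Column

variable {T : X ≃ₜ X} {h : ℕ}

/-- The `i`-th level `T^{nᵢ} B₀` of a column. -/
def level (C : Column T h) (i : Fin h) : Set X := (T.toEquiv ^ C.n i) '' C.base

/-- The union of the levels of a column. -/
def carrier (C : Column T h) : Set X := ⋃ i, C.level i

/-- A *slice* of a column: same integers, base a clopen subset of the original base. -/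
def IsSliceOf (C' C : Column T h) : Prop := C'.n = C.n ∧ C'.base ⊆ C.base

end Column

/-- An *array* for `T` of height `h`: a countable collection of pairwise disjoint columns of
height `h` (finite collections are obtained by letting all but finitely many columns have
empty base). -/
structure TArray (T : X ≃ₜ X) (h : ℕ) where
  col : ℕ → Column T h
  disj : Pairwise (Function.onFun Disjoint (fun i => (col i).carrier))

namespace TArray

variable {T : X ≃ₜ X} {h : ℕ}

/-- The union of all levels of all columns of an array. -/
def carrier (A : TArray T h) : Set X := ⋃ i, (A.col i).carrier

/-- The base of an array: the union of the bases of its columns. -/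
def base (A : TArray T h) : Set X := ⋃ i, (A.col i).base

/-- A *sub-array*: each of its columns is a slice of a column of the given array. -/
def IsSubArrayOf (A' A : TArray T h) : Prop := ∀ i, ∃ j, (A'.col i).IsSliceOf (A.col j)

/-- A *refinement*: a sub-array whose levels fill out the levels of the given array. -/
def IsRefinementOf [MeasurableSpace X] (μ : Measure X) (A' A : TArray T h) : Prop :=
  A'.IsSubArrayOf A ∧ μ A'.carrier = μ A.carrier

end TArray

lemma concat_index_lt {m h : ℕ} (k : Fin m) (i : Fin h) :
    (k : ℕ) * h + (i : ℕ) < m * h :=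
  calc (k : ℕ) * h + (i : ℕ) < (k : ℕ) * h + h := Nat.add_lt_add_left i.isLt _
    _ = ((k : ℕ) + 1) * h := by ring
    _ ≤ m * h := Nat.mul_le_mul_right h k.isLt

/-- `D` is the *concatenation* `[C₀, …, C_{m-1}]` of the columns `C k`: the bases of the
`C k` form a column (they are images `T^{m_k}` of the base of `D = C₀`, pairwise disjoint),
and the levels of `D` are the levels of `C₀, …, C_{m-1}` traversed in order. -/
def Column.IsConcatenationOf {T : X ≃ₜ X} {m h : ℕ}
    (D : Column T (m * h)) (C : Fin m → Column T h) : Prop :=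
  ∃ mk : Fin m → ℤ,
    (∀ k : Fin m, (k : ℕ) = 0 → mk k = 0) ∧
    (∀ k, (T.toEquiv ^ mk k) '' D.base = (C k).base) ∧
    Pairwise (Function.onFun Disjoint (fun k => (C k).carrier)) ∧
    ∀ (k : Fin m) (i : Fin h),
      D.n ⟨(k : ℕ) * h + (i : ℕ), concat_index_lt k i⟩ = mk k + (C k).n i

/-- The data exhibiting the array `Ahat` (of height `m * h`) as an *extension* of the array
`A` (of height `h`): a refinement `ref` of `A` (with each column of `ref` a slice of the
column `wit c` of `A`) such that every column of `Ahat` is a concatenation of columns of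
`ref`, and `Ahat` fills out `A`. -/
structure ExtensionData [MeasurableSpace X] (μ : Measure X) {T : X ≃ₜ X} {m h : ℕ}
    (Ahat : TArray T (m * h)) (A : TArray T h) where
  ref : TArray T h
  wit : ℕ → ℕ
  slice : ∀ c, (ref.col c).IsSliceOf (A.col (wit c))
  ref_fill : μ ref.carrier = μ A.carrier
  f : ℕ → Fin m → ℕ
  concat : ∀ i, (Ahat.col i).IsConcatenationOf (fun k => ref.col (f i k))
  fill : μ Ahat.carrier = μ A.carrier

/-- `Ahat` is an *extension* of `A`. -/
def TArray.IsExtensionOf [MeasurableSpace X] (μ : Measure X) {T : X ≃ₜ X} {m h : ℕ}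
    (Ahat : TArray T (m * h)) (A : TArray T h) : Prop :=
  Nonempty (ExtensionData μ Ahat A)

/-- The data exhibiting the array `A` (of height `m * h`) as a *stacking* of the pairwise
disjoint equal-width arrays `Ts 0, …, Ts (m-1)` (of height `h`): refinements `ref k` of
`Ts k` such that every column of `A` is a concatenation `[C₀, …, C_{m-1}]` with `C k` a
column of `ref k`, and `A` fills out `⋃ k, Ts k`. -/
structure StackingData [MeasurableSpace X] (μ : Measure X) {T : X ≃ₜ X} {m h : ℕ}
    (A : TArray T (m * h)) (Ts : Fin m → TArray T h) where
  ref : Fin m → TArray T h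
  ref_is : ∀ k, (ref k).IsRefinementOf μ (Ts k)
  f : ℕ → Fin m → ℕ
  concat : ∀ i, (A.col i).IsConcatenationOf (fun k => (ref k).col (f i k))
  fill : μ A.carrier = μ (⋃ k, (Ts k).carrier)


/-! ### Auxiliary lemmas for the proof -/

section DJSHelpers

variable {X : Type*} [TopologicalSpace X]

section MeasureHelpers
variable [MeasurableSpace X] [BorelSpace X] (T : X ≃ₜ X) {μ : Measure X}

omit [MeasurableSpace X] [BorelSpace X] in
lemma djs_zpow_cont (n : ℤ) : Continuous ⇑(T.toEquiv ^ n) := by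
  rcases n with k | k
  · rw [Int.ofNat_eq_coe, zpow_natCast, Equiv.Perm.coe_pow]
    exact T.continuous.iterate k
  · rw [zpow_negSucc, ← inv_pow, Equiv.Perm.coe_pow]
    exact T.symm.continuous.iterate (k+1)

lemma djs_zpow_meas (n : ℤ) : Measurable ⇑(T.toEquiv ^ n) := (djs_zpow_cont T n).measurable

lemma djs_zpow_mp (hT : MeasurePreserving T μ μ) (n : ℤ) :
    MeasurePreserving ⇑(T.toEquiv ^ n) μ μ := by
  have hs : MeasurePreserving ⇑T.symm μ μ :=
    (MeasurePreserving.symm T.toMeasurableEquiv hT :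
      MeasurePreserving ⇑T.toMeasurableEquiv.symm μ μ)
  rcases n with k | k
  · rw [Int.ofNat_eq_coe, zpow_natCast, Equiv.Perm.coe_pow]
    exact hT.iterate k
  · rw [zpow_negSucc, ← inv_pow, Equiv.Perm.coe_pow]
    exact hs.iterate (k+1)

omit [MeasurableSpace X] [BorelSpace X] in
lemma djs_zpow_image_eq_preimage (n : ℤ) (s : Set X) :
    (T.toEquiv ^ n) '' s = (T.toEquiv ^ (-n)) ⁻¹' s := by
  rw [zpow_neg, Equiv.Perm.inv_def]; exact Equiv.image_eq_preimage_symm _ _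

omit [MeasurableSpace X] [BorelSpace X] in
lemma djs_zpow_isClopen_image {s : Set X} (hs : IsClopen s) (n : ℤ) :
    IsClopen ((T.toEquiv ^ n) '' s) := by
  rw [djs_zpow_image_eq_preimage]; exact hs.preimage (djs_zpow_cont T _)

lemma djs_zpow_measure_image (hT : MeasurePreserving T μ μ) {s : Set X}
    (hs : MeasurableSet s) (n : ℤ) : μ ((T.toEquiv ^ n) '' s) = μ s := by
  rw [djs_zpow_image_eq_preimage]
  exact (djs_zpow_mp T hT (-n)).measure_preimage hs.nullMeasurableSet

omit [MeasurableSpace X] [BorelSpace X] in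
lemma djs_zpow_apply_add (a b : ℤ) (x : X) :
    (T.toEquiv ^ (a + b)) x = (T.toEquiv ^ a) ((T.toEquiv ^ b) x) := by
  rw [zpow_add]; rfl

omit [MeasurableSpace X] [BorelSpace X] in
lemma djs_zpow_image_image (a b : ℤ) (s : Set X) :
    (T.toEquiv ^ a) '' ((T.toEquiv ^ b) '' s) = (T.toEquiv ^ (a + b)) '' s := by
  rw [← Set.image_comp]
  have : ⇑(T.toEquiv ^ a) ∘ ⇑(T.toEquiv ^ b) = ⇑(T.toEquiv ^ (a+b)) := by
    rw [zpow_add]; rfl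
  rw [this]

omit [MeasurableSpace X] [BorelSpace X] in
lemma djs_shift_cast (d : ℤ) {n : ℕ} (V : Fin n → Set X) (l : Fin n → ℤ) :
    (⋂ k, (T.toEquiv ^ (l k - d)) ⁻¹' (V k))
      = (T.toEquiv ^ d) '' (⋂ k, (T.toEquiv ^ (l k)) ⁻¹' (V k)) := by
  rw [djs_zpow_image_eq_preimage, Set.preimage_iInter]
  exact Set.iInter_congr fun k => by
    ext x
    simp only [Set.mem_preimage]
    rw [sub_eq_add_neg, djs_zpow_apply_add]

lemma djs_saturation [IsProbabilityMeasure μ]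
    (hTerg : ∀ A : Set X, MeasurableSet A → T ⁻¹' A = A → μ A = 0 ∨ μ Aᶜ = 0)
    {S : Set X} (hS : MeasurableSet S) (h0 : μ S ≠ 0) :
    μ (⋃ n : ℤ, (T.toEquiv ^ n) ⁻¹' S)ᶜ = 0 := by
  set G := ⋃ n : ℤ, (T.toEquiv ^ n) ⁻¹' S with hG
  have hGm : MeasurableSet G := MeasurableSet.iUnion fun n => hS.preimage (djs_zpow_meas T n)
  have key : ∀ (n : ℤ) (x : X), (T.toEquiv ^ (n+1)) x = (T.toEquiv ^ n) (T x) := by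
    intro n x
    rw [zpow_add_one, Equiv.Perm.mul_apply]; rfl
  have hinv : T ⁻¹' G = G := by
    ext x
    simp only [hG, Set.mem_iUnion, Set.mem_preimage]
    constructor
    · rintro ⟨n, hn⟩
      exact ⟨n + 1, by rw [key]; exact hn⟩
    · rintro ⟨n, hn⟩
      refine ⟨n - 1, ?_⟩
      rw [← key, sub_add_cancel]
      exact hn
  rcases hTerg G hGm hinv with h | h
  · exfalso
    apply h0
    have hsub : S ⊆ G := fun x hx => Set.mem_iUnion.2 ⟨0, by simpa using hx⟩
    exact le_antisymm (le_trans (measure_mono hsub) h.le) zero_le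
  · exact h

lemma djs_exists_inter_pos [IsProbabilityMeasure μ] (hT : MeasurePreserving T μ μ)
    (hTerg : ∀ A : Set X, MeasurableSet A → T ⁻¹' A = A → μ A = 0 ∨ μ Aᶜ = 0)
    {S V : Set X} (hS : MeasurableSet S) (h0 : μ S ≠ 0) (hV0 : μ V ≠ 0) :
    ∃ n : ℤ, μ (V ∩ (T.toEquiv ^ n) ⁻¹' S) ≠ 0 := by
  by_contra hc
  push_neg at hc
  apply hV0
  have h1 : V ⊆ (⋃ n : ℤ, V ∩ (T.toEquiv ^ n) ⁻¹' S) ∪ (⋃ n : ℤ, (T.toEquiv ^ n) ⁻¹' S)ᶜ := by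
    intro x hx
    by_cases hxG : x ∈ ⋃ n : ℤ, (T.toEquiv ^ n) ⁻¹' S
    · rcases Set.mem_iUnion.1 hxG with ⟨n, hn⟩
      exact Or.inl (Set.mem_iUnion.2 ⟨n, hx, hn⟩)
    · exact Or.inr hxG
  refine le_antisymm ?_ zero_le
  calc μ V ≤ μ (⋃ n : ℤ, V ∩ (T.toEquiv ^ n) ⁻¹' S) + μ (⋃ n : ℤ, (T.toEquiv ^ n) ⁻¹' S)ᶜ :=
        le_trans (measure_mono h1) (measure_union_le _ _)
    _ = 0 := by
        rw [measure_iUnion_null fun n => hc n, djs_saturation T hTerg hS h0, add_zero]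

lemma djs_exists_shift [IsProbabilityMeasure μ] (hT : MeasurePreserving T μ μ)
    (hTerg : ∀ A : Set X, MeasurableSet A → T ⁻¹' A = A → μ A = 0 ∨ μ Aᶜ = 0) :
    ∀ (n : ℕ) (V : Fin n → Set X), (∀ k, MeasurableSet (V k)) → (∀ k, μ (V k) ≠ 0) →
    ∃ l : Fin n → ℤ, μ (⋂ k, (T.toEquiv ^ (l k)) ⁻¹' (V k)) ≠ 0 := by
  intro n
  induction n with
  | zero =>
      intro V _ _
      refine ⟨fun _ => 0, ?_⟩
      rw [Set.iInter_of_empty]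
      simp
  | succ n ih =>
      intro V hVm hV0
      obtain ⟨l', hl'⟩ := ih (fun k => V k.castSucc) (fun k => hVm _) (fun k => hV0 _)
      have hSm : MeasurableSet (⋂ k : Fin n, (T.toEquiv ^ (l' k)) ⁻¹' (V k.castSucc)) :=
        MeasurableSet.iInter fun k => (hVm _).preimage (djs_zpow_meas T _)
      obtain ⟨t, ht⟩ := djs_exists_inter_pos T hT hTerg (hVm (Fin.last n)) (hV0 (Fin.last n)) hl'
      refine ⟨Fin.snoc l' t, ?_⟩
      have heq : (⋂ k : Fin (n+1), (T.toEquiv ^ (Fin.snoc (α := fun _ => ℤ) l' t k)) ⁻¹' (V k)) =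
          (⋂ k : Fin n, (T.toEquiv ^ (l' k)) ⁻¹' (V k.castSucc)) ∩
            (T.toEquiv ^ t) ⁻¹' (V (Fin.last n)) := by
        ext x
        simp only [Set.mem_iInter, Set.mem_inter_iff, Set.mem_preimage]
        constructor
        · intro hx
          refine ⟨fun k => ?_, ?_⟩
          · have := hx k.castSucc
            rwa [Fin.snoc_castSucc] at this
          · have := hx (Fin.last n)
            rwa [Fin.snoc_last] at this
        · rintro ⟨h1, h2⟩ k
          induction k using Fin.lastCases with
          | last => rwa [Fin.snoc_last]
          | cast k => rw [Fin.snoc_castSucc]; exact h1 k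
      rw [heq]
      exact ht

end MeasureHelpers

section Greedy
variable (T : X ≃ₜ X) {m : ℕ}
variable (c : ℕ → Fin m → ℕ) (l : ℕ → Fin m → ℤ) (Base : Fin m → ℕ → Set X)

/-- Used-up parts after `j` stages of the greedy exchange. -/
def greedyU : ℕ → Fin m → Set X
  | 0 => fun _ => ∅
  | j+1 => fun k => greedyU j k ∪ (T.toEquiv ^ (l j k)) ''
      (⋂ k', (T.toEquiv ^ (l j k')) ⁻¹' (Base k' (c j k') \ greedyU j k'))

/-- The piece carved at stage `j` of the greedy exchange. -/
def greedyE (j : ℕ) : Set X :=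
  ⋂ k', (T.toEquiv ^ (l j k')) ⁻¹' (Base k' (c j k') \ greedyU T c l Base j k')

lemma greedyU_succ (j : ℕ) (k : Fin m) :
    greedyU T c l Base (j+1) k
      = greedyU T c l Base j k ∪ (T.toEquiv ^ (l j k)) '' greedyE T c l Base j := rfl

lemma greedyU_mono : ∀ {j j' : ℕ}, j ≤ j' → ∀ k,
    greedyU T c l Base j k ⊆ greedyU T c l Base j' k := by
  intro j j' hle
  induction j' with
  | zero => cases Nat.le_zero.1 hle; exact fun k => Set.Subset.rfl
  | succ j' ih =>
      rcases Nat.lt_or_ge j (j'+1) with hlt | hge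
      · intro k
        exact (ih (Nat.lt_succ_iff.1 hlt) k).trans Set.subset_union_left
      · cases le_antisymm hle hge
        exact fun k => Set.Subset.rfl

lemma greedyE_subset (j : ℕ) (k : Fin m) :
    greedyE T c l Base j ⊆ (T.toEquiv ^ (l j k)) ⁻¹' (Base k (c j k) \ greedyU T c l Base j k) :=
  Set.iInter_subset _ k

lemma greedy_img_subset (j : ℕ) (k : Fin m) :
    (T.toEquiv ^ (l j k)) '' greedyE T c l Base j ⊆ Base k (c j k) \ greedyU T c l Base j k :=
  (Set.image_mono (greedyE_subset T c l Base j k)).trans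
    (by rw [Set.image_preimage_eq _ (Equiv.surjective _)])

lemma greedy_img_subset_U {j j' : ℕ} (hjj : j < j') (k : Fin m) :
    (T.toEquiv ^ (l j k)) '' greedyE T c l Base j ⊆ greedyU T c l Base j' k :=
  Set.subset_union_right.trans
    ((greedyU_succ T c l Base j k ▸ greedyU_mono T c l Base hjj k : _))

lemma greedyU_subset_iUnion (j : ℕ) (k : Fin m) :
    greedyU T c l Base j k ⊆ ⋃ j', (T.toEquiv ^ (l j' k)) '' greedyE T c l Base j' := by
  induction j with
  | zero => exact Set.empty_subset _
  | succ j ih =>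
      rw [greedyU_succ]
      exact Set.union_subset ih (Set.subset_iUnion
        (fun j' => (T.toEquiv ^ (l j' k)) '' greedyE T c l Base j') j)

lemma greedy_img_disjoint {j j' : ℕ} (hne : j ≠ j') (k : Fin m) :
    Disjoint ((T.toEquiv ^ (l j k)) '' greedyE T c l Base j)
      ((T.toEquiv ^ (l j' k)) '' greedyE T c l Base j') := by
  rcases Nat.lt_or_ge j j' with hlt | hge
  · exact Set.disjoint_of_subset (greedy_img_subset_U T c l Base hlt k)
      ((greedy_img_subset T c l Base j' k).trans (Set.diff_subset_compl _ _))
      disjoint_compl_right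
  · have hlt : j' < j := lt_of_le_of_ne hge (Ne.symm hne)
    exact (Set.disjoint_of_subset (greedy_img_subset_U T c l Base hlt k)
      ((greedy_img_subset T c l Base j k).trans (Set.diff_subset_compl _ _))
      disjoint_compl_right).symm

lemma greedyU_isClopen (hB : ∀ k cc, IsClopen (Base k cc)) :
    ∀ j, (∀ k, IsClopen (greedyU T c l Base j k)) ∧ IsClopen (greedyE T c l Base j) := by
  intro j
  induction j with
  | zero =>
      constructor
      · intro k; exact isClopen_empty
      · exact isClopen_iInter_of_finite fun k' =>
          ((hB _ _).diff isClopen_empty).preimage (djs_zpow_cont T _)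
  | succ j ih =>
      have hE : IsClopen (greedyE T c l Base j) := ih.2
      have hU : ∀ k, IsClopen (greedyU T c l Base (j+1) k) := by
        intro k
        rw [greedyU_succ]
        exact (ih.1 k).union (djs_zpow_isClopen_image T hE _)
      exact ⟨hU, isClopen_iInter_of_finite fun k' =>
        ((hB _ _).diff (hU k')).preimage (djs_zpow_cont T _)⟩

end Greedy

end DJSHelpers

section ColHelpers
variable {X : Type*} [TopologicalSpace X] {T : X ≃ₜ X} {h : ℕ}

lemma Column.level_subset_carrier (C : Column T h) (i : Fin h) : C.level i ⊆ C.carrier :=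
  Set.subset_iUnion _ i

lemma Column.base_subset_carrier (C : Column T h) (hp : 0 < h) : C.base ⊆ C.carrier := by
  intro b hb
  refine Set.mem_iUnion.2 ⟨⟨0, hp⟩, ?_⟩
  rw [Column.level, C.n_zero ⟨0, hp⟩ rfl]
  simpa using hb

lemma TArray.col_carrier_subset (A : TArray T h) (i : ℕ) : (A.col i).carrier ⊆ A.carrier :=
  show (A.col i).carrier ⊆ ⋃ j, (A.col j).carrier from Set.subset_iUnion (fun j => (A.col j).carrier) i

lemma Column.slice_level_subset {C' C : Column T h} (hs : C'.IsSliceOf C) (i : Fin h) :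
    C'.level i ⊆ C.level i := by
  rw [Column.level, Column.level, hs.1]
  exact Set.image_mono hs.2

end ColHelpers
/-- **Lemma 4(a) of del Junco–Şahin.** Pairwise disjoint arrays `𝒯₀, …, 𝒯_{m-1}` of equal
widths admit a stacking. -/
theorem exists_stacking
    {X : Type*} [TopologicalSpace X] [PolishSpace X] [MeasurableSpace X] [BorelSpace X]
    (hXf : Fractured X)
    (μ : Measure X) [IsProbabilityMeasure μ] [NullSingletonClass μ]
    (hfull : ∀ U : Set X, IsOpen U → U.Nonempty → μ U ≠ 0)
    (T : X ≃ₜ X) (hT : MeasurePreserving T μ μ)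
    (hTerg : ∀ A : Set X, MeasurableSet A → T ⁻¹' A = A → μ A = 0 ∨ μ Aᶜ = 0)
    {h m : ℕ} (hm : 0 < m) (Ts : Fin m → TArray T h)
    (hdisj : Pairwise (Function.onFun Disjoint (fun k => (Ts k).carrier)))
    (hwidth : ∀ k k' : Fin m, μ (Ts k).base = μ (Ts k').base) :
    ∃ A : TArray T (m * h), Nonempty (StackingData μ A Ts) := by
  classical
  rcases Nat.eq_zero_or_pos h with hzero | hp
  · -- trivial case `h = 0`: all carriers are empty
    subst hzero
    have hcar : ∀ (k : Fin m), (Ts k).carrier = ∅ := by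
      intro k
      rw [TArray.carrier]
      refine Set.iUnion_eq_empty.2 fun i => ?_
      rw [Column.carrier]
      exact Set.iUnion_of_empty _
    have hmul : m * 0 = 0 := Nat.mul_zero m
    refine ⟨⟨fun _ => ⟨∅, isClopen_empty, fun p => 0, fun _ _ => rfl,
        fun p q hpq => by simp [Function.onFun]⟩,
        fun i j hij => by simp [Function.onFun, Column.carrier]⟩, ⟨?_⟩⟩
    refine ⟨fun k => ⟨fun j => ⟨∅, isClopen_empty, ((Ts k).col j).n, ((Ts k).col j).n_zero,
        fun p q hpq => by simp [Function.onFun]⟩,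
        fun i j hij => by simp [Function.onFun, Column.carrier]⟩, ?_, fun _ _ => 0, ?_, ?_⟩
    · intro k
      constructor
      · intro j
        exact ⟨j, rfl, Set.empty_subset _⟩
      · rw [hcar k]
        congr 1
        rw [TArray.carrier]
        refine Set.iUnion_eq_empty.2 fun i => ?_
        rw [Column.carrier]
        refine Set.iUnion_eq_empty.2 fun p => ?_
        exact p.elim0
    · intro i
      refine ⟨fun _ => 0, fun _ _ => rfl, fun k => by simp, ?_, ?_⟩
      · intro k k' hkk
        simp [Function.onFun, Column.carrier]
      · intro k p
        exact p.elim0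
    · have h1 : (⋃ k, (Ts k).carrier) = ∅ := Set.iUnion_eq_empty.2 hcar
      rw [h1]
      congr 1
      rw [TArray.carrier]
      refine Set.iUnion_eq_empty.2 fun i => ?_
      rw [Column.carrier]
      refine Set.iUnion_eq_empty.2 fun p => ?_
      exact p.elim0
  · -- main case `0 < h`
    obtain ⟨τ, hτ⟩ := exists_surjective_nat ((Fin m → ℕ) × (Fin m → ℤ))
    set c : ℕ → Fin m → ℕ := fun j => (τ j).1 with hc
    set l : ℕ → Fin m → ℤ := fun j k => (τ j).2 k - (τ j).2 ⟨0, hm⟩ with hl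
    have hl0 : ∀ j, l j ⟨0, hm⟩ = 0 := fun j => sub_self _
    set Base : Fin m → ℕ → Set X := fun k cc => ((Ts k).col cc).base with hBase
    have hBclopen : ∀ (k : Fin m) (cc : ℕ), IsClopen (Base k cc) :=
      fun k cc => ((Ts k).col cc).clopen
    set E : ℕ → Set X := fun j => greedyE T c l Base j with hE
    set Img : ℕ → Fin m → Set X := fun j k => (T.toEquiv ^ (l j k)) '' E j with hImg
    have hEclopen : ∀ j, IsClopen (E j) := fun j => (greedyU_isClopen T c l Base hBclopen j).2
    have hEmeas : ∀ j, MeasurableSet (E j) := fun j => (hEclopen j).isOpen.measurableSet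
    have hImgClopen : ∀ j k, IsClopen (Img j k) := fun j k =>
      djs_zpow_isClopen_image T (hEclopen j) _
    have hImgMeas : ∀ j k, MeasurableSet (Img j k) := fun j k =>
      (hImgClopen j k).isOpen.measurableSet
    have hImgsub : ∀ j k, Img j k ⊆ Base k (c j k) \ greedyU T c l Base j k :=
      fun j k => greedy_img_subset T c l Base j k
    have hImgBase : ∀ j k, Img j k ⊆ Base k (c j k) :=
      fun j k => (hImgsub j k).trans Set.diff_subset
    have hImgdisj : ∀ (k : Fin m) {j j' : ℕ}, j ≠ j' → Disjoint (Img j k) (Img j' k) :=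
      fun k _ _ hne => greedy_img_disjoint T c l Base hne k
    have hImgmu : ∀ j k, μ (Img j k) = μ (E j) := fun j k =>
      djs_zpow_measure_image T hT (hEmeas j) _
    have hBaseSub : ∀ (k : Fin m) (cc : ℕ), Base k cc ⊆ (Ts k).base :=
      fun k cc => Set.subset_iUnion (fun c' => ((Ts k).col c').base) cc
    have hBaseMeas : ∀ k : Fin m, MeasurableSet ((Ts k).base) :=
      fun k => MeasurableSet.iUnion fun cc => (hBclopen k cc).isOpen.measurableSet
    set R : Fin m → Set X := fun k => (Ts k).base \ ⋃ j, Img j k with hR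
    have hRmeas : ∀ k, MeasurableSet (R k) :=
      fun k => (hBaseMeas k).diff (MeasurableSet.iUnion fun j => hImgMeas j k)
    have hRdisj : ∀ (k : Fin m) (j : ℕ), Disjoint (R k) (Img j k) := fun k j =>
      Disjoint.mono_right (Set.subset_iUnion (fun j' => Img j' k) j) disjoint_sdiff_self_left
    have hImgUnion : ∀ k : Fin m, (⋃ j, Img j k) ⊆ (Ts k).base :=
      fun k => Set.iUnion_subset fun j => (hImgBase j k).trans (hBaseSub k _)
    -- the measures of the residuals agree
    have hRmu : ∀ k : Fin m, μ (R k) = μ ((Ts k).base) - ∑' j, μ (E j) := by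
      intro k
      rw [hR]
      rw [measure_diff (hImgUnion k)
        (MeasurableSet.iUnion fun j => hImgMeas j k).nullMeasurableSet
        (measure_ne_top μ _)]
      congr 1
      rw [measure_iUnion (fun j j' hne => hImgdisj k hne) (fun j => hImgMeas j k)]
      exact tsum_congr fun j => hImgmu j k
    have hReq : ∀ k k' : Fin m, μ (R k) = μ (R k') := by
      intro k k'
      rw [hRmu k, hRmu k', hwidth k k']
    -- the residuals are null
    have hRnull : ∀ k : Fin m, μ (R k) = 0 := by
      by_contra hcon
      push_neg at hcon
      obtain ⟨k₀, hk₀⟩ := hcon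
      have hallpos : ∀ k, μ (R k) ≠ 0 := fun k => by rw [hReq k k₀]; exact hk₀
      have hchoice : ∀ k : Fin m, ∃ cc : ℕ, μ (R k ∩ Base k cc) ≠ 0 := by
        intro k
        by_contra hno
        push_neg at hno
        apply hallpos k
        have hsub : R k ⊆ ⋃ cc, (R k ∩ Base k cc) := by
          intro x hx
          rcases Set.mem_iUnion.1 (Set.diff_subset hx : x ∈ (Ts k).base) with ⟨cc, hcc⟩
          exact Set.mem_iUnion.2 ⟨cc, hx, hcc⟩
        exact le_antisymm ((measure_mono hsub).trans (measure_iUnion_null hno).le) zero_le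
      choose cc hcc using hchoice
      set V : Fin m → Set X := fun k => R k ∩ Base k (cc k) with hV
      have hVmeas : ∀ k, MeasurableSet (V k) :=
        fun k => (hRmeas k).inter (hBclopen k (cc k)).isOpen.measurableSet
      obtain ⟨l₁, hl₁⟩ := djs_exists_shift T hT hTerg m V hVmeas hcc
      set l₂ : Fin m → ℤ := fun k => l₁ k - l₁ ⟨0, hm⟩ with hl₂
      set S : Set X := ⋂ k, (T.toEquiv ^ (l₂ k)) ⁻¹' V k with hS
      have hS0 : μ S ≠ 0 := by
        rw [hS]
        have := djs_shift_cast T (l₁ ⟨0, hm⟩) V l₁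
        rw [hl₂]
        rw [this, djs_zpow_measure_image T hT
          (MeasurableSet.iInter fun k => (hVmeas k).preimage (djs_zpow_meas T _))]
        exact hl₁
      obtain ⟨j, hj⟩ := hτ (cc, l₂)
      have hcj : c j = cc := congrArg Prod.fst hj
      have hl₂0 : l₂ ⟨0, hm⟩ = 0 := sub_self _
      have hlj : l j = l₂ := by
        funext k
        show (τ j).2 k - (τ j).2 ⟨0, hm⟩ = l₂ k
        rw [hj]
        show l₂ k - l₂ ⟨0, hm⟩ = l₂ k
        rw [hl₂0, sub_zero]
      have hSsubE : S ⊆ E j := by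
        intro x hx
        rw [hE]
        refine Set.mem_iInter.2 fun k => ?_
        have hxk : (T.toEquiv ^ (l₂ k)) x ∈ V k := Set.mem_iInter.1 hx k
        rw [Set.mem_preimage, hlj, hcj]
        constructor
        · exact hxk.2
        · intro hmem
          rcases Set.mem_iUnion.1 (greedyU_subset_iUnion T c l Base j k hmem) with ⟨j', hj'⟩
          exact Set.disjoint_left.1 (hRdisj k j') hxk.1 hj'
      have hSsubR : S ⊆ R ⟨0, hm⟩ := by
        intro x hx
        have hxk := Set.mem_iInter.1 hx ⟨0, hm⟩
        rw [Set.mem_preimage, hl₂0] at hxk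
        simp only [zpow_zero, Equiv.Perm.coe_one, id_eq] at hxk
        exact hxk.1
      have hEImg0 : E j ⊆ Img j ⟨0, hm⟩ := by
        intro x hx
        show x ∈ (T.toEquiv ^ (l j ⟨0, hm⟩)) '' E j
        rw [hl0 j]
        simpa using hx
      have hSempty : S ⊆ (∅ : Set X) := fun x hx =>
        (Set.disjoint_left.1 (hRdisj ⟨0, hm⟩ j) (hSsubR hx) (hEImg0 (hSsubE hx)))
      exact hS0 (le_antisymm (le_of_le_of_eq (measure_mono hSempty) measure_empty) zero_le)
    -- assembly of the stacking
    set lev : Fin m → ℕ → Fin h → Set X :=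
      fun k j r => (T.toEquiv ^ ((Ts k).col (c j k)).n r) '' Img j k with hlevdef
    have hlevsub : ∀ k j r, lev k j r ⊆ ((Ts k).col (c j k)).level r := by
      intro k j r
      exact Set.image_mono (hImgBase j k)
    have hlevTs : ∀ k j r, lev k j r ⊆ (Ts k).carrier := fun k j r =>
      (hlevsub k j r).trans ((Column.level_subset_carrier _ r).trans
        (TArray.col_carrier_subset _ _))
    have master : ∀ (k k' : Fin m) (j j' : ℕ) (r r' : Fin h),
        (k ≠ k' ∨ j ≠ j' ∨ r ≠ r') → Disjoint (lev k j r) (lev k' j' r') := by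
      intro k k' j j' r r' hcase
      by_cases hkk : k = k'
      · subst hkk
        by_cases hjj : j = j'
        · subst hjj
          have hrr : r ≠ r' := by tauto
          exact Disjoint.mono (hlevsub k j r) (hlevsub k j r') (((Ts k).col (c j k)).disj hrr)
        · by_cases hccs : c j k = c j' k
          · by_cases hrr : r = r'
            · subst hrr
              have hlev2 : lev k j' r = (T.toEquiv ^ ((Ts k).col (c j k)).n r) '' Img j' k := by
                simp only [hlevdef]
                rw [hccs]
              rw [hlev2]
              exact Set.disjoint_image_of_injective (Equiv.injective _) (hImgdisj k hjj)
            · have h2 : lev k j' r' ⊆ ((Ts k).col (c j k)).level r' := by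
                have hlev2 : lev k j' r' = (T.toEquiv ^ ((Ts k).col (c j k)).n r') '' Img j' k := by
                  simp only [hlevdef]
                  rw [hccs]
                rw [hlev2]
                exact Set.image_mono ((hImgBase j' k).trans (by rw [hccs]))
              exact Disjoint.mono (hlevsub k j r) h2 (((Ts k).col (c j k)).disj hrr)
          · exact Disjoint.mono ((hlevsub k j r).trans (Column.level_subset_carrier _ r))
              ((hlevsub k j' r').trans (Column.level_subset_carrier _ r')) ((Ts k).disj hccs)
      · exact Disjoint.mono (hlevTs k j r) (hlevTs k' j' r') (hdisj hkk)
    -- index bookkeeping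
    set kOf : Fin (m*h) → Fin m :=
      fun p => ⟨(p : ℕ) / h, (Nat.div_lt_iff_lt_mul hp).2 p.isLt⟩ with hkOfdef
    set rOf : Fin (m*h) → Fin h := fun p => ⟨(p : ℕ) % h, Nat.mod_lt _ hp⟩ with hrOfdef
    have hkOfc : ∀ (k : Fin m) (r : Fin h),
        kOf ⟨(k : ℕ) * h + (r : ℕ), concat_index_lt k r⟩ = k ∧
        rOf ⟨(k : ℕ) * h + (r : ℕ), concat_index_lt k r⟩ = r := by
      intro k r
      constructor
      · refine Fin.ext ?_
        show ((k : ℕ) * h + (r : ℕ)) / h = (k : ℕ)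
        calc ((k : ℕ) * h + (r : ℕ)) / h = (h * (k : ℕ) + (r : ℕ)) / h := by rw [Nat.mul_comm]
          _ = (k : ℕ) + (r : ℕ) / h := Nat.mul_add_div hp _ _
          _ = (k : ℕ) := by rw [Nat.div_eq_of_lt r.isLt, Nat.add_zero]
      · refine Fin.ext ?_
        show ((k : ℕ) * h + (r : ℕ)) % h = (r : ℕ)
        calc ((k : ℕ) * h + (r : ℕ)) % h = (h * (k : ℕ) + (r : ℕ)) % h := by rw [Nat.mul_comm]
          _ = (r : ℕ) % h := Nat.mul_add_mod _ _ _
          _ = (r : ℕ) := Nat.mod_eq_of_lt r.isLt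
    set nA : ℕ → Fin (m*h) → ℤ :=
      fun i p => l i (kOf p) + ((Ts (kOf p)).col (c i (kOf p))).n (rOf p) with hnAdef
    have hnA0 : ∀ (i : ℕ) (p : Fin (m*h)), (p : ℕ) = 0 → nA i p = 0 := by
      intro i p hp0
      have hk : kOf p = ⟨0, hm⟩ := Fin.ext (by show (p : ℕ) / h = 0; rw [hp0]; exact Nat.zero_div h)
      have hr : rOf p = ⟨0, hp⟩ := Fin.ext (by show (p : ℕ) % h = 0; rw [hp0]; exact Nat.zero_mod h)
      simp only [hnAdef]
      rw [hk, hr, hl0 i, ((Ts ⟨0, hm⟩).col (c i ⟨0, hm⟩)).n_zero ⟨0, hp⟩ rfl]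
      simp
    have hAlevel : ∀ (i : ℕ) (p : Fin (m*h)),
        (T.toEquiv ^ nA i p) '' E i = lev (kOf p) i (rOf p) := by
      intro i p
      simp only [hnAdef]
      rw [add_comm, ← djs_zpow_image_image]
    have hAcol_disj : ∀ i : ℕ, Pairwise (Function.onFun Disjoint
        (fun p : Fin (m*h) => (T.toEquiv ^ nA i p) '' E i)) := by
      intro i p p' hne
      show Disjoint ((T.toEquiv ^ nA i p) '' E i) ((T.toEquiv ^ nA i p') '' E i)
      rw [hAlevel i p, hAlevel i p']
      refine master _ _ _ _ _ _ ?_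
      by_cases hk : kOf p = kOf p'
      · refine Or.inr (Or.inr fun hr => hne ?_)
        have e1 : (p : ℕ) / h = (p' : ℕ) / h := congrArg Fin.val hk
        have e2 : (p : ℕ) % h = (p' : ℕ) % h := congrArg Fin.val hr
        refine Fin.ext ?_
        have e3 : (p : ℕ) = h * ((p : ℕ) / h) + (p : ℕ) % h := (Nat.div_add_mod _ _).symm
        rw [e3, e1, e2, Nat.div_add_mod]
      · exact Or.inl hk
    have hA_arr_disj : Pairwise (Function.onFun Disjoint
        (fun i : ℕ => ⋃ p : Fin (m*h), (T.toEquiv ^ nA i p) '' E i)) := by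
      intro i i' hne
      show Disjoint (⋃ p : Fin (m*h), (T.toEquiv ^ nA i p) '' E i)
        (⋃ p : Fin (m*h), (T.toEquiv ^ nA i' p) '' E i')
      rw [Set.iUnion_congr (hAlevel i), Set.iUnion_congr (hAlevel i')]
      rw [Set.disjoint_iUnion_left]
      intro p
      rw [Set.disjoint_iUnion_right]
      intro p'
      exact master _ _ _ _ _ _ (Or.inr (Or.inl hne))
    have hrefcol_disj : ∀ (k : Fin m) (j : ℕ), Pairwise (Function.onFun Disjoint
        (fun r : Fin h => (T.toEquiv ^ ((Ts k).col (c j k)).n r) '' Img j k)) := by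
      intro k j r r' hrr
      exact master k k j j r r' (Or.inr (Or.inr hrr))
    have href_arr_disj : ∀ k : Fin m, Pairwise (Function.onFun Disjoint
        (fun j : ℕ => ⋃ r : Fin h, lev k j r)) := by
      intro k j j' hne
      show Disjoint (⋃ r : Fin h, lev k j r) (⋃ r : Fin h, lev k j' r)
      rw [Set.disjoint_iUnion_left]
      intro r
      rw [Set.disjoint_iUnion_right]
      intro r'
      exact master _ _ _ _ _ _ (Or.inr (Or.inl hne))
    have hrefcross : ∀ i : ℕ, Pairwise (Function.onFun Disjoint
        (fun k : Fin m => ⋃ r : Fin h, lev k i r)) := by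
      intro i k k' hkk
      show Disjoint (⋃ r : Fin h, lev k i r) (⋃ r : Fin h, lev k' i r)
      rw [Set.disjoint_iUnion_left]
      intro r
      rw [Set.disjoint_iUnion_right]
      intro r'
      exact master _ _ _ _ _ _ (Or.inl hkk)
    -- the inclusion of the original carriers up to a null set
    have hINC : ∀ k : Fin m, (Ts k).carrier ⊆ (⋃ j, ⋃ r, lev k j r) ∪
        (⋃ cc2 : ℕ, ⋃ r : Fin h, (T.toEquiv ^ ((Ts k).col cc2).n r) '' R k) := by
      intro k x hx
      simp only [TArray.carrier, Column.carrier, Column.level] at hx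
      rcases Set.mem_iUnion.1 hx with ⟨cc2, hcc2⟩
      rcases Set.mem_iUnion.1 hcc2 with ⟨r, hr⟩
      rcases hr with ⟨b, hb, rfl⟩
      by_cases hbR : b ∈ R k
      · exact Or.inr (Set.mem_iUnion.2 ⟨cc2, Set.mem_iUnion.2 ⟨r, Set.mem_image_of_mem _ hbR⟩⟩)
      · have hbbase : b ∈ (Ts k).base := hBaseSub k cc2 hb
        have hbU : b ∈ ⋃ j, Img j k := by
          by_contra hno
          exact hbR ⟨hbbase, hno⟩
        rcases Set.mem_iUnion.1 hbU with ⟨j, hbj⟩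
        have hcol : c j k = cc2 := by
          by_contra hnecol
          exact Set.disjoint_left.1 ((Ts k).disj hnecol)
            (Column.base_subset_carrier _ hp (hImgBase j k hbj))
            (Column.base_subset_carrier _ hp hb)
        refine Or.inl (Set.mem_iUnion.2 ⟨j, Set.mem_iUnion.2 ⟨r, ?_⟩⟩)
        have hlev2 : lev k j r = (T.toEquiv ^ ((Ts k).col cc2).n r) '' Img j k := by
          simp only [hlevdef]
          rw [hcol]
        rw [hlev2]
        exact Set.mem_image_of_mem _ hbj
    have hNnull : ∀ k : Fin m,
        μ (⋃ cc2 : ℕ, ⋃ r : Fin h, (T.toEquiv ^ ((Ts k).col cc2).n r) '' R k) = 0 :=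
      fun k => measure_iUnion_null fun cc2 => measure_iUnion_null fun r => by
        rw [djs_zpow_measure_image T hT (hRmeas k)]
        exact hRnull k
    have hrefsub : ∀ k : Fin m, (⋃ j, ⋃ r, lev k j r) ⊆ (Ts k).carrier :=
      fun k => Set.iUnion_subset fun j => Set.iUnion_subset fun r => hlevTs k j r
    have hrefmu : ∀ k : Fin m, μ (⋃ j, ⋃ r, lev k j r) = μ ((Ts k).carrier) := by
      intro k
      refine le_antisymm (measure_mono (hrefsub k)) ?_
      calc μ ((Ts k).carrier)
          ≤ μ ((⋃ j, ⋃ r, lev k j r) ∪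
              (⋃ cc2 : ℕ, ⋃ r : Fin h, (T.toEquiv ^ ((Ts k).col cc2).n r) '' R k)) :=
            measure_mono (hINC k)
        _ ≤ μ (⋃ j, ⋃ r, lev k j r) +
              μ (⋃ cc2 : ℕ, ⋃ r : Fin h, (T.toEquiv ^ ((Ts k).col cc2).n r) '' R k) :=
            measure_union_le _ _
        _ = μ (⋃ j, ⋃ r, lev k j r) := by rw [hNnull k, add_zero]
    have hlev_subA : ∀ (k : Fin m) (j : ℕ) (r : Fin h),
        lev k j r ⊆ ⋃ i : ℕ, ⋃ p : Fin (m*h), lev (kOf p) i (rOf p) := by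
      intro k j r
      refine Set.subset_iUnion_of_subset j (Set.subset_iUnion_of_subset
        ⟨(k : ℕ) * h + (r : ℕ), concat_index_lt k r⟩ ?_)
      rw [(hkOfc k r).1, (hkOfc k r).2]
    have hAcarU : (⋃ i : ℕ, ⋃ p : Fin (m*h), lev (kOf p) i (rOf p))
        = ⋃ k, ⋃ j, ⋃ r, lev k j r := by
      apply Set.Subset.antisymm
      · refine Set.iUnion_subset fun i => Set.iUnion_subset fun p => ?_
        exact Set.subset_iUnion_of_subset (kOf p) (Set.subset_iUnion_of_subset i
          (Set.subset_iUnion (fun r => lev (kOf p) i r) (rOf p)))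
      · exact Set.iUnion_subset fun k => Set.iUnion_subset fun j =>
          Set.iUnion_subset fun r => hlev_subA k j r
    have hfill : μ (⋃ i : ℕ, ⋃ p : Fin (m*h), (T.toEquiv ^ nA i p) '' E i)
        = μ (⋃ k, (Ts k).carrier) := by
      have h1 : (⋃ i : ℕ, ⋃ p : Fin (m*h), (T.toEquiv ^ nA i p) '' E i)
          = ⋃ i, ⋃ p, lev (kOf p) i (rOf p) :=
        Set.iUnion_congr fun i => Set.iUnion_congr fun p => hAlevel i p
      rw [h1, hAcarU]
      refine le_antisymm (measure_mono (Set.iUnion_mono fun k => hrefsub k)) ?_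
      calc μ (⋃ k, (Ts k).carrier)
          ≤ μ ((⋃ k, ⋃ j, ⋃ r, lev k j r) ∪
              (⋃ k, ⋃ cc2 : ℕ, ⋃ r : Fin h, (T.toEquiv ^ ((Ts k).col cc2).n r) '' R k)) := by
            refine measure_mono (Set.iUnion_subset fun k => ?_)
            intro x hx
            rcases hINC k hx with hx1 | hx2
            · exact Or.inl (Set.mem_iUnion.2 ⟨k, hx1⟩)
            · exact Or.inr (Set.mem_iUnion.2 ⟨k, hx2⟩)
        _ ≤ μ (⋃ k, ⋃ j, ⋃ r, lev k j r) +
              μ (⋃ k, ⋃ cc2 : ℕ, ⋃ r : Fin h, (T.toEquiv ^ ((Ts k).col cc2).n r) '' R k) :=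
            measure_union_le _ _
        _ = μ (⋃ k, ⋃ j, ⋃ r, lev k j r) := by
            rw [measure_iUnion_null fun k => hNnull k, add_zero]
    -- now build the data
    refine ⟨⟨fun i => ⟨E i, hEclopen i, nA i, hnA0 i, hAcol_disj i⟩, hA_arr_disj⟩,
      ⟨⟨fun k => ⟨fun j => ⟨Img j k, hImgClopen j k, ((Ts k).col (c j k)).n,
        ((Ts k).col (c j k)).n_zero, hrefcol_disj k j⟩, href_arr_disj k⟩,
        ?_, fun i _ => i, ?_, ?_⟩⟩⟩
    · -- refinements
      intro k
      constructor
      · intro j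
        exact ⟨c j k, rfl, hImgBase j k⟩
      · exact hrefmu k
    · -- concatenations
      intro i
      refine ⟨l i, ?_, fun k => rfl, hrefcross i, ?_⟩
      · intro k hk0
        have : k = ⟨0, hm⟩ := Fin.ext hk0
        rw [this]
        exact hl0 i
      · intro k r
        show nA i ⟨(k : ℕ) * h + (r : ℕ), concat_index_lt k r⟩ = _
        simp only [hnAdef]
        rw [(hkOfc k r).1, (hkOfc k r).2]
    · -- fill
      exact hfill
end

section
/- Let X be a fractured Polish space, μ a non-atomic Borel probability measure on X with full support, and T an ergodic measure-preserving homeomorphism of (X, μ). If 𝒯 is an array in X of height h, then for every integer m ≥ 1, 𝒯 has an extension of height hm. -/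
open MeasureTheory Set TopologicalSpace

variable {X : Type*} [TopologicalSpace X]

namespace DJS
set_option linter.unusedSectionVars false
variable {X : Type*} [TopologicalSpace X] [MeasurableSpace X] [BorelSpace X]
variable (T : X ≃ₜ X)

lemma coe_zpow_natCast (n : ℕ) : ⇑(T.toEquiv ^ (n : ℤ)) = (⇑T)^[n] := by
  rw [zpow_natCast, Equiv.Perm.coe_pow]
  rfl

lemma coe_zpow_neg_natCast (n : ℕ) : ⇑(T.toEquiv ^ (-(n : ℤ))) = (⇑T.symm)^[n] := by
  rw [zpow_neg, zpow_natCast, ← inv_pow, Equiv.Perm.coe_pow]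
  congr 1

lemma continuous_zpowT (z : ℤ) : Continuous ⇑(T.toEquiv ^ z) := by
  obtain ⟨n, rfl | rfl⟩ := z.eq_nat_or_neg
  · rw [coe_zpow_natCast]; exact T.continuous.iterate n
  · rw [coe_zpow_neg_natCast]; exact T.symm.continuous.iterate n

lemma zpow_symm_eq (z : ℤ) : ⇑(T.toEquiv ^ z).symm = ⇑(T.toEquiv ^ (-z)) := by
  rw [← Equiv.Perm.inv_def, ← zpow_neg]

lemma image_zpow_eq_preimage (z : ℤ) (E : Set X) :
    (T.toEquiv ^ z) '' E = (T.toEquiv ^ (-z)) ⁻¹' E := by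
  rw [Equiv.image_eq_preimage_symm, zpow_symm_eq]

lemma isClopen_image_zpow {E : Set X} (hE : IsClopen E) (z : ℤ) :
    IsClopen ((T.toEquiv ^ z) '' E) := by
  rw [image_zpow_eq_preimage]
  exact hE.preimage (continuous_zpowT T _)

lemma mp_zpow {μ : Measure X} (hT : MeasurePreserving T μ μ) (z : ℤ) :
    MeasurePreserving ⇑(T.toEquiv ^ z) μ μ := by
  obtain ⟨n, rfl | rfl⟩ := z.eq_nat_or_neg
  · rw [coe_zpow_natCast]; exact hT.iterate n
  · rw [coe_zpow_neg_natCast]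
    have : MeasurePreserving ⇑T.symm μ μ := by
      have := MeasurePreserving.symm (T.toMeasurableEquiv) (by exact hT)
      exact this
    exact this.iterate n

lemma measure_image_zpow {μ : Measure X} (hT : MeasurePreserving T μ μ) (z : ℤ)
    {E : Set X} (hE : MeasurableSet E) : μ ((T.toEquiv ^ z) '' E) = μ E := by
  rw [image_zpow_eq_preimage]
  exact (mp_zpow T hT (-z)).measure_preimage hE.nullMeasurableSet

lemma image_zpow_add (z w : ℤ) (E : Set X) :
    (T.toEquiv ^ (z + w)) '' E = (T.toEquiv ^ z) '' ((T.toEquiv ^ w) '' E) := by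
  rw [zpow_add, ← Set.image_comp]
  rfl

lemma image_zpow_natCast (j : ℕ) (E : Set X) :
    (T.toEquiv ^ (j : ℤ)) '' E = (⇑T)^[j] '' E := by rw [coe_zpow_natCast]

end DJS

namespace DJS
set_option linter.unusedSectionVars false

variable {X : Type*} [TopologicalSpace X] [MeasurableSpace X] [BorelSpace X]
variable {μ : MeasureTheory.Measure X} {T : X ≃ₜ X}

/-- Small clopen subsets exist. -/
lemma exists_small_clopen [T1Space X] [IsFiniteMeasure μ] [NullSingletonClass μ]
    (hXf : Fractured X) {V : Set X} (hV : IsClopen V) (hne : V.Nonempty)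
    {δ : ENNReal} (hδ : 0 < δ) :
    ∃ C : Set X, IsClopen C ∧ C ⊆ V ∧ C.Nonempty ∧ μ C ≤ δ := by
  obtain ⟨x, hx⟩ := hne
  obtain ⟨Bas, hBc, hBclopen, hBbasis⟩ := hXf
  have hFne : ({s ∈ Bas | x ∈ s}).Nonempty := by
    obtain ⟨s, hs, hxs, -⟩ := hBbasis.exists_subset_of_mem_open (Set.mem_univ x) isOpen_univ
    exact ⟨s, hs, hxs⟩
  obtain ⟨t, ht⟩ := Set.Countable.exists_eq_range (hBc.mono (Set.sep_subset _ _)) hFne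
  set W : ℕ → Set X := fun k => V ∩ ⋂ i ∈ Finset.range (k + 1), t i with hW
  have hWclopen : ∀ k, IsClopen (W k) := by
    intro k
    refine hV.inter (isClopen_biInter_finset fun i _ => ?_)
    have : t i ∈ {s ∈ Bas | x ∈ s} := ht ▸ Set.mem_range_self i
    exact hBclopen _ this.1
  have hxW : ∀ k, x ∈ W k := by
    intro k
    refine ⟨hx, Set.mem_iInter₂.2 fun i _ => ?_⟩
    have : t i ∈ {s ∈ Bas | x ∈ s} := ht ▸ Set.mem_range_self i
    exact this.2
  have hanti : Antitone W := by
    intro a b hab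
    refine Set.inter_subset_inter_right _ ?_
    intro y hy
    refine Set.mem_iInter₂.2 fun i hi => Set.mem_iInter₂.1 hy i ?_
    exact Finset.mem_range.2 (lt_of_lt_of_le (Finset.mem_range.1 hi) (by omega))
  have hInt : ⋂ k, W k = {x} := by
    apply Set.Subset.antisymm
    · intro y hy
      by_contra hyx
      have hopen : IsOpen ({y}ᶜ : Set X) := isOpen_compl_singleton
      have hxmem : x ∈ ({y}ᶜ : Set X) := by
        simp only [Set.mem_compl_iff, Set.mem_singleton_iff]
        intro h; exact hyx (by simpa [h] using rfl)
      obtain ⟨s, hs, hxs, hsub⟩ := hBbasis.exists_subset_of_mem_open hxmem hopen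
      have : s ∈ {s ∈ Bas | x ∈ s} := ⟨hs, hxs⟩
      rw [ht] at this
      obtain ⟨i, hi⟩ := this
      have hyW := Set.mem_iInter.1 hy i
      have hyti : y ∈ t i := Set.mem_iInter₂.1 hyW.2 i (Finset.self_mem_range_succ i)
      have : y ∈ ({y}ᶜ : Set X) := hsub (hi ▸ hyti)
      simp at this
    · intro y hy
      simp only [Set.mem_singleton_iff] at hy
      subst hy
      exact Set.mem_iInter.2 hxW
  have htend : Filter.Tendsto (fun k => μ (W k)) Filter.atTop (nhds (μ {x})) := by
    have := tendsto_measure_iInter_atTop (μ := μ) (s := W)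
      (fun k => (hWclopen k).isOpen.measurableSet.nullMeasurableSet) hanti
      ⟨0, measure_ne_top μ _⟩
    rwa [hInt] at this
  rw [measure_singleton] at htend
  have hev := htend.eventually_lt_const hδ
  obtain ⟨k, hk⟩ := hev.exists
  exact ⟨W k, hWclopen k, Set.inter_subset_left, ⟨x, hxW k⟩, hk.le⟩


lemma mp_symm (hT : MeasureTheory.MeasurePreserving T μ μ) :
    MeasureTheory.MeasurePreserving ⇑T.symm μ μ := by
  have := MeasureTheory.MeasurePreserving.symm (T.toMeasurableEquiv) (by exact hT)
  exact this

lemma f_iter_g_iter (u : ℕ) (y : X) : (⇑T)^[u] ((⇑T.symm)^[u] y) = y :=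
  (Function.LeftInverse.iterate T.apply_symm_apply u) y

lemma f_iter_g_iter_le {a b : ℕ} (h : a ≤ b) (y : X) :
    (⇑T)^[a] ((⇑T.symm)^[b] y) = (⇑T.symm)^[b - a] y := by
  conv_lhs => rw [show b = a + (b - a) by omega, Function.iterate_add_apply]
  exact f_iter_g_iter a _

lemma f_iter_g_iter_ge {a b : ℕ} (h : b ≤ a) (y : X) :
    (⇑T)^[a] ((⇑T.symm)^[b] y) = (⇑T)^[a - b] y := by
  conv_lhs => rw [show a = (a - b) + b by omega, Function.iterate_add_apply]
  rw [f_iter_g_iter b]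

lemma ae_backward_hit [MeasureTheory.IsFiniteMeasure μ]
    (hT : MeasureTheory.MeasurePreserving T μ μ)
    (hTerg : ∀ A : Set X, MeasurableSet A → T ⁻¹' A = A → μ A = 0 ∨ μ Aᶜ = 0)
    {C : Set X} (hC : MeasurableSet C) (hCpos : μ C ≠ 0) :
    ∀ᵐ y ∂μ, ∃ u : ℕ, (⇑T.symm)^[u] y ∈ C := by
  set D : Set X := {y | ∀ N : ℕ, ∃ u, N ≤ u ∧ (⇑T.symm)^[u] y ∈ C} with hDdef
  have hgmeas : ∀ u : ℕ, Measurable ((⇑T.symm)^[u]) := fun u =>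
    (mp_symm hT).measurable.iterate u
  have hD : MeasurableSet D := by
    have : D = ⋂ N : ℕ, ⋃ u : ℕ, ⋃ _ : N ≤ u, ((⇑T.symm)^[u]) ⁻¹' C := by
      ext y; simp [hDdef]
    rw [this]
    exact MeasurableSet.iInter fun N => MeasurableSet.iUnion fun u =>
      MeasurableSet.iUnion fun _ => (hgmeas u) hC
  have hinv : T ⁻¹' D = D := by
    ext y
    simp only [Set.mem_preimage, hDdef, Set.mem_setOf_eq]
    constructor
    · intro h N
      obtain ⟨u, hu, huC⟩ := h (N + 1)
      refine ⟨u - 1, by omega, ?_⟩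
      have : (⇑T.symm)^[u] (T y) = (⇑T.symm)^[u - 1] y := by
        conv_lhs => rw [show u = (u - 1) + 1 by omega, Function.iterate_add_apply]
        simp
      rwa [this] at huC
    · intro h N
      obtain ⟨u, hu, huC⟩ := h N
      refine ⟨u + 1, by omega, ?_⟩
      have : (⇑T.symm)^[u + 1] (T y) = (⇑T.symm)^[u] y := by
        rw [Function.iterate_add_apply]
        simp
      rwa [this]
  have hcons : MeasureTheory.Conservative ⇑T.symm μ := (mp_symm hT).conservative
  have hrec : ∀ᵐ x ∂μ, x ∈ C → x ∈ D := by
    filter_upwards [hcons.ae_mem_imp_frequently_image_mem hC.nullMeasurableSet] with x hx hxC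
    intro N
    obtain ⟨u, hu, huC⟩ := Filter.frequently_atTop.1 (hx hxC) N
    exact ⟨u, hu, huC⟩
  have hCD : μ C ≤ μ D := MeasureTheory.measure_mono_ae hrec
  have hDpos : μ D ≠ 0 := fun h => hCpos (le_antisymm (h ▸ hCD) zero_le)
  rcases hTerg D hD hinv with h | h
  · exact absurd h hDpos
  · have : ∀ᵐ y ∂μ, y ∈ D := by
      rw [MeasureTheory.ae_iff]
      exact h
    filter_upwards [this] with y hy
    obtain ⟨u, -, huC⟩ := hy 0
    exact ⟨u, huC⟩

lemma ae_forward_good [MeasureTheory.IsFiniteMeasure μ]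
    (hT : MeasureTheory.MeasurePreserving T μ μ)
    {C : Set X} (hC : MeasurableSet C) :
    ∀ᵐ y ∂μ, ∀ u : ℕ, (⇑T.symm)^[u] y ∈ C →
      ∃ j, 1 ≤ j ∧ (⇑T)^[j] ((⇑T.symm)^[u] y) ∈ C := by
  set Bad : Set X := C ∩ (⋃ j : ℕ, ⋃ _ : 1 ≤ j, ((⇑T)^[j]) ⁻¹' C)ᶜ with hBdef
  have hfmeas : ∀ u : ℕ, Measurable ((⇑T)^[u]) := fun u => hT.measurable.iterate u
  have hBmeas : MeasurableSet Bad :=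
    hC.inter (MeasurableSet.iUnion fun j => MeasurableSet.iUnion fun _ => (hfmeas j) hC).compl
  have hB0 : μ Bad = 0 := by
    have hcons : MeasureTheory.Conservative ⇑T μ := hT.conservative
    have hae : ∀ᵐ x ∂μ, x ∉ Bad := by
      filter_upwards [hcons.ae_mem_imp_frequently_image_mem hC.nullMeasurableSet] with x hx
      intro hxB
      obtain ⟨j, hj, hjC⟩ := Filter.frequently_atTop.1 (hx hxB.1) 1
      exact hxB.2 (Set.mem_iUnion.2 ⟨j, Set.mem_iUnion.2 ⟨hj, hjC⟩⟩)
    exact MeasureTheory.measure_eq_zero_iff_ae_notMem.2 hae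
  have hpre : ∀ u : ℕ, μ (((⇑T.symm)^[u]) ⁻¹' Bad) = 0 := by
    intro u
    rw [((mp_symm hT).iterate u).measure_preimage hBmeas.nullMeasurableSet]
    exact hB0
  have hun : μ (⋃ u : ℕ, ((⇑T.symm)^[u]) ⁻¹' Bad) = 0 :=
    MeasureTheory.measure_iUnion_null hpre
  filter_upwards [MeasureTheory.measure_eq_zero_iff_ae_notMem.1 hun] with y hy u huC
  by_contra hcon
  push_neg at hcon
  apply hy
  refine Set.mem_iUnion.2 ⟨u, ⟨huC, ?_⟩⟩
  intro hmem
  obtain ⟨j, hj⟩ := Set.mem_iUnion.1 hmem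
  obtain ⟨hj1, hjC⟩ := Set.mem_iUnion.1 hj
  exact (hcon j hj1) hjC


section Patterns

variable (T : X ≃ₜ X) (C V : Set X)

/-- The set of points of `C` whose first return to `C` happens at time `w` and whose
itinerary through `V` in the meantime is given by `F`. -/
def Epat (p : ℕ × Finset ℕ) : Set X :=
  if 1 ≤ p.1 ∧ p.2 ⊆ Finset.Ioo 0 p.1 then
    (C ∩ ((⇑T)^[p.1]) ⁻¹' C ∩ (⋂ j ∈ Finset.Ioo 0 p.1, ((⇑T)^[j]) ⁻¹' Cᶜ))
      ∩ (⋂ j ∈ Finset.Ioo 0 p.1, ((⇑T)^[j]) ⁻¹' (if j ∈ p.2 then V else Vᶜ))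
  else ∅

variable {T C V}

lemma Epat_subset {p : ℕ × Finset ℕ} : Epat T C V p ⊆ C := by
  rw [Epat]
  split
  · intro x hx
    exact hx.1.1.1
  · exact Set.empty_subset _

lemma isClopen_Epat (hC : IsClopen C) (hV : IsClopen V) (p : ℕ × Finset ℕ) :
    IsClopen (Epat T C V p) := by
  rw [Epat]
  split
  · refine IsClopen.inter (IsClopen.inter (hC.inter ?_) ?_) ?_
    · exact hC.preimage (T.continuous.iterate _)
    · exact isClopen_biInter_finset fun j _ => hC.compl.preimage (T.continuous.iterate _)
    · refine isClopen_biInter_finset fun j _ => ?_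
      split
      · exact hV.preimage (T.continuous.iterate _)
      · exact hV.compl.preimage (T.continuous.iterate _)
  · exact isClopen_empty

lemma mem_Epat_iff {x : X} {w : ℕ} {F : Finset ℕ} (hg : 1 ≤ w ∧ F ⊆ Finset.Ioo 0 w) :
    x ∈ Epat T C V (w, F) ↔
      x ∈ C ∧ (⇑T)^[w] x ∈ C ∧ (∀ j, 0 < j → j < w → (⇑T)^[j] x ∉ C) ∧
        (∀ j, 0 < j → j < w → ((⇑T)^[j] x ∈ V ↔ j ∈ F)) := by
  rw [Epat, if_pos hg]
  simp only [Set.mem_inter_iff, Set.mem_iInter, Finset.mem_Ioo, Set.mem_preimage,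
    Set.mem_compl_iff]
  constructor
  · rintro ⟨⟨⟨h1, h2⟩, h3⟩, h4⟩
    refine ⟨h1, h2, fun j hj1 hj2 => h3 j ⟨hj1, hj2⟩, fun j hj1 hj2 => ?_⟩
    have h5 := h4 j ⟨hj1, hj2⟩
    by_cases hjF : j ∈ F
    · rw [if_pos hjF] at h5
      exact ⟨fun _ => hjF, fun _ => h5⟩
    · rw [if_neg hjF] at h5
      exact ⟨fun hv => absurd hv h5, fun h => absurd h hjF⟩
  · rintro ⟨h1, h2, h3, h4⟩
    refine ⟨⟨⟨h1, h2⟩, fun j hj => h3 j hj.1 hj.2⟩, fun j hj => ?_⟩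
    by_cases hjF : j ∈ F
    · rw [if_pos hjF]
      exact (h4 j hj.1 hj.2).2 hjF
    · rw [if_neg hjF]
      exact fun hv => hjF ((h4 j hj.1 hj.2).1 hv)

lemma Epat_good {p : ℕ × Finset ℕ} {x : X} (hx : x ∈ Epat T C V p) :
    1 ≤ p.1 ∧ p.2 ⊆ Finset.Ioo 0 p.1 := by
  by_contra h
  rw [Epat, if_neg h] at hx
  exact hx

/-- Different patterns are disjoint. -/
lemma Epat_disjoint {p p' : ℕ × Finset ℕ} (hne : p ≠ p') :
    Disjoint (Epat T C V p) (Epat T C V p') := by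
  rw [Set.disjoint_left]
  intro x hx hx'
  obtain ⟨w, F⟩ := p
  obtain ⟨w', F'⟩ := p'
  have hg := Epat_good hx
  have hg' := Epat_good hx'
  rw [mem_Epat_iff hg] at hx
  rw [mem_Epat_iff hg'] at hx'
  simp only at hg hg'
  have hww' : w = w' := by
    by_contra hne'
    rcases Nat.lt_or_ge w w' with h | h
    · exact (hx'.2.2.1 w hg.1 h) hx.2.1
    · exact (hx.2.2.1 w' hg'.1 (lt_of_le_of_ne h (Ne.symm hne'))) hx'.2.1
  subst hww'
  have hFF' : F = F' := by
    ext j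
    by_cases hj : 0 < j ∧ j < w
    · rw [← hx.2.2.2 j hj.1 hj.2, ← hx'.2.2.2 j hj.1 hj.2]
    · constructor
      · intro hjF
        have := Finset.mem_Ioo.1 (hg.2 hjF)
        exact absurd ⟨this.1, this.2⟩ hj
      · intro hjF
        have := Finset.mem_Ioo.1 (hg'.2 hjF)
        exact absurd ⟨this.1, this.2⟩ hj
  exact hne (by rw [hFF'])

/-- Key disjointness: translated pattern sets are pairwise disjoint. -/
lemma Epat_piece_disjoint
    {p p' : ℕ × Finset ℕ} {s s' : ℕ} (hs : s ∈ insert 0 p.2) (hs' : s' ∈ insert 0 p'.2)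
    (hne : (p, s) ≠ (p', s')) :
    Disjoint ((⇑T)^[s] '' Epat T C V p) ((⇑T)^[s'] '' Epat T C V p') := by
  -- reduce to the case s ≤ s' by symmetry
  wlog hss' : s ≤ s' generalizing p p' s s'
  · exact (this hs' hs (fun h => hne (by cases h; rfl)) (by omega)).symm
  rw [Set.disjoint_left]
  rintro y ⟨x, hx, rfl⟩ ⟨x', hx', hyy⟩
  have hg := Epat_good hx
  have hg' := Epat_good hx'
  -- s < p.1 and s' < p'.1
  have hsw : s < p.1 := by
    rcases Finset.mem_insert.1 hs with h | h
    · omega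
    · exact (Finset.mem_Ioo.1 (hg.2 h)).2
  have hsw' : s' < p'.1 := by
    rcases Finset.mem_insert.1 hs' with h | h
    · omega
    · exact (Finset.mem_Ioo.1 (hg'.2 h)).2
  -- x = T^[s'-s] x'
  have hxx' : x = (⇑T)^[s' - s] x' := by
    have : (⇑T)^[s] x = (⇑T)^[s] ((⇑T)^[s' - s] x') := by
      rw [← Function.iterate_add_apply, show s + (s' - s) = s' by omega]
      exact hyy.symm
    exact Function.Injective.iterate T.injective s this
  rcases Nat.eq_zero_or_pos (s' - s) with hd | hd
  · -- then s = s', x = x', and patterns are equal, contradiction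
    have hss : s = s' := by omega
    rw [hd] at hxx'
    simp only [Function.iterate_zero, id] at hxx'
    subst hxx'
    subst hss
    rcases eq_or_ne p p' with rfl | hpp
    · exact hne rfl
    · exact Set.disjoint_left.1 (Epat_disjoint hpp) hx hx'
  · -- x ∈ C is an intermediate visit of x' to C, contradiction
    obtain ⟨w', F'⟩ := p'
    rw [mem_Epat_iff hg'] at hx'
    refine hx'.2.2.1 (s' - s) hd (by omega) ?_
    rw [← hxx']
    exact Epat_subset hx

end Patterns

section Groups

variable (T : X ≃ₜ X) (C V : Set X) (m : ℕ)

/-- The visit-time set of a pattern. -/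
def patS (p : ℕ × Finset ℕ) : Finset ℕ := insert 0 p.2

/-- Number of visits. -/
def patL (p : ℕ × Finset ℕ) : ℕ := (patS p).card

/-- Enumeration of the visit times of a pattern. -/
noncomputable def enumN (p : ℕ × Finset ℕ) (j : ℕ) : ℕ :=
  if h : j < patL p then (((patS p).equivFin.symm ⟨j, h⟩ : {x // x ∈ patS p}) : ℕ) else 0

lemma enumN_mem {p : ℕ × Finset ℕ} {j : ℕ} (h : j < patL p) : enumN p j ∈ patS p := by
  rw [enumN, dif_pos h]
  exact ((patS p).equivFin.symm ⟨j, h⟩).2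

lemma enumN_inj {p : ℕ × Finset ℕ} {j j' : ℕ} (h : j < patL p) (h' : j' < patL p)
    (heq : enumN p j = enumN p j') : j = j' := by
  simp only [enumN] at heq
  rw [dif_pos h, dif_pos h'] at heq
  have := (patS p).equivFin.symm.injective (Subtype.ext heq)
  exact congrArg Fin.val this

lemma enumN_surj {p : ℕ × Finset ℕ} {s : ℕ} (hs : s ∈ patS p) :
    ∃ j, j < patL p ∧ enumN p j = s := by
  refine ⟨((patS p).equivFin ⟨s, hs⟩ : Fin (patS p).card), ((patS p).equivFin ⟨s, hs⟩).2, ?_⟩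
  rw [enumN, dif_pos]
  · congr 1
    rw [show (⟨((patS p).equivFin ⟨s, hs⟩ : Fin (patS p).card),
        ((patS p).equivFin ⟨s, hs⟩).2⟩ : Fin (patS p).card)
      = (patS p).equivFin ⟨s, hs⟩ from rfl, Equiv.symm_apply_apply]
  · exact ((patS p).equivFin ⟨s, hs⟩).2

/-- Whether the `q`-th group of a pattern exists. -/
def gOK (i : (ℕ × Finset ℕ) × ℕ) : Prop := (i.2 + 1) * m ≤ patL i.1

instance : ∀ i, Decidable (gOK m i) := fun _ => Nat.decLe _ _

/-- The base of the `q`-th group of pattern `p`. -/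
noncomputable def gbase (i : (ℕ × Finset ℕ) × ℕ) : Set X :=
  if gOK m i then (⇑T)^[enumN i.1 (i.2 * m)] '' Epat T C V i.1 else ∅

/-- The offsets of the `q`-th group of pattern `p`. -/
noncomputable def ga (i : (ℕ × Finset ℕ) × ℕ) (k : Fin m) : ℤ :=
  if gOK m i then (enumN i.1 (i.2 * m + (k : ℕ)) : ℤ) - (enumN i.1 (i.2 * m) : ℤ) else 0

variable {T C V m}

lemma isClopen_image_iterate {E : Set X} (hE : IsClopen E) (j : ℕ) :
    IsClopen ((⇑T)^[j] '' E) := by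
  rw [← image_zpow_natCast]
  exact isClopen_image_zpow T hE _

lemma measure_image_iterate {μ : MeasureTheory.Measure X}
    (hT : MeasureTheory.MeasurePreserving T μ μ) (j : ℕ) {E : Set X}
    (hE : MeasurableSet E) : μ ((⇑T)^[j] '' E) = μ E := by
  rw [← image_zpow_natCast]
  exact measure_image_zpow T hT _ hE

lemma ga_zero (i : (ℕ × Finset ℕ) × ℕ) (k : Fin m) (hk : (k : ℕ) = 0) :
    ga m i k = 0 := by
  rw [ga, hk]
  split <;> simp

lemma gOK_index_lt {i : (ℕ × Finset ℕ) × ℕ} (h : gOK m i) (k : Fin m) :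
    i.2 * m + (k : ℕ) < patL i.1 := by
  have hk := k.isLt
  have hexp : (i.2 + 1) * m = i.2 * m + m := by ring
  rw [gOK, hexp] at h
  omega

/-- The pieces of a group. -/
lemma gpiece_eq {i : (ℕ × Finset ℕ) × ℕ} (h : gOK m i) (k : Fin m) :
    (T.toEquiv ^ ga m i k) '' gbase T C V m i
      = (⇑T)^[enumN i.1 (i.2 * m + (k : ℕ))] '' Epat T C V i.1 := by
  rw [gbase, if_pos h, ga, if_pos h, ← image_zpow_natCast, ← image_zpow_add,
    sub_add_cancel, image_zpow_natCast]

lemma gpiece_eq_empty {i : (ℕ × Finset ℕ) × ℕ} (h : ¬ gOK m i) (k : Fin m) :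
    (T.toEquiv ^ ga m i k) '' gbase T C V m i = ∅ := by
  rw [gbase, if_neg h]
  simp

lemma nat_group_index_inj {q k q' k' : ℕ} (hk : k < m) (hk' : k' < m)
    (h : q * m + k = q' * m + k') : q = q' ∧ k = k' := by
  have hq : q = q' := by
    have h1 : (q * m + k) / m = q := by
      rw [mul_comm q m, Nat.mul_add_div (by omega)]
      simp [Nat.div_eq_of_lt hk]
    have h2 : (q' * m + k') / m = q' := by
      rw [mul_comm q' m, Nat.mul_add_div (by omega)]
      simp [Nat.div_eq_of_lt hk']
    rw [← h1, ← h2, h]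
  subst hq
  omega

/-- Group pieces are pairwise disjoint. -/
lemma gpiece_disjoint {i i' : (ℕ × Finset ℕ) × ℕ} {k k' : Fin m}
    (hne : (i, k) ≠ (i', k')) :
    Disjoint ((T.toEquiv ^ ga m i k) '' gbase T C V m i)
      ((T.toEquiv ^ ga m i' k') '' gbase T C V m i') := by
  by_cases h : gOK m i
  · by_cases h' : gOK m i'
    · rw [gpiece_eq h, gpiece_eq h']
      refine Epat_piece_disjoint (enumN_mem (gOK_index_lt h k))
        (enumN_mem (gOK_index_lt h' k')) ?_
      intro hcon
      obtain ⟨p, q⟩ := i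
      obtain ⟨p', q'⟩ := i'
      have hp : p = p' := (Prod.ext_iff.1 hcon).1
      have hs : enumN p (q * m + (k : ℕ)) = enumN p' (q' * m + (k' : ℕ)) :=
        (Prod.ext_iff.1 hcon).2
      subst hp
      have hj : q * m + (k : ℕ) = q' * m + (k' : ℕ) :=
        enumN_inj (gOK_index_lt h k) (gOK_index_lt h' k') hs
      obtain ⟨hq, hk⟩ := nat_group_index_inj k.isLt k'.isLt hj
      subst hq
      apply hne
      rw [Fin.val_injective hk]
    · rw [gpiece_eq_empty h']
      exact disjoint_bot_right
  · rw [gpiece_eq_empty h]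
    exact disjoint_bot_left

/-- Pattern pieces lie in `V`. -/
lemma piece_sub_V (hCV : C ⊆ V) {p : ℕ × Finset ℕ} {s : ℕ} (hs : s ∈ patS p) :
    (⇑T)^[s] '' Epat T C V p ⊆ V := by
  rintro y ⟨x, hx, rfl⟩
  have hg := Epat_good hx
  rcases Finset.mem_insert.1 hs with rfl | hsF
  · simpa using hCV (Epat_subset hx)
  · have hIoo := Finset.mem_Ioo.1 (hg.2 hsF)
    obtain ⟨w, F⟩ := p
    rw [mem_Epat_iff hg] at hx
    exact (hx.2.2.2 s hIoo.1 hIoo.2).2 hsF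

/-- Group pieces lie in `V`. -/
lemma gpiece_sub_V (hCV : C ⊆ V) (i : (ℕ × Finset ℕ) × ℕ) (k : Fin m) :
    (T.toEquiv ^ ga m i k) '' gbase T C V m i ⊆ V := by
  by_cases h : gOK m i
  · rw [gpiece_eq h]
    exact piece_sub_V hCV (enumN_mem (gOK_index_lt h k))
  · rw [gpiece_eq_empty h]
    exact Set.empty_subset _

end Groups

section Cover

variable {T : X ≃ₜ X} {μ : MeasureTheory.Measure X}

/-- Almost every point of `V` lies in a translated pattern set. -/
lemma Epat_cover [MeasureTheory.IsFiniteMeasure μ]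
    (hT : MeasureTheory.MeasurePreserving T μ μ)
    (hTerg : ∀ A : Set X, MeasurableSet A → T ⁻¹' A = A → μ A = 0 ∨ μ Aᶜ = 0)
    {C V : Set X} (hC : IsClopen C) (hCpos : μ C ≠ 0) (hCV : C ⊆ V) :
    ∀ᵐ y ∂μ, y ∈ V →
      ∃ p : ℕ × Finset ℕ, ∃ s ∈ patS p, y ∈ (⇑T)^[s] '' Epat T C V p := by
  classical
  have hCm : MeasurableSet C := hC.isOpen.measurableSet
  filter_upwards [ae_backward_hit hT hTerg hCm hCpos, ae_forward_good hT hCm]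
    with y H1 H2 hyV
  set u₀ := Nat.find H1 with hu₀def
  have hxC : (⇑T.symm)^[u₀] y ∈ C := Nat.find_spec H1
  set x := (⇑T.symm)^[u₀] y with hxdef
  obtain ⟨j₁, hj₁, hj₁C⟩ := H2 u₀ hxC
  have hwex : ∃ j, 1 ≤ j ∧ (⇑T)^[j] x ∈ C := ⟨j₁, hj₁, hj₁C⟩
  set w := Nat.find hwex with hwdef
  obtain ⟨hw1, hwC⟩ : 1 ≤ w ∧ (⇑T)^[w] x ∈ C := Nat.find_spec hwex
  -- u₀ < w
  have hu₀w : u₀ < w := by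
    by_contra hcon
    push_neg at hcon  -- w ≤ u₀
    have h1 : (⇑T)^[w] x = (⇑T.symm)^[u₀ - w] y := f_iter_g_iter_le hcon y
    have h2 : u₀ - w < u₀ := by omega
    exact Nat.find_min H1 h2 (h1 ▸ hwC)
  set F : Finset ℕ := (Finset.Ioo 0 w).filter (fun j => (⇑T)^[j] x ∈ V) with hFdef
  have hg : 1 ≤ w ∧ F ⊆ Finset.Ioo 0 w := ⟨hw1, Finset.filter_subset _ _⟩
  have hxE : x ∈ Epat T C V (w, F) := by
    rw [mem_Epat_iff hg]
    refine ⟨hxC, hwC, fun j hj0 hjw hjC => ?_, fun j hj0 hjw => ?_⟩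
    · exact Nat.find_min hwex hjw ⟨hj0, hjC⟩
    · simp only [hFdef, Finset.mem_filter, Finset.mem_Ioo]
      constructor
      · intro hv; exact ⟨⟨hj0, hjw⟩, hv⟩
      · intro hv; exact hv.2
  refine ⟨(w, F), u₀, ?_, x, hxE, f_iter_g_iter u₀ y⟩
  rcases Nat.eq_zero_or_pos u₀ with h0 | hpos
  · rw [patS, h0]
    exact Finset.mem_insert_self 0 _
  · rw [patS]
    refine Finset.mem_insert_of_mem ?_
    simp only [hFdef, Finset.mem_filter, Finset.mem_Ioo]
    refine ⟨⟨hpos, hu₀w⟩, ?_⟩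
    rw [f_iter_g_iter u₀ y]
    exact hyV

end Cover

section Stage

variable {μ : MeasureTheory.Measure X} {T : X ≃ₜ X}

lemma stage [MeasureTheory.IsProbabilityMeasure μ] [MeasureTheory.NullSingletonClass μ] [T1Space X]
    (hXf : Fractured X)
    (hfull : ∀ U : Set X, IsOpen U → U.Nonempty → μ U ≠ 0)
    (hT : MeasureTheory.MeasurePreserving T μ μ)
    (hTerg : ∀ A : Set X, MeasurableSet A → T ⁻¹' A = A → μ A = 0 ∨ μ Aᶜ = 0)
    (m : ℕ) (hm : 1 ≤ m) {V : Set X} (hV : IsClopen V)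
    {ε : ENNReal} (hε0 : ε ≠ 0) (hεtop : ε ≠ ⊤) :
    ∃ (E : ℕ → Set X) (a : ℕ → Fin m → ℤ) (N : ℕ),
      (∀ t, IsClopen (E t)) ∧
      (∀ t, N ≤ t → E t = ∅) ∧
      (∀ t (k : Fin m), (k : ℕ) = 0 → a t k = 0) ∧
      (∀ t (k : Fin m), (T.toEquiv ^ a t k) '' E t ⊆ V) ∧
      (∀ t (k : Fin m) t' (k' : Fin m), (t, k) ≠ (t', k') →
        Disjoint ((T.toEquiv ^ a t k) '' E t) ((T.toEquiv ^ a t' k') '' E t')) ∧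
      μ (V \ ⋃ t, ⋃ k, (T.toEquiv ^ a t k) '' E t) ≤ ((m : ENNReal) + 1) * ε := by
  classical
  rcases Set.eq_empty_or_nonempty V with rfl | hne
  · refine ⟨fun _ => ∅, fun _ _ => 0, 0, fun _ => isClopen_empty, fun _ _ => rfl,
      fun _ _ _ => rfl, fun t k => by simp, fun t k t' k' _ => by simp, ?_⟩
    simp
  obtain ⟨C, hC, hCV, hCne, hCle⟩ :=
    exists_small_clopen (μ := μ) hXf hV hne (pos_iff_ne_zero.2 hε0)
  have hCpos : μ C ≠ 0 := hfull C hC.isOpen hCne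
  have hm0 : 0 < m := hm
  set piece : ((ℕ × Finset ℕ) × ℕ) → Fin m → Set X :=
    fun i k => (T.toEquiv ^ ga m i k) '' gbase T C V m i with hpiece
  have hgbase_clopen : ∀ i, IsClopen (gbase T C V m i) := by
    intro i
    rw [gbase]
    split
    · exact isClopen_image_iterate (isClopen_Epat hC hV _) _
    · exact isClopen_empty
  have hpiece_clopen : ∀ i k, IsClopen (piece i k) := fun i k =>
    isClopen_image_zpow T (hgbase_clopen i) _
  -- almost-everywhere coverage by all pattern pieces
  have hcover : μ (V \ ⋃ p : ℕ × Finset ℕ, ⋃ s ∈ patS p, (⇑T)^[s] '' Epat T C V p) = 0 := by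
    rw [MeasureTheory.measure_eq_zero_iff_ae_notMem]
    filter_upwards [Epat_cover hT hTerg hC hCpos hCV] with y hy
    rintro ⟨hyV, hynot⟩
    obtain ⟨p, s, hs, hmem⟩ := hy hyV
    exact hynot (Set.mem_iUnion.2 ⟨p, Set.mem_iUnion₂.2 ⟨s, hs, hmem⟩⟩)
  -- total measure of pattern bases
  have hEsum : ∑' p : ℕ × Finset ℕ, μ (Epat T C V p) ≤ μ C := by
    rw [← MeasureTheory.measure_iUnion (fun p p' hpp' => Epat_disjoint hpp')
      (fun p => (isClopen_Epat hC hV p).isOpen.measurableSet)]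
    exact MeasureTheory.measure_mono (Set.iUnion_subset fun p => Epat_subset)
  -- the leftover pieces
  set Left := ⋃ p : ℕ × Finset ℕ,
      ⋃ j ∈ Finset.Ico (m * (patL p / m)) (patL p), (⇑T)^[enumN p j] '' Epat T C V p
    with hLeftdef
  have hLeft : μ Left ≤ (m : ENNReal) * μ C := by
    have step1 : μ Left ≤ ∑' p : ℕ × Finset ℕ,
        μ (⋃ j ∈ Finset.Ico (m * (patL p / m)) (patL p), (⇑T)^[enumN p j] '' Epat T C V p) :=
      MeasureTheory.measure_iUnion_le _
    have step2 : ∀ p : ℕ × Finset ℕ,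
        μ (⋃ j ∈ Finset.Ico (m * (patL p / m)) (patL p), (⇑T)^[enumN p j] '' Epat T C V p)
          ≤ (m : ENNReal) * μ (Epat T C V p) := by
      intro p
      refine le_trans (MeasureTheory.measure_biUnion_finset_le _ _) ?_
      have heach : ∀ j ∈ Finset.Ico (m * (patL p / m)) (patL p),
          μ ((⇑T)^[enumN p j] '' Epat T C V p) = μ (Epat T C V p) := fun j _ =>
        measure_image_iterate hT _ (isClopen_Epat hC hV p).isOpen.measurableSet
      rw [Finset.sum_congr rfl heach, Finset.sum_const, Nat.card_Ico, nsmul_eq_mul]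
      refine mul_le_mul_left ?_ _
      have hdm := Nat.div_add_mod (patL p) m
      have hmod := Nat.mod_lt (patL p) hm0
      exact_mod_cast Nat.cast_le.2 (by omega : patL p - m * (patL p / m) ≤ m)
    calc μ Left ≤ ∑' p : ℕ × Finset ℕ,
          μ (⋃ j ∈ Finset.Ico (m * (patL p / m)) (patL p), (⇑T)^[enumN p j] '' Epat T C V p) :=
        step1
      _ ≤ ∑' p : ℕ × Finset ℕ, (m : ENNReal) * μ (Epat T C V p) :=
        ENNReal.tsum_le_tsum step2
      _ = (m : ENNReal) * ∑' p : ℕ × Finset ℕ, μ (Epat T C V p) := ENNReal.tsum_mul_left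
      _ ≤ (m : ENNReal) * μ C := mul_le_mul_right hEsum _
  set Grouped := ⋃ i : (ℕ × Finset ℕ) × ℕ, ⋃ k : Fin m, piece i k with hGdef
  have hVG : μ (V \ Grouped) ≤ (m : ENNReal) * ε := by
    have hsub : V \ Grouped ⊆
        (V \ ⋃ p : ℕ × Finset ℕ, ⋃ s ∈ patS p, (⇑T)^[s] '' Epat T C V p) ∪ Left := by
      intro y hy
      by_cases hyall : y ∈ ⋃ p : ℕ × Finset ℕ, ⋃ s ∈ patS p, (⇑T)^[s] '' Epat T C V p
      · right
        obtain ⟨p, hp⟩ := Set.mem_iUnion.1 hyall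
        obtain ⟨s, hs, hmem⟩ := Set.mem_iUnion₂.1 hp
        obtain ⟨j, hjl, hje⟩ := enumN_surj hs
        by_cases hjm : j < m * (patL p / m)
        · exfalso
          apply hy.2
          have hq : j / m < patL p / m := by
            rw [Nat.div_lt_iff_lt_mul hm0, mul_comm]
            exact hjm
          have hOK : gOK m (p, j / m) := by
            rw [gOK]
            calc (j / m + 1) * m ≤ (patL p / m) * m := Nat.mul_le_mul_right _ hq
              _ ≤ patL p := Nat.div_mul_le_self _ _
          have hidx : (j / m) * m + (j % m) = j := by
            rw [mul_comm]
            exact Nat.div_add_mod j m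
          refine Set.mem_iUnion.2 ⟨(p, j / m), Set.mem_iUnion.2
            ⟨⟨j % m, Nat.mod_lt _ hm0⟩, ?_⟩⟩
          have := gpiece_eq (T := T) (C := C) (V := V) hOK ⟨j % m, Nat.mod_lt _ hm0⟩
          rw [hpiece]
          simp only
          rw [this]
          simp only [hidx]
          rw [hje]
          exact hmem
        · refine Set.mem_iUnion.2 ⟨p, Set.mem_iUnion₂.2 ⟨j, ?_, ?_⟩⟩
          · exact Finset.mem_Ico.2 ⟨by omega, hjl⟩
          · rw [hje]; exact hmem
      · exact Or.inl ⟨hy.1, hyall⟩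
    calc μ (V \ Grouped)
        ≤ μ ((V \ ⋃ p : ℕ × Finset ℕ, ⋃ s ∈ patS p, (⇑T)^[s] '' Epat T C V p) ∪ Left) :=
        MeasureTheory.measure_mono hsub
      _ ≤ μ (V \ ⋃ p : ℕ × Finset ℕ, ⋃ s ∈ patS p, (⇑T)^[s] '' Epat T C V p) + μ Left :=
        MeasureTheory.measure_union_le _ _
      _ ≤ 0 + (m : ENNReal) * μ C := add_le_add hcover.le hLeft
      _ = (m : ENNReal) * μ C := zero_add _
      _ ≤ (m : ENNReal) * ε := mul_le_mul_right hCle _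
  -- truncation to a finite family
  set e : ℕ → (ℕ × Finset ℕ) × ℕ := fun t => (Denumerable.eqv ((ℕ × Finset ℕ) × ℕ)).symm t
    with hedef
  have he_inj : Function.Injective e := (Denumerable.eqv ((ℕ × Finset ℕ) × ℕ)).symm.injective
  have he_surj : Function.Surjective e := (Denumerable.eqv ((ℕ × Finset ℕ) × ℕ)).symm.surjective
  set Un : ℕ → Set X := fun n => ⋃ t ∈ Finset.range n, ⋃ k : Fin m, piece (e t) k with hUndef
  have hUnion : ⋃ n, Un n = Grouped := by
    apply Set.Subset.antisymm
    · refine Set.iUnion_subset fun n => ?_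
      refine Set.iUnion₂_subset fun t _ => ?_
      refine Set.iUnion_subset fun k => ?_
      exact Set.subset_iUnion₂ (s := fun i k => piece i k) (e t) k
    · refine Set.iUnion₂_subset fun i k => ?_
      obtain ⟨t, rfl⟩ := he_surj i
      intro y hy
      refine Set.mem_iUnion.2 ⟨t + 1, ?_⟩
      refine Set.mem_iUnion₂.2 ⟨t, Finset.mem_range.2 (by omega), Set.mem_iUnion.2 ⟨k, hy⟩⟩
  have hmeasUn : ∀ n, MeasurableSet (V \ Un n) := by
    intro n
    refine (hV.isOpen.measurableSet).diff ?_
    refine MeasurableSet.biUnion (Finset.range n).countable_toSet fun t _ => ?_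
    exact MeasurableSet.iUnion fun k => (hpiece_clopen _ k).isOpen.measurableSet
  have hanti : Antitone fun n => V \ Un n := by
    intro n n' hnn'
    refine Set.diff_subset_diff_right ?_
    refine Set.iUnion₂_subset fun t ht => ?_
    exact Set.subset_iUnion₂ (s := fun t (_ : t ∈ Finset.range n') => ⋃ k : Fin m, piece (e t) k) t
      (Finset.mem_range.2 (lt_of_lt_of_le (Finset.mem_range.1 ht) hnn'))
  have hiInt : ⋂ n, (V \ Un n) = V \ Grouped := by
    rw [← hUnion, Set.diff_iUnion]
  have htend := tendsto_measure_iInter_atTop (μ := μ)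
    (fun n => (hmeasUn n).nullMeasurableSet) hanti ⟨0, measure_ne_top μ _⟩
  rw [hiInt] at htend
  have hmulnetop : (m : ENNReal) * ε ≠ ⊤ :=
    ENNReal.mul_ne_top (ENNReal.natCast_ne_top m) hεtop
  have hlt : μ (V \ Grouped) < (m : ENNReal) * ε + ε :=
    lt_of_le_of_lt hVG (ENNReal.lt_add_right hmulnetop hε0)
  obtain ⟨N, hN⟩ := (htend.eventually_lt_const hlt).exists
  refine ⟨fun t => if t < N then gbase T C V m (e t) else ∅,
    fun t k => if t < N then ga m (e t) k else 0, N, ?_, ?_, ?_, ?_, ?_, ?_⟩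
  · intro t
    dsimp only
    split
    · exact hgbase_clopen _
    · exact isClopen_empty
  · intro t ht
    dsimp only
    rw [if_neg (by omega)]
  · intro t k hk
    dsimp only
    split
    · exact ga_zero _ _ hk
    · rfl
  · intro t k
    dsimp only
    by_cases ht : t < N
    · rw [if_pos ht, if_pos ht]
      exact gpiece_sub_V hCV _ _
    · rw [if_neg ht, if_neg ht]
      simp
  · intro t k t' k' hne'
    dsimp only
    by_cases ht : t < N
    · by_cases ht' : t' < N
      · rw [if_pos ht, if_pos ht, if_pos ht', if_pos ht']
        refine gpiece_disjoint ?_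
        intro hcon
        apply hne'
        have h1 : e t = e t' := (Prod.ext_iff.1 hcon).1
        have h2 : k = k' := (Prod.ext_iff.1 hcon).2
        rw [he_inj h1, h2]
      · rw [if_neg ht', if_neg ht']
        simp
    · rw [if_neg ht, if_neg ht]
      simp
  · have hEq : (⋃ t, ⋃ k : Fin m, (T.toEquiv ^ (if t < N then ga m (e t) k else 0)) ''
        (if t < N then gbase T C V m (e t) else ∅)) = Un N := by
      apply Set.Subset.antisymm
      · refine Set.iUnion_subset fun t => Set.iUnion_subset fun k => ?_
        by_cases ht : t < N
        · rw [if_pos ht, if_pos ht]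
          intro y hy
          exact Set.mem_iUnion₂.2 ⟨t, Finset.mem_range.2 ht, Set.mem_iUnion.2 ⟨k, hy⟩⟩
        · rw [if_neg ht, if_neg ht]
          simp
      · refine Set.iUnion₂_subset fun t ht => Set.iUnion_subset fun k => ?_
        intro y hy
        refine Set.mem_iUnion.2 ⟨t, Set.mem_iUnion.2 ⟨k, ?_⟩⟩
        rw [if_pos (Finset.mem_range.1 ht), if_pos (Finset.mem_range.1 ht)]
        exact hy
    dsimp only
    rw [hEq]
    calc μ (V \ Un N) ≤ (m : ENNReal) * ε + ε := hN.le
      _ = ((m : ENNReal) + 1) * ε := by rw [add_mul, one_mul]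

end Stage

section Tile

variable {μ : MeasureTheory.Measure X} {T : X ≃ₜ X}

/-- Mod-0 exact tiling of a clopen set by groups of `m` pieces along orbits. -/
lemma main_tile [MeasureTheory.IsProbabilityMeasure μ] [MeasureTheory.NullSingletonClass μ] [T1Space X]
    (hXf : Fractured X)
    (hfull : ∀ U : Set X, IsOpen U → U.Nonempty → μ U ≠ 0)
    (hT : MeasureTheory.MeasurePreserving T μ μ)
    (hTerg : ∀ A : Set X, MeasurableSet A → T ⁻¹' A = A → μ A = 0 ∨ μ Aᶜ = 0)
    (m : ℕ) (hm : 1 ≤ m) {V : Set X} (hV : IsClopen V) :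
    ∃ (E : ℕ → Set X) (a : ℕ → Fin m → ℤ),
      (∀ t, IsClopen (E t)) ∧
      (∀ t (k : Fin m), (k : ℕ) = 0 → a t k = 0) ∧
      (∀ t (k : Fin m), (T.toEquiv ^ a t k) '' E t ⊆ V) ∧
      (∀ t (k : Fin m) t' (k' : Fin m), (t, k) ≠ (t', k') →
        Disjoint ((T.toEquiv ^ a t k) '' E t) ((T.toEquiv ^ a t' k') '' E t')) ∧
      μ (V \ ⋃ t, ⋃ k, (T.toEquiv ^ a t k) '' E t) = 0 := by
  classical
  have hstage : ∀ W : Set X, IsClopen W → ∀ t : ℕ,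
      ∃ (E : ℕ → Set X) (a : ℕ → Fin m → ℤ) (N : ℕ),
      (∀ s, IsClopen (E s)) ∧
      (∀ s, N ≤ s → E s = ∅) ∧
      (∀ s (k : Fin m), (k : ℕ) = 0 → a s k = 0) ∧
      (∀ s (k : Fin m), (T.toEquiv ^ a s k) '' E s ⊆ W) ∧
      (∀ s (k : Fin m) s' (k' : Fin m), (s, k) ≠ (s', k') →
        Disjoint ((T.toEquiv ^ a s k) '' E s) ((T.toEquiv ^ a s' k') '' E s')) ∧
      μ (W \ ⋃ s, ⋃ k, (T.toEquiv ^ a s k) '' E s) ≤ ((m : ENNReal) + 1) * (2⁻¹ : ENNReal) ^ t := by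
    intro W hW t
    exact stage hXf hfull hT hTerg m hm hW
      (pow_ne_zero t (ENNReal.inv_ne_zero.2 ENNReal.ofNat_ne_top))
      (ENNReal.pow_ne_top (ENNReal.inv_ne_top.2 two_ne_zero))
  choose Ef af Nf h1 h2 h3 h4 h5 h6 using hstage
  -- the union of all pieces of a given stage
  set UU : (W : Set X) → IsClopen W → ℕ → Set X :=
    fun W hW t => ⋃ s, ⋃ k : Fin m, (T.toEquiv ^ af W hW t s k) '' Ef W hW t s with hUUdef
  have hUUclopen : ∀ (W : Set X) (hW : IsClopen W) (t : ℕ), IsClopen (UU W hW t) := by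
    intro W hW t
    have hfin : UU W hW t
        = ⋃ s ∈ Finset.range (Nf W hW t), ⋃ k : Fin m, (T.toEquiv ^ af W hW t s k) '' Ef W hW t s := by
      apply Set.Subset.antisymm
      · refine Set.iUnion_subset fun s => ?_
        rcases lt_or_ge s (Nf W hW t) with hs | hs
        · exact Set.subset_iUnion₂ (s := fun s (_ : s ∈ Finset.range (Nf W hW t)) =>
            ⋃ k : Fin m, (T.toEquiv ^ af W hW t s k) '' Ef W hW t s) s (Finset.mem_range.2 hs)
        · rw [h2 W hW t s hs]
          simp
      · refine Set.iUnion₂_subset fun s _ => ?_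
        exact Set.subset_iUnion (fun s => ⋃ k : Fin m, (T.toEquiv ^ af W hW t s k) '' Ef W hW t s) s
    rw [hfin]
    exact isClopen_biUnion_finset fun s _ =>
      isClopen_iUnion_of_finite fun k => isClopen_image_zpow T (h1 W hW t s) _
  have hstep : ∀ (P : {S : Set X // IsClopen S}) (t : ℕ), IsClopen (P.1 \ UU P.1 P.2 t) :=
    fun P t => P.2.diff (hUUclopen P.1 P.2 t)
  set WW : ℕ → {S : Set X // IsClopen S} :=
    fun n => Nat.rec ⟨V, hV⟩ (fun t prev => ⟨prev.1 \ UU prev.1 prev.2 t, hstep prev t⟩) n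
    with hWWdef
  have hWWsucc : ∀ t, (WW (t + 1)).1 = (WW t).1 \ UU (WW t).1 (WW t).2 t := fun t => rfl
  have hWWmono : ∀ t, (WW (t + 1)).1 ⊆ (WW t).1 := fun t => by
    rw [hWWsucc]; exact Set.diff_subset
  have hWWle : ∀ {t t' : ℕ}, t ≤ t' → (WW t').1 ⊆ (WW t).1 := by
    intro t t' h
    induction t' with
    | zero => rw [Nat.le_zero.1 h]
    | succ n ih =>
      rcases Nat.lt_or_ge t (n + 1) with h' | h'
      · exact (hWWmono n).trans (ih (by omega))
      · rw [le_antisymm h h']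
  have hWWsubV : ∀ t, (WW t).1 ⊆ V := fun t => hWWle (Nat.zero_le t)
  have hWWμ : ∀ t, μ (WW (t + 1)).1 ≤ ((m : ENNReal) + 1) * (2⁻¹ : ENNReal) ^ t := by
    intro t
    rw [hWWsucc]
    exact h6 (WW t).1 (WW t).2 t
  -- assemble all the stages
  set pr : ℕ → ℕ × ℕ := fun n => (Denumerable.eqv (ℕ × ℕ)).symm n with hprdef
  have hpr_inj : Function.Injective pr := (Denumerable.eqv (ℕ × ℕ)).symm.injective
  have hpr_surj : Function.Surjective pr := (Denumerable.eqv (ℕ × ℕ)).symm.surjective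
  refine ⟨fun n => Ef (WW (pr n).1).1 (WW (pr n).1).2 (pr n).1 (pr n).2,
    fun n k => af (WW (pr n).1).1 (WW (pr n).1).2 (pr n).1 (pr n).2 k, ?_, ?_, ?_, ?_, ?_⟩
  · intro n
    exact h1 _ _ _ _
  · intro n k hk
    exact h3 _ _ _ _ k hk
  · intro n k
    exact (h4 _ _ _ _ k).trans (hWWsubV _)
  · -- disjointness
    intro n k n' k' hne
    dsimp only
    have key : ∀ {a b : ℕ}, a < b → ∀ (sa sb : ℕ) (ka kb : Fin m),
        Disjoint ((T.toEquiv ^ af (WW a).1 (WW a).2 a sa ka) '' Ef (WW a).1 (WW a).2 a sa)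
          ((T.toEquiv ^ af (WW b).1 (WW b).2 b sb kb) '' Ef (WW b).1 (WW b).2 b sb) := by
      intro a b hab sa sb ka kb
      rw [Set.disjoint_left]
      intro y hya hyb
      have hyWb : y ∈ (WW b).1 := h4 (WW b).1 (WW b).2 b sb kb hyb
      have hyWa1 : y ∈ (WW (a + 1)).1 := hWWle (show a + 1 ≤ b by omega) hyWb
      rw [hWWsucc] at hyWa1
      apply hyWa1.2
      exact Set.mem_iUnion.2 ⟨sa, Set.mem_iUnion.2 ⟨ka, hya⟩⟩
    rcases hpn : pr n with ⟨t, s⟩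
    rcases hpn' : pr n' with ⟨t', s'⟩
    try rw [hpn]
    try rw [hpn']
    rcases eq_or_ne t t' with rfl | hne2
    · refine h5 (WW t).1 (WW t).2 t s k s' k' ?_
      intro hcon
      apply hne
      have hss : s = s' := (Prod.ext_iff.1 hcon).1
      have hkk : k = k' := (Prod.ext_iff.1 hcon).2
      have hpp : pr n = pr n' := by rw [hpn, hpn', hss]
      rw [hpr_inj hpp, hkk]
    · rcases hne2.lt_or_gt with h | h
      · exact key h s s' k k'
      · exact (key h s' s k' k).symm
  · -- measure zero of the complement
    have hsub : ∀ t, (V \ ⋃ n, ⋃ k : Fin m,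
        (T.toEquiv ^ af (WW (pr n).1).1 (WW (pr n).1).2 (pr n).1 (pr n).2 k) ''
          Ef (WW (pr n).1).1 (WW (pr n).1).2 (pr n).1 (pr n).2) ⊆ (WW t).1 := by
      intro t
      induction t with
      | zero => exact fun y hy => hy.1
      | succ a ih =>
        intro y hy
        rw [hWWsucc]
        refine ⟨ih hy, ?_⟩
        intro hyUU
        apply hy.2
        obtain ⟨s, hs⟩ := Set.mem_iUnion.1 hyUU
        obtain ⟨k, hk⟩ := Set.mem_iUnion.1 hs
        obtain ⟨n, hn⟩ := hpr_surj (a, s)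
        refine Set.mem_iUnion.2 ⟨n, Set.mem_iUnion.2 ⟨k, ?_⟩⟩
        rw [hn]
        exact hk
    have hbound : ∀ t, μ (V \ ⋃ n, ⋃ k : Fin m,
        (T.toEquiv ^ af (WW (pr n).1).1 (WW (pr n).1).2 (pr n).1 (pr n).2 k) ''
          Ef (WW (pr n).1).1 (WW (pr n).1).2 (pr n).1 (pr n).2)
        ≤ ((m : ENNReal) + 1) * (2⁻¹ : ENNReal) ^ t :=
      fun t => le_trans (MeasureTheory.measure_mono (hsub (t + 1))) (hWWμ t)
    have h2lt : (2⁻¹ : ENNReal) < 1 := by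
      rw [ENNReal.inv_lt_one]
      exact ENNReal.one_lt_two
    have htendpow := ENNReal.tendsto_pow_atTop_nhds_zero_of_lt_one h2lt
    have htend := ENNReal.Tendsto.const_mul (a := (m : ENNReal) + 1) htendpow
      (Or.inr (by simp [ENNReal.add_ne_top]))
    rw [mul_zero] at htend
    exact le_antisymm (ge_of_tendsto' htend hbound) zero_le

end Tile

section Assemble

/-- pairing for Ahat-column indices: `i ↦ (c, p)`. -/
def CP (i : ℕ) : ℕ × ℕ := (Denumerable.eqv (ℕ × ℕ)).symm i

/-- pairing for ref-column indices: `r ↦ (i, k)`. -/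
def IK (r : ℕ) : ℕ × ℕ := (Denumerable.eqv (ℕ × ℕ)).symm r

/-- inverse pairing for ref-column indices. -/
def RIdx (i k : ℕ) : ℕ := Denumerable.eqv (ℕ × ℕ) (i, k)

lemma IK_RIdx (i k : ℕ) : IK (RIdx i k) = (i, k) := Equiv.symm_apply_apply _ _

lemma CP_inj : Function.Injective CP := (Denumerable.eqv (ℕ × ℕ)).symm.injective

lemma CP_surj : Function.Surjective CP := (Denumerable.eqv (ℕ × ℕ)).symm.surjective

lemma IK_inj : Function.Injective IK := (Denumerable.eqv (ℕ × ℕ)).symm.injective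

lemma IK_surj : Function.Surjective IK := (Denumerable.eqv (ℕ × ℕ)).symm.surjective

variable {X : Type*} [TopologicalSpace X] [MeasurableSpace X] [BorelSpace X]
variable {T : X ≃ₜ X} {h m : ℕ}

/-- A group piece. -/
def gpiece (T : X ≃ₜ X) (Eg : ℕ → ℕ → Set X) (ag : ℕ → ℕ → Fin m → ℤ)
    (c p : ℕ) (k : Fin m) : Set X := (T.toEquiv ^ ag c p k) '' Eg c p

/-- Base of a reference column (`∅` for out-of-range `k`). -/
def refBase (T : X ≃ₜ X) (Eg : ℕ → ℕ → Set X) (ag : ℕ → ℕ → Fin m → ℤ)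
    (c p k' : ℕ) : Set X :=
  if hk : k' < m then gpiece T Eg ag c p ⟨k', hk⟩ else ∅

lemma isClopen_gpiece (Eg : ℕ → ℕ → Set X) (ag : ℕ → ℕ → Fin m → ℤ)
    (hEg : ∀ c p, IsClopen (Eg c p)) (c p : ℕ) (k : Fin m) :
    IsClopen (gpiece T Eg ag c p k) := isClopen_image_zpow T (hEg c p) _

lemma isClopen_refBase (Eg : ℕ → ℕ → Set X) (ag : ℕ → ℕ → Fin m → ℤ)
    (hEg : ∀ c p, IsClopen (Eg c p)) (c p k' : ℕ) :
    IsClopen (refBase T Eg ag c p k') := by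
  rw [refBase]
  split
  · exact isClopen_gpiece Eg ag hEg c p _
  · exact isClopen_empty

/-- A slice of the `c`-th column of an array. -/
def sliceCol (A : TArray T h) (c : ℕ) (F : Set X) (hF : IsClopen F)
    (hsub : F ⊆ (A.col c).base) : Column T h where
  base := F
  clopen := hF
  n := (A.col c).n
  n_zero := (A.col c).n_zero
  disj := fun i j hij => ((A.col c).disj hij).mono
    (Set.image_mono hsub) (Set.image_mono hsub)

lemma sliceCol_carrier (A : TArray T h) (c : ℕ) (F : Set X) (hF : IsClopen F)
    (hsub : F ⊆ (A.col c).base) :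
    (sliceCol A c F hF hsub).carrier = ⋃ i, (T.toEquiv ^ (A.col c).n i) '' F := rfl

lemma image_n_sub_carrier (A : TArray T h) (c : ℕ) {F : Set X}
    (hF : F ⊆ (A.col c).base) (i : Fin h) :
    (T.toEquiv ^ (A.col c).n i) '' F ⊆ (A.col c).carrier :=
  subset_trans (Set.image_mono hF)
    (Set.subset_iUnion (fun i => (T.toEquiv ^ (A.col c).n i) '' (A.col c).base) i)

lemma level_disj (A : TArray T h) (c : ℕ) {F F' : Set X}
    (hF : F ⊆ (A.col c).base) (hF' : F' ⊆ (A.col c).base) {i i' : Fin h}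
    (hcase : i = i' → Disjoint F F') :
    Disjoint ((T.toEquiv ^ (A.col c).n i) '' F) ((T.toEquiv ^ (A.col c).n i') '' F') := by
  rcases eq_or_ne i i' with rfl | hne
  · exact (Set.disjoint_image_of_injective (T.toEquiv ^ (A.col c).n i).injective (hcase rfl))
  · exact ((A.col c).disj hne).mono (Set.image_mono hF) (Set.image_mono hF')

lemma level_disj_ne (A : TArray T h) {c c' : ℕ} (hcc' : c ≠ c') {F F' : Set X}
    (hF : F ⊆ (A.col c).base) (hF' : F' ⊆ (A.col c').base) (i i' : Fin h) :
    Disjoint ((T.toEquiv ^ (A.col c).n i) '' F) ((T.toEquiv ^ (A.col c').n i') '' F') :=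
  (A.disj hcc').mono (image_n_sub_carrier A c hF i) (image_n_sub_carrier A c' hF' i')

lemma slice_carrier_disj_same (A : TArray T h) (c : ℕ) {F F' : Set X}
    (hF : F ⊆ (A.col c).base) (hF' : F' ⊆ (A.col c).base) (hd : Disjoint F F') :
    Disjoint (⋃ i, (T.toEquiv ^ (A.col c).n i) '' F)
      (⋃ i, (T.toEquiv ^ (A.col c).n i) '' F') := by
  rw [Set.disjoint_iUnion_left]
  intro i
  rw [Set.disjoint_iUnion_right]
  intro i'
  exact (level_disj A c hF hF' (fun _ => hd)).symm.symm |>.mono subset_rfl subset_rfl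
    |>.symm.symm

lemma slice_carrier_disj_ne (A : TArray T h) {c c' : ℕ} (hcc' : c ≠ c') {F F' : Set X}
    (hF : F ⊆ (A.col c).base) (hF' : F' ⊆ (A.col c').base) :
    Disjoint (⋃ i, (T.toEquiv ^ (A.col c).n i) '' F)
      (⋃ i, (T.toEquiv ^ (A.col c').n i) '' F') := by
  rw [Set.disjoint_iUnion_left]
  intro i
  rw [Set.disjoint_iUnion_right]
  intro i'
  exact (level_disj_ne A hcc' hF hF' i i').symm.symm

end Assemble

section Assemble2

lemma RIdx_IK (r : ℕ) : RIdx (IK r).1 (IK r).2 = r := by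
  rw [RIdx, IK]
  exact (Denumerable.eqv (ℕ × ℕ)).apply_symm_apply r

lemma RIdx_inj {i k i' k' : ℕ} (hne : RIdx i k = RIdx i' k') : i = i' ∧ k = k' := by
  have := (Denumerable.eqv (ℕ × ℕ)).injective hne
  exact ⟨(Prod.ext_iff.1 this).1, (Prod.ext_iff.1 this).2⟩

variable {X : Type*} [TopologicalSpace X] [MeasurableSpace X] [BorelSpace X]
variable {T : X ≃ₜ X} {h m : ℕ}

lemma sliceCol_carrier_sub (A : TArray T h) (c : ℕ) (F : Set X) (hF : IsClopen F)
    (hsub : F ⊆ (A.col c).base) :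
    (sliceCol A c F hF hsub).carrier ⊆ (A.col c).carrier := by
  rw [sliceCol_carrier]
  exact Set.iUnion_subset fun i => image_n_sub_carrier A c hsub i

lemma base_sub_carrier (A : TArray T h) (hpos : 0 < h) (c : ℕ) :
    (A.col c).base ⊆ (A.col c).carrier := by
  intro x hx
  refine Set.mem_iUnion.2 ⟨⟨0, hpos⟩, ?_⟩
  rw [Column.level, (A.col c).n_zero ⟨0, hpos⟩ rfl, zpow_zero]
  simpa using hx

lemma bases_disjoint (A : TArray T h) (hpos : 0 < h) {c c' : ℕ} (hcc' : c ≠ c') :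
    Disjoint (A.col c).base (A.col c').base :=
  (A.disj hcc').mono (base_sub_carrier A hpos c) (base_sub_carrier A hpos c')

lemma refBase_coe (Eg : ℕ → ℕ → Set X) (ag : ℕ → ℕ → Fin m → ℤ) (c p : ℕ) (k : Fin m) :
    refBase T Eg ag c p (k : ℕ) = gpiece T Eg ag c p k := by
  rw [refBase, dif_pos k.isLt]

lemma level_disj' (A : TArray T h) {c c' : ℕ} {F F' : Set X}
    (hF : F ⊆ (A.col c).base) (hF' : F' ⊆ (A.col c').base) {i i' : Fin h}
    (hd : c = c' → i = i' → Disjoint F F') :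
    Disjoint ((T.toEquiv ^ (A.col c).n i) '' F) ((T.toEquiv ^ (A.col c').n i') '' F') := by
  rcases eq_or_ne c c' with rfl | hcc
  · exact level_disj A c hF hF' (hd rfl)
  · exact level_disj_ne A hcc hF hF' i i'

lemma slice_carrier_disj (A : TArray T h) {c c' : ℕ} {F F' : Set X}
    (hF : F ⊆ (A.col c).base) (hF' : F' ⊆ (A.col c').base)
    (hd : c = c' → Disjoint F F') :
    Disjoint (⋃ i, (T.toEquiv ^ (A.col c).n i) '' F)
      (⋃ i, (T.toEquiv ^ (A.col c').n i) '' F') := by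
  rcases eq_or_ne c c' with rfl | hcc
  · exact slice_carrier_disj_same A c hF hF' (hd rfl)
  · exact slice_carrier_disj_ne A hcc hF hF'

lemma refBase_zero (Eg : ℕ → ℕ → Set X) (ag : ℕ → ℕ → Fin m → ℤ) (c p : ℕ)
    (hm0 : 0 < m) (hz : ag c p ⟨0, hm0⟩ = 0) :
    refBase T Eg ag c p 0 = Eg c p := by
  rw [refBase, dif_pos hm0, gpiece, hz, zpow_zero]
  simp

end Assemble2
end DJS

/-- **Lemma 4(b) of del Junco–Şahin.** Any array of height `h` has an extension of height
`h * m` for every `m ≥ 1`. -/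
theorem exists_extension_of_height_mul
    {X : Type*} [TopologicalSpace X] [PolishSpace X] [MeasurableSpace X] [BorelSpace X]
    (hXf : Fractured X)
    (μ : Measure X) [IsProbabilityMeasure μ] [NullSingletonClass μ]
    (hfull : ∀ U : Set X, IsOpen U → U.Nonempty → μ U ≠ 0)
    (T : X ≃ₜ X) (hT : MeasurePreserving T μ μ)
    (hTerg : ∀ A : Set X, MeasurableSet A → T ⁻¹' A = A → μ A = 0 ∨ μ Aᶜ = 0)
    {h : ℕ} (A : TArray T h) (m : ℕ) (hm : 1 ≤ m) :
    ∃ Ahat : TArray T (m * h), Ahat.IsExtensionOf μ A := by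
  classical
  have hT1 : T1Space X := inferInstance
  rcases Nat.eq_zero_or_pos h with rfl | hpos
  · -- degenerate case `h = 0`: all carriers are empty
    have hAcar : A.carrier = ∅ := by
      rw [TArray.carrier]
      simp [Column.carrier]
    have hecar : ∀ C : Column T (m * 0), C.base = ∅ → C.carrier = ∅ := by
      intro C hC
      rw [Column.carrier]
      simp [Column.level, hC]
    refine ⟨⟨fun _ => ⟨∅, isClopen_empty, fun _ => 0, fun _ _ => rfl,
      fun i j hij => by simp [Function.onFun]⟩, ?_⟩, ?_⟩
    · intro i j hij
      simp only [Function.onFun]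
      rw [hecar _ rfl]
      exact disjoint_bot_left
    · refine ⟨⟨⟨fun c => DJS.sliceCol A c ∅ isClopen_empty (Set.empty_subset _), ?_⟩,
        id, fun c => ⟨rfl, Set.empty_subset _⟩, ?_, fun i _ => i, fun i => ?_, ?_⟩⟩
      · intro r r' hrr'
        simp only [Function.onFun, DJS.sliceCol_carrier]
        simp
      · -- ref_fill
        rw [hAcar]
        congr 1
        rw [TArray.carrier]
        simp [DJS.sliceCol_carrier]
      · -- concatenation
        refine ⟨fun _ => 0, fun _ _ => rfl, fun k => by simp [DJS.sliceCol], ?_, fun k j => j.elim0⟩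
        intro k k' hkk'
        simp only [Function.onFun, DJS.sliceCol_carrier]
        simp
      · -- fill
        rw [hAcar]
        congr 1
        rw [TArray.carrier]
        apply Set.eq_empty_iff_forall_notMem.2
        intro y hy
        obtain ⟨i, hi⟩ := Set.mem_iUnion.1 hy
        rw [hecar _ rfl] at hi
        exact hi
  · -- main case `h ≥ 1`
    have hm0 : 0 < m := hm
    have htile : ∀ c : ℕ, ∃ (E : ℕ → Set X) (a : ℕ → Fin m → ℤ),
        (∀ p, IsClopen (E p)) ∧
        (∀ p (k : Fin m), (k : ℕ) = 0 → a p k = 0) ∧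
        (∀ p (k : Fin m), (T.toEquiv ^ a p k) '' E p ⊆ (A.col c).base) ∧
        (∀ p (k : Fin m) p' (k' : Fin m), (p, k) ≠ (p', k') →
          Disjoint ((T.toEquiv ^ a p k) '' E p) ((T.toEquiv ^ a p' k') '' E p')) ∧
        μ ((A.col c).base \ ⋃ p, ⋃ k, (T.toEquiv ^ a p k) '' E p) = 0 :=
      fun c => DJS.main_tile hXf hfull hT hTerg m hm (A.col c).clopen
    choose Eg ag hg1 hg2 hg3 hg4 hg5 using htile
    have hg3' : ∀ c p (k : Fin m), DJS.gpiece T Eg ag c p k ⊆ (A.col c).base := hg3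
    have hpd : ∀ {c p : ℕ} {k : Fin m} {c' p' : ℕ} {k' : Fin m}, (c, p, k) ≠ (c', p', k') →
        Disjoint (DJS.gpiece T Eg ag c p k) (DJS.gpiece T Eg ag c' p' k') := by
      intro c p k c' p' k' hne
      rcases eq_or_ne c c' with rfl | hcc
      · refine hg4 c p k p' k' ?_
        intro hcon
        apply hne
        rw [hcon]
      · exact (DJS.bases_disjoint A hpos hcc).mono (hg3' c p k) (hg3' c' p' k')
    have hrb_sub : ∀ c p k', DJS.refBase T Eg ag c p k' ⊆ (A.col c).base := by
      intro c p k'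
      rw [DJS.refBase]
      split
      · exact hg3' _ _ _
      · exact Set.empty_subset _
    have hrb_disj : ∀ {i k' i' k'' : ℕ}, (i, k') ≠ (i', k'') →
        Disjoint (DJS.refBase T Eg ag (DJS.CP i).1 (DJS.CP i).2 k')
          (DJS.refBase T Eg ag (DJS.CP i').1 (DJS.CP i').2 k'') := by
      intro i k' i' k'' hne
      rw [DJS.refBase, DJS.refBase]
      split_ifs with h1 h2 h2
      · refine hpd ?_
        intro hcon
        obtain ⟨hc, hrest⟩ := Prod.ext_iff.1 hcon
        obtain ⟨hp, hk⟩ := Prod.ext_iff.1 hrest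
        apply hne
        have hii : i = i' := DJS.CP_inj (Prod.ext hc hp)
        have hkk : k' = k'' := congrArg Fin.val hk
        rw [hii, hkk]
      · exact disjoint_bot_right
      · exact disjoint_bot_left
      · exact disjoint_bot_left
    -- the refinement array
    set refCol : ℕ → Column T h := fun r => DJS.sliceCol A (DJS.CP (DJS.IK r).1).1
        (DJS.refBase T Eg ag (DJS.CP (DJS.IK r).1).1 (DJS.CP (DJS.IK r).1).2 (DJS.IK r).2)
        (DJS.isClopen_refBase Eg ag hg1 _ _ _) (hrb_sub _ _ _) with hrefCol
    have hrefdisj : Pairwise (Function.onFun Disjoint fun r => (refCol r).carrier) := by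
      intro r r' hrr'
      simp only [Function.onFun, hrefCol, DJS.sliceCol_carrier]
      refine DJS.slice_carrier_disj A (hrb_sub _ _ _) (hrb_sub _ _ _) ?_
      intro _
      refine hrb_disj ?_
      intro hcon
      apply hrr'
      apply DJS.IK_inj
      rw [← Prod.mk.eta (p := DJS.IK r), ← Prod.mk.eta (p := DJS.IK r'), hcon]
    set refA : TArray T h := ⟨refCol, hrefdisj⟩ with hrefA
    -- field-wise description of the reference columns
    have hcol_base : ∀ i k : ℕ, (refA.col (DJS.RIdx i k)).base
        = DJS.refBase T Eg ag (DJS.CP i).1 (DJS.CP i).2 k := by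
      intro i k
      rw [show (refA.col (DJS.RIdx i k)).base = DJS.refBase T Eg ag
        (DJS.CP (DJS.IK (DJS.RIdx i k)).1).1 (DJS.CP (DJS.IK (DJS.RIdx i k)).1).2
        (DJS.IK (DJS.RIdx i k)).2 from rfl, DJS.IK_RIdx]
    have hcol_n : ∀ i k : ℕ, (refA.col (DJS.RIdx i k)).n = (A.col (DJS.CP i).1).n := by
      intro i k
      rw [show (refA.col (DJS.RIdx i k)).n
        = (A.col (DJS.CP (DJS.IK (DJS.RIdx i k)).1).1).n from rfl, DJS.IK_RIdx]
    have hcol_carrier : ∀ i k : ℕ, (refA.col (DJS.RIdx i k)).carrier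
        = ⋃ j, (T.toEquiv ^ (A.col (DJS.CP i).1).n j) ''
            DJS.refBase T Eg ag (DJS.CP i).1 (DJS.CP i).2 k := by
      intro i k
      rw [show (refA.col (DJS.RIdx i k)).carrier
        = ⋃ j, (T.toEquiv ^ (A.col (DJS.CP (DJS.IK (DJS.RIdx i k)).1).1).n j) ''
            DJS.refBase T Eg ag (DJS.CP (DJS.IK (DJS.RIdx i k)).1).1
              (DJS.CP (DJS.IK (DJS.RIdx i k)).1).2 (DJS.IK (DJS.RIdx i k)).2 from rfl,
        DJS.IK_RIdx]
    -- the carrier of the refinement is almost all of the carrier of `A`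
    have hrefsub : refA.carrier ⊆ A.carrier := by
      refine Set.iUnion_subset fun r => ?_
      refine subset_trans (DJS.sliceCol_carrier_sub A _ _
        (DJS.isClopen_refBase Eg ag hg1 _ _ _) (hrb_sub _ _ _)) ?_
      exact Set.subset_iUnion (fun c => (A.col c).carrier) _
    have hmeasdiff : ∀ c, MeasurableSet
        ((A.col c).base \ ⋃ p, ⋃ k : Fin m, DJS.gpiece T Eg ag c p k) := fun c =>
      ((A.col c).clopen.isOpen.measurableSet).diff (MeasurableSet.iUnion fun p =>
        MeasurableSet.iUnion fun k =>
          (DJS.isClopen_gpiece Eg ag hg1 c p k).isOpen.measurableSet)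
    have hnull : μ (⋃ c : ℕ, ⋃ j : Fin h, (T.toEquiv ^ (A.col c).n j) ''
        ((A.col c).base \ ⋃ p, ⋃ k : Fin m, DJS.gpiece T Eg ag c p k)) = 0 := by
      refine MeasureTheory.measure_iUnion_null fun c =>
        MeasureTheory.measure_iUnion_null fun j => ?_
      rw [DJS.measure_image_zpow T hT _ (hmeasdiff c)]
      exact hg5 c
    have hdiffnull : μ (A.carrier \ refA.carrier) = 0 := by
      refine MeasureTheory.measure_mono_null ?_ hnull
      rintro y ⟨hyA, hynot⟩
      obtain ⟨c, hc⟩ := Set.mem_iUnion.1 hyA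
      obtain ⟨j, hj⟩ := Set.mem_iUnion.1 hc
      obtain ⟨x, hx, rfl⟩ := hj
      refine Set.mem_iUnion.2 ⟨c, Set.mem_iUnion.2 ⟨j, ?_⟩⟩
      refine ⟨x, ⟨hx, ?_⟩, rfl⟩
      intro hxin
      apply hynot
      obtain ⟨p, hp⟩ := Set.mem_iUnion.1 hxin
      obtain ⟨k, hk⟩ := Set.mem_iUnion.1 hp
      obtain ⟨i, hi⟩ := DJS.CP_surj (c, p)
      refine Set.mem_iUnion.2 ⟨DJS.RIdx i (k : ℕ), ?_⟩
      rw [hcol_carrier i (k : ℕ)]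
      refine Set.mem_iUnion.2 ⟨j, ?_⟩
      rw [hi, DJS.refBase_coe]
      exact ⟨x, hk, rfl⟩
    have href_fill : μ refA.carrier = μ A.carrier := by
      refine le_antisymm (MeasureTheory.measure_mono hrefsub) ?_
      calc μ A.carrier ≤ μ (refA.carrier ∪ (A.carrier \ refA.carrier)) := by
            refine MeasureTheory.measure_mono fun y hy => ?_
            by_cases hy2 : y ∈ refA.carrier
            · exact Or.inl hy2
            · exact Or.inr ⟨hy, hy2⟩
        _ ≤ μ refA.carrier + μ (A.carrier \ refA.carrier) :=
            MeasureTheory.measure_union_le _ _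
        _ = μ refA.carrier := by rw [hdiffnull, add_zero]
    -- the extension columns
    have hdivlt : ∀ l : Fin (m * h), (l : ℕ) / h < m :=
      fun l => (Nat.div_lt_iff_lt_mul hpos).2 l.isLt
    set AhatN : ℕ → Fin (m * h) → ℤ := fun i l =>
      ag (DJS.CP i).1 (DJS.CP i).2 ⟨(l : ℕ) / h, hdivlt l⟩ +
        (A.col (DJS.CP i).1).n ⟨(l : ℕ) % h, Nat.mod_lt _ hpos⟩ with hAhatN
    have hAhatN_eval : ∀ (i : ℕ) (l : Fin (m * h)), AhatN i l
        = ag (DJS.CP i).1 (DJS.CP i).2 ⟨(l : ℕ) / h, hdivlt l⟩ +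
          (A.col (DJS.CP i).1).n ⟨(l : ℕ) % h, Nat.mod_lt _ hpos⟩ := fun i l => rfl
    have hrb0 : ∀ i : ℕ, DJS.refBase T Eg ag (DJS.CP i).1 (DJS.CP i).2 0
        = Eg (DJS.CP i).1 (DJS.CP i).2 :=
      fun i => DJS.refBase_zero Eg ag _ _ hm0 (hg2 _ _ ⟨0, hm0⟩ rfl)
    have hlev : ∀ (i : ℕ) (l : Fin (m * h)),
        (T.toEquiv ^ AhatN i l) '' DJS.refBase T Eg ag (DJS.CP i).1 (DJS.CP i).2 0
          = (T.toEquiv ^ (A.col (DJS.CP i).1).n ⟨(l : ℕ) % h, Nat.mod_lt _ hpos⟩) ''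
              DJS.gpiece T Eg ag (DJS.CP i).1 (DJS.CP i).2 ⟨(l : ℕ) / h, hdivlt l⟩ := by
      intro i l
      rw [hrb0 i, hAhatN_eval, add_comm, DJS.image_zpow_add]
      rfl
    have hAhatcol_disj : ∀ i : ℕ, Pairwise (Function.onFun Disjoint fun l : Fin (m * h) =>
        (T.toEquiv ^ AhatN i l) '' DJS.refBase T Eg ag (DJS.CP i).1 (DJS.CP i).2 0) := by
      intro i l l' hll'
      simp only [Function.onFun]
      rw [hlev i l, hlev i l']
      refine DJS.level_disj' A (hg3' _ _ _) (hg3' _ _ _) ?_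
      intro _ hjj
      have hjv : (l : ℕ) % h = (l' : ℕ) % h := congrArg Fin.val hjj
      refine hpd ?_
      intro hcon
      have hdv : (l : ℕ) / h = (l' : ℕ) / h :=
        congrArg Fin.val (Prod.ext_iff.1 (Prod.ext_iff.1 hcon).2).2
      apply hll'
      apply Fin.ext
      have h1 := Nat.div_add_mod (l : ℕ) h
      have h2 := Nat.div_add_mod (l' : ℕ) h
      rw [hdv, hjv] at h1
      omega
    set AhatCol : ℕ → Column T (m * h) := fun i =>
      { base := DJS.refBase T Eg ag (DJS.CP i).1 (DJS.CP i).2 0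
        clopen := DJS.isClopen_refBase Eg ag hg1 _ _ _
        n := AhatN i
        n_zero := by
          intro l hl
          rw [hAhatN_eval]
          rw [hg2 _ _ _ (by simp [hl]), (A.col (DJS.CP i).1).n_zero _ (by simp [hl]), add_zero]
        disj := hAhatcol_disj i } with hAhatCol
    have hAhat_carrier : ∀ i : ℕ, (AhatCol i).carrier
        = ⋃ l : Fin (m * h), (T.toEquiv ^ AhatN i l) ''
            DJS.refBase T Eg ag (DJS.CP i).1 (DJS.CP i).2 0 := fun i => rfl
    have hAhatdisj : Pairwise (Function.onFun Disjoint fun i => (AhatCol i).carrier) := by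
      intro i i' hii'
      simp only [Function.onFun, hAhat_carrier]
      rw [Set.disjoint_iUnion_left]
      intro l
      rw [Set.disjoint_iUnion_right]
      intro l'
      rw [hlev i l, hlev i' l']
      refine DJS.level_disj' A (hg3' _ _ _) (hg3' _ _ _) ?_
      intro _ _
      refine hpd ?_
      intro hcon
      obtain ⟨hc, hrest⟩ := Prod.ext_iff.1 hcon
      obtain ⟨hp, -⟩ := Prod.ext_iff.1 hrest
      exact hii' (DJS.CP_inj (Prod.ext hc hp))
    set Ahat : TArray T (m * h) := ⟨AhatCol, hAhatdisj⟩ with hAhat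
    -- the set-level identity between the carriers of `Ahat` and of the refinement
    have hrb_div : ∀ (i : ℕ) (l : Fin (m * h)),
        DJS.refBase T Eg ag (DJS.CP i).1 (DJS.CP i).2 ((l : ℕ) / h)
          = DJS.gpiece T Eg ag (DJS.CP i).1 (DJS.CP i).2 ⟨(l : ℕ) / h, hdivlt l⟩ := by
      intro i l
      rw [DJS.refBase, dif_pos (hdivlt l)]
    have hAc_eq : Ahat.carrier = refA.carrier := by
      apply Set.Subset.antisymm
      · refine Set.iUnion_subset fun i => ?_
        rw [show (Ahat.col i).carrier = (AhatCol i).carrier from rfl, hAhat_carrier i]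
        refine Set.iUnion_subset fun l => ?_
        intro y hy
        rw [hlev i l] at hy
        refine Set.mem_iUnion.2 ⟨DJS.RIdx i ((l : ℕ) / h), ?_⟩
        rw [hcol_carrier i ((l : ℕ) / h)]
        refine Set.mem_iUnion.2 ⟨⟨(l : ℕ) % h, Nat.mod_lt _ hpos⟩, ?_⟩
        rw [hrb_div i l]
        exact hy
      · refine Set.iUnion_subset fun r => ?_
        intro y hy
        have hr : DJS.RIdx (DJS.IK r).1 (DJS.IK r).2 = r := DJS.RIdx_IK r
        rw [← hr, hcol_carrier (DJS.IK r).1 (DJS.IK r).2] at hy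
        obtain ⟨j, hj⟩ := Set.mem_iUnion.1 hy
        by_cases hk : (DJS.IK r).2 < m
        · set i := (DJS.IK r).1 with hidef
          set k' := (DJS.IK r).2 with hkdef
          set l : Fin (m * h) := ⟨k' * h + (j : ℕ), concat_index_lt (⟨k', hk⟩ : Fin m) j⟩
            with hldef
          have hlv : (l : ℕ) = k' * h + (j : ℕ) := rfl
          have hdiv : (l : ℕ) / h = k' := by
            rw [hlv, mul_comm, Nat.mul_add_div hpos, Nat.div_eq_of_lt j.isLt, add_zero]
          have hmod : (l : ℕ) % h = (j : ℕ) := by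
            rw [hlv, mul_comm, Nat.mul_add_mod]
            exact Nat.mod_eq_of_lt j.isLt
          refine Set.mem_iUnion.2 ⟨i, ?_⟩
          rw [show (Ahat.col i).carrier = (AhatCol i).carrier from rfl, hAhat_carrier i]
          refine Set.mem_iUnion.2 ⟨l, ?_⟩
          rw [hlev i l]
          have e2 : (⟨(l : ℕ) % h, Nat.mod_lt _ hpos⟩ : Fin h) = j := by
            apply Fin.ext
            exact hmod
          have hfin : (⟨(l : ℕ) / h, hdivlt l⟩ : Fin m) = ⟨k', hk⟩ := by
            apply Fin.ext
            exact hdiv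
          have e1 : DJS.gpiece T Eg ag (DJS.CP i).1 (DJS.CP i).2 ⟨(l : ℕ) / h, hdivlt l⟩
              = DJS.refBase T Eg ag (DJS.CP i).1 (DJS.CP i).2 k' := by
            rw [DJS.refBase, dif_pos hk, hfin]
          rw [e2, e1]
          exact hj
        · exfalso
          have : DJS.refBase T Eg ag (DJS.CP (DJS.IK r).1).1 (DJS.CP (DJS.IK r).1).2
              (DJS.IK r).2 = ∅ := by
            rw [DJS.refBase, dif_neg hk]
          rw [this] at hj
          simp at hj
    -- assemble the extension data
    refine ⟨Ahat, ⟨⟨refA, fun r => (DJS.CP (DJS.IK r).1).1,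
      fun r => ⟨rfl, hrb_sub _ _ _⟩, href_fill, fun i k => DJS.RIdx i (k : ℕ), ?_, ?_⟩⟩⟩
    · -- each column of `Ahat` is a concatenation
      intro i
      refine ⟨fun k => ag (DJS.CP i).1 (DJS.CP i).2 k, fun k hk => hg2 _ _ k hk, ?_, ?_, ?_⟩
      · intro k
        rw [hcol_base i (k : ℕ), DJS.refBase_coe,
          show (Ahat.col i).base = DJS.refBase T Eg ag (DJS.CP i).1 (DJS.CP i).2 0 from rfl,
          hrb0 i]
        rfl
      · intro k k' hkk'
        refine refA.disj ?_
        intro hcon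
        exact hkk' (Fin.val_injective (DJS.RIdx_inj hcon).2)
      · intro k j
        rw [show (Ahat.col i).n = AhatN i from rfl, hAhatN_eval, hcol_n i (k : ℕ)]
        have hdiv : ((k : ℕ) * h + (j : ℕ)) / h = (k : ℕ) := by
          rw [mul_comm, Nat.mul_add_div hpos, Nat.div_eq_of_lt j.isLt, add_zero]
        have hmod : ((k : ℕ) * h + (j : ℕ)) % h = (j : ℕ) := by
          rw [mul_comm, Nat.mul_add_mod]
          exact Nat.mod_eq_of_lt j.isLt
        have e1 : (⟨((⟨(k : ℕ) * h + (j : ℕ), concat_index_lt k j⟩ : Fin (m * h)) : ℕ) / h,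
            hdivlt _⟩ : Fin m) = k := by
          apply Fin.ext
          exact hdiv
        have e2 : (⟨((⟨(k : ℕ) * h + (j : ℕ), concat_index_lt k j⟩ : Fin (m * h)) : ℕ) % h,
            Nat.mod_lt _ hpos⟩ : Fin h) = j := by
          apply Fin.ext
          exact hmod
        rw [e1, e2]
    · -- `Ahat` fills out `A`
      rw [show Ahat.carrier = refA.carrier from hAc_eq]
      exact href_fill
end

section
/- Let X be a fractured Polish space with a fixed complete metric, μ a non-atomic Borel probability measure on X with full support, and T an ergodic measure-preserving homeomorphism of (X, μ). Then for every ε > 0, any array 𝒯 in X has a refinement 𝒯' with diam 𝒯' < ε, where the diameter of an array is the supremum of the diameters of its levels. -/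
open MeasureTheory Set TopologicalSpace

variable {X : Type*} [TopologicalSpace X]

private lemma continuous_zpow_toEquiv {X : Type*} [TopologicalSpace X]
    (T : X ≃ₜ X) (n : ℤ) : Continuous (T.toEquiv ^ n) := by
  induction n using Int.induction_on with
  | zero => simpa using continuous_id
  | succ k ih =>
      have : (T.toEquiv ^ ((k : ℤ) + 1)) = (T.toEquiv ^ (k : ℤ)) * T.toEquiv := by
        rw [zpow_add, zpow_one]
      rw [this]
      exact ih.comp T.continuous
  | pred k ih =>
      have : (T.toEquiv ^ (-(k : ℤ) - 1)) = (T.toEquiv ^ (-(k : ℤ))) * T.toEquiv⁻¹ := by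
        rw [sub_eq_add_neg, zpow_add, zpow_neg_one]
      rw [this]
      exact ih.comp T.symm.continuous

/-- Key partition lemma: the base of a column can be partitioned into countably many clopen
pieces, each of whose levels has small diameter. -/
private lemma exists_clopen_partition {X : Type*} [MetricSpace X] [SecondCountableTopology X]
    (hXf : Fractured X) {T : X ≃ₜ X} {h : ℕ} (C : Column T h) {ε : ℝ} (hε : 0 < ε) :
    ∃ F : ℕ → Set X, (∀ m, IsClopen (F m)) ∧ (∀ m, F m ⊆ C.base) ∧
      Pairwise (Function.onFun Disjoint F) ∧ (⋃ m, F m) = C.base ∧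
      ∀ (m : ℕ) (i : Fin h),
        EMetric.diam ((T.toEquiv ^ C.n i) '' F m) ≤ ENNReal.ofReal (ε / 2) := by
  classical
  obtain ⟨B, hBc, hBcl, hBb⟩ := hXf
  set S : Set (Set X) :=
    {E | IsClopen E ∧ E ⊆ C.base ∧
      ∀ i : Fin h, EMetric.diam ((T.toEquiv ^ C.n i) '' E) ≤ ENNReal.ofReal (ε / 2)} with hS
  have hSopen : ∀ E ∈ S, IsOpen E := fun E hE => hE.1.2
  -- diameter of a small ball
  have hball : ∀ x : X, EMetric.diam (Metric.ball x (ε / 8)) ≤ ENNReal.ofReal (ε / 2) := by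
    intro x
    refine EMetric.diam_le fun a ha b hb => ?_
    rw [edist_dist]
    refine ENNReal.ofReal_le_ofReal ?_
    have h1 : dist a x < ε / 8 := Metric.mem_ball.1 ha
    have h2 : dist b x < ε / 8 := Metric.mem_ball.1 hb
    calc dist a b ≤ dist a x + dist x b := dist_triangle a x b
      _ = dist a x + dist b x := by rw [dist_comm x b]
      _ ≤ ε / 2 := by linarith
  -- every point of the base lies in a good set
  have hcover : C.base ⊆ ⋃₀ S := by
    intro x hx
    have hW : ∀ i : Fin h, ∃ W, W ∈ B ∧ (T.toEquiv ^ C.n i) x ∈ W ∧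
        W ⊆ Metric.ball ((T.toEquiv ^ C.n i) x) (ε / 8) := fun i =>
      hBb.exists_subset_of_mem_open (Metric.mem_ball_self (by linarith)) Metric.isOpen_ball
    choose W hWB hWx hWsub using hW
    refine ⟨C.base ∩ ⋂ i, (T.toEquiv ^ C.n i) ⁻¹' W i, ⟨?_, inter_subset_left, ?_⟩, hx, ?_⟩
    · exact C.clopen.inter (isClopen_iInter_of_finite fun i =>
        (hBcl _ (hWB i)).preimage (continuous_zpow_toEquiv T _))
    · intro i
      refine le_trans (EMetric.diam_mono ?_) (le_trans (EMetric.diam_mono (hWsub i)) (hball _))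
      rintro y ⟨z, hz, rfl⟩
      exact (mem_iInter.1 hz.2) i
    · exact mem_iInter.2 fun i => hWx i
  have hSbase : ⋃₀ S ⊆ C.base := sUnion_subset fun E hE => hE.2.1
  obtain ⟨S₀, hS₀c, hS₀sub, hS₀eq⟩ := isOpen_sUnion_countable S hSopen
  have hemptyS : (∅ : Set X) ∈ S := by
    refine ⟨isClopen_empty, empty_subset _, fun i => ?_⟩
    rw [image_empty]; exact EMetric.diam_le fun a ha => by simp at ha
  obtain ⟨f, hf⟩ := (hS₀c.insert ∅).exists_eq_range ⟨∅, mem_insert _ _⟩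
  have hfS : ∀ m, f m ∈ S := by
    intro m
    have : f m ∈ insert (∅ : Set X) S₀ := hf ▸ mem_range_self m
    rcases this with h1 | h1
    · rw [h1]; exact hemptyS
    · exact hS₀sub h1
  have hfU : (⋃ m, f m) = C.base := by
    apply subset_antisymm (iUnion_subset fun m => (hfS m).2.1)
    intro x hx
    have : x ∈ ⋃₀ S₀ := hS₀eq ▸ hcover hx
    have : x ∈ ⋃₀ insert (∅ : Set X) S₀ := by
      rw [sUnion_insert]; exact Or.inr this
    rwa [hf, sUnion_range] at this
  refine ⟨fun m => f m \ ⋃ k ∈ Finset.range m, f k, ?_, ?_, ?_, ?_, ?_⟩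
  · exact fun m => (hfS m).1.diff (isClopen_biUnion_finset fun k _ => (hfS k).1)
  · exact fun m => (diff_subset).trans (hfS m).2.1
  · intro a b hab
    rcases Nat.lt_or_ge a b with hlt | hge
    · exact Set.disjoint_left.2 fun x hxa hxb =>
        hxb.2 (mem_biUnion (Finset.mem_range.2 hlt) hxa.1)
    · have hlt : b < a := lt_of_le_of_ne hge (Ne.symm hab)
      exact Set.disjoint_right.2 fun x hxa hxb =>
        hxb.2 (mem_biUnion (Finset.mem_range.2 hlt) hxa.1)
  · rw [← hfU]
    apply subset_antisymm (iUnion_subset fun m => diff_subset.trans (subset_iUnion f m))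
    intro x hx
    have hex : ∃ m, x ∈ f m := mem_iUnion.1 hx
    refine mem_iUnion.2 ⟨Nat.find hex, Nat.find_spec hex, ?_⟩
    intro hxk
    obtain ⟨k, hkm, hxk⟩ := mem_iUnion₂.1 hxk
    exact Nat.find_min hex (Finset.mem_range.1 hkm) hxk
  · intro m i
    exact le_trans (EMetric.diam_mono (image_mono diff_subset)) ((hfS m).2.2 i)

/-- **Lemma 5 of del Junco–Şahin.** Any array has a refinement of diameter less than `ε`,
the diameter of an array being the supremum of the diameters of its levels. -/
theorem exists_refinement_small_diam
    {X : Type*} [MetricSpace X] [CompleteSpace X] [SecondCountableTopology X]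
    [MeasurableSpace X] [BorelSpace X]
    (hXf : Fractured X)
    (μ : Measure X) [IsProbabilityMeasure μ] [NullSingletonClass μ]
    (hfull : ∀ U : Set X, IsOpen U → U.Nonempty → μ U ≠ 0)
    (T : X ≃ₜ X) (hT : MeasurePreserving T μ μ)
    (hTerg : ∀ A : Set X, MeasurableSet A → T ⁻¹' A = A → μ A = 0 ∨ μ Aᶜ = 0)
    {h : ℕ} (A : TArray T h) (ε : ℝ) (hε : 0 < ε) :
    ∃ A' : TArray T h, A'.IsRefinementOf μ A ∧
      (⨆ (i : ℕ) (j : Fin h), EMetric.diam ((A'.col i).level j)) < ENNReal.ofReal ε := by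
  classical
  -- a bijection ℕ ≃ ℕ × ℕ to index the refined columns
  set e : ℕ ≃ ℕ × ℕ := (Denumerable.eqv (ℕ × ℕ)).symm with he
  choose F hFcl hFsub hFdisj hFU hFdiam using fun j => exists_clopen_partition hXf (A.col j) hε
  -- the refined columns
  set cols : ℕ → Column T h := fun k =>
    { base := F (e k).1 (e k).2
      clopen := hFcl _ _
      n := (A.col (e k).1).n
      n_zero := (A.col (e k).1).n_zero
      disj := fun i i' hii' => ((A.col (e k).1).disj hii').mono
        (image_mono (hFsub _ _)) (image_mono (hFsub _ _)) } with hcols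
  -- levels of refined columns are inside the corresponding levels of A
  have hlev : ∀ (k : ℕ) (i : Fin h), (cols k).level i ⊆ (A.col (e k).1).level i :=
    fun k i => image_mono (hFsub _ _)
  have hcar : ∀ k : ℕ, (cols k).carrier ⊆ (A.col (e k).1).carrier :=
    fun k => iUnion_mono fun i => hlev k i
  have hdisj : Pairwise (Function.onFun Disjoint (fun k => (cols k).carrier)) := by
    intro k k' hkk'
    by_cases hj : (e k).1 = (e k').1
    · -- same original column, different pieces of the base
      have hm : (e k).2 ≠ (e k').2 := by
        intro hm2
        exact hkk' (e.injective (Prod.ext hj hm2))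
      refine Set.disjoint_iUnion_left.2 fun i => Set.disjoint_iUnion_right.2 fun i' => ?_
      by_cases hi : i = i'
      · subst hi
        have hb : Disjoint (F (e k).1 (e k).2) (F (e k').1 (e k').2) := by
          rw [hj]
          exact hFdisj (e k').1 hm
        have : Disjoint ((T.toEquiv ^ (A.col (e k).1).n i) '' F (e k).1 (e k).2)
            ((T.toEquiv ^ (A.col (e k).1).n i) '' F (e k').1 (e k').2) :=
          (Set.disjoint_image_iff (T.toEquiv ^ (A.col (e k).1).n i).injective).2 hb
        show Disjoint ((cols k).level i) ((cols k').level i)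
        simpa only [hcols, Column.level, hj] using this
      · refine (((A.col (e k).1).disj hi).mono ?_ ?_)
        · exact image_mono (hFsub _ _)
        · show (cols k').level i' ⊆ _
          have := hlev k' i'
          rw [← hj] at this
          exact this
    · refine (A.disj hj).mono (hcar k) ?_
      exact hcar k'
  set A' : TArray T h := ⟨cols, hdisj⟩ with hA'
  -- the carrier of A' equals the carrier of A
  have hcarrier : A'.carrier = A.carrier := by
    have h1 : A'.carrier = ⋃ p : ℕ × ℕ, ⋃ i, (T.toEquiv ^ (A.col p.1).n i) '' F p.1 p.2 :=
      e.surjective.iUnion_comp (g := fun p => ⋃ i, (T.toEquiv ^ (A.col p.1).n i) '' F p.1 p.2)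
    rw [h1, Set.iUnion_prod']
    refine iUnion_congr fun j => ?_
    rw [iUnion_comm]
    show (⋃ i, ⋃ m, (T.toEquiv ^ (A.col j).n i) '' F j m) = (A.col j).carrier
    refine iUnion_congr fun i => ?_
    rw [← image_iUnion, hFU j]
    rfl
  refine ⟨A', ⟨fun k => ⟨(e k).1, rfl, hFsub _ _⟩, by rw [hcarrier]⟩, ?_⟩
  refine lt_of_le_of_lt (iSup_le fun k => iSup_le fun i => ?_)
    ((ENNReal.ofReal_lt_ofReal_iff hε).2 (half_lt_self hε))
  exact hFdiam (e k).1 (e k).2 i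
end
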